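/- arXiv:1203.2460 — 7 statements merged into one kernel-verified Lean document; each statement's English description precedes it below -/
import Mathlib

section
/- If D is a pushout A ∪_B C in the category of small categories and X : D → E is a diagram in a cocomplete category E, then the square of colimits colim_B X → colim_A X, colim_B X → colim_C X, colim_A X → colim_D X, colim_C X → colim_D X is a pushout in E. -/
universe w v u

open CategoryTheory Limits

universe v₂ u₂

namespace ColimPushoutAux

/-- The chaotic (indiscrete) category on a type. -/
def Chaotic (S : Type u) : Type u := S

instance (S : Type u) : Category.{u} (Chaotic S) where
  Hom _ _ := PUnit
  id _ := ⟨⟩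
  comp _ _ := ⟨⟩

instance (S : Type u) (x y : Chaotic S) : Subsingleton (x ⟶ y) :=
  ⟨fun _ _ => rfl⟩

lemma chaotic_funext {S : Type u} {K : Type u₂} [Category.{v₂} K]
    (R R' : K ⥤ Chaotic S) (h : ∀ x, R.obj x = R'.obj x) : R = R' :=
  CategoryTheory.Functor.ext h (fun _ _ _ => Subsingleton.elim _ _)

section

variable {A B C D : Cat.{u, u}} (F : B ⟶ A) (G : B ⟶ C) (iA : A ⟶ D) (iC : C ⟶ D)

theorem obj_covered (hpo : IsPushout F G iA iC) (d : D) :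
    (∃ a, iA.toFunctor.obj a = d) ∨ (∃ c, iC.toFunctor.obj c = d) := by
  let K : Cat.{u, u} := Cat.of (Chaotic (ULift.{u} Prop))
  let R : D ⟶ K :=
    { toFunctor := { obj := fun d => ⟨(∃ a, iA.toFunctor.obj a = d) ∨ (∃ c, iC.toFunctor.obj c = d)⟩,
                     map := fun _ => ⟨⟩ } }
  let R' : D ⟶ K := { toFunctor := { obj := fun _ => ⟨True⟩, map := fun _ => ⟨⟩ } }
  have hR : R = R' := by
    apply hpo.hom_ext
    · exact Cat.Hom.ext <| chaotic_funext _ _ (fun a => congrArg ULift.up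
        (propext ⟨fun _ => trivial, fun _ => Or.inl ⟨a, rfl⟩⟩))
    · exact Cat.Hom.ext <| chaotic_funext _ _ (fun c => congrArg ULift.up
        (propext ⟨fun _ => trivial, fun _ => Or.inr ⟨c, rfl⟩⟩))
  have h2 := Functor.congr_obj (congrArg Cat.Hom.toFunctor hR) d
  simp only [R, R'] at h2
  rw [show ((∃ a, iA.toFunctor.obj a = d) ∨ (∃ c, iC.toFunctor.obj c = d)) = True from congrArg ULift.down h2]
  trivial

/-- Morphisms of `D` generated by images of `iA` and `iC`. -/
inductive Gen : ∀ {d d' : D}, (d ⟶ d') → Prop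
  | a {x y : A} (f : x ⟶ y) : Gen (iA.toFunctor.map f)
  | c {x y : C} (f : x ⟶ y) : Gen (iC.toFunctor.map f)
  | id (d : D) : Gen (𝟙 d)
  | comp {d₁ d₂ d₃ : D} {f : d₁ ⟶ d₂} {g : d₂ ⟶ d₃} : Gen f → Gen g → Gen (f ≫ g)

lemma Gen.eqToHom' {d d' : D} (h : d = d') : Gen iA iC (eqToHom h) := by
  subst h; simpa using Gen.id d

/-- The wide subcategory of generated morphisms. -/
structure Wide (_iA : A ⟶ D) (_iC : C ⟶ D) : Type u where
  as : D

instance : Category.{u} (Wide iA iC) where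
  Hom d d' := { f : d.as ⟶ d'.as // Gen iA iC f }
  id d := ⟨𝟙 d.as, Gen.id d.as⟩
  comp f g := ⟨f.1 ≫ g.1, f.2.comp g.2⟩
  id_comp f := Subtype.ext (Category.id_comp f.val)
  comp_id f := Subtype.ext (Category.comp_id f.val)
  assoc f g h := Subtype.ext (Category.assoc f.val g.val h.val)

@[simp] lemma wide_comp_val {d₁ d₂ d₃ : Wide iA iC} (f : d₁ ⟶ d₂) (g : d₂ ⟶ d₃) :
    (f ≫ g).val = f.val ≫ g.val := rfl

lemma wide_eqToHom_val {d d' : Wide iA iC} (h : d = d') :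
    (eqToHom h).val = eqToHom (congrArg Wide.as h) := by
  subst h; rfl

def wideIncl : Wide iA iC ⥤ D where
  obj d := d.as
  map f := f.val

def wideA : A ⥤ Wide iA iC where
  obj a := ⟨iA.toFunctor.obj a⟩
  map f := ⟨iA.toFunctor.map f, Gen.a f⟩
  map_id a := Subtype.ext (iA.toFunctor.map_id a)
  map_comp f g := Subtype.ext (iA.toFunctor.map_comp f g)

def wideC : C ⥤ Wide iA iC where
  obj c := ⟨iC.toFunctor.obj c⟩
  map f := ⟨iC.toFunctor.map f, Gen.c f⟩
  map_id c := Subtype.ext (iC.toFunctor.map_id c)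
  map_comp f g := Subtype.ext (iC.toFunctor.map_comp f g)

theorem gen_all (hpo : IsPushout F G iA iC) {d d' : D} (f : d ⟶ d') : Gen iA iC f := by
  let W : Cat.{u, u} := Cat.of (Wide iA iC)
  have hcompat : (F ≫ ((wideA iA iC).toCatHom : A ⟶ Cat.of (Wide iA iC)) : B ⟶ Cat.of (Wide iA iC)) =
      G ≫ ((wideC iA iC).toCatHom : C ⟶ Cat.of (Wide iA iC)) := by
    refine Cat.Hom.ext <| CategoryTheory.Functor.ext
      (fun b => congrArg Wide.mk (Functor.congr_obj (congrArg Cat.Hom.toFunctor hpo.w) b)) (fun b b' g => ?_)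
    apply Subtype.ext
    show iA.toFunctor.map (F.toFunctor.map g) = (eqToHom _ ≫ (wideC iA iC).map (G.toFunctor.map g) ≫ eqToHom _).val
    erw [wide_comp_val, wide_comp_val, wide_eqToHom_val, wide_eqToHom_val]
    exact Functor.congr_hom (congrArg Cat.Hom.toFunctor hpo.w) g
  let L : D ⟶ Cat.of (Wide iA iC) := hpo.desc _ _ hcompat
  have hL : L ≫ ((wideIncl iA iC).toCatHom : Cat.of (Wide iA iC) ⟶ D) = 𝟙 D := by
    apply hpo.hom_ext
    · erw [← Category.assoc, hpo.inl_desc]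
      rfl
    · erw [← Category.assoc, hpo.inr_desc]
      rfl
  have h2 := Functor.congr_hom (congrArg Cat.Hom.toFunctor hL) f
  rw [show ((L ≫ ((wideIncl iA iC).toCatHom : Cat.of (Wide iA iC) ⟶ D)).toFunctor.map f) = (L.toFunctor.map f).val from rfl] at h2
  rw [show ((𝟙 D : D ⟶ D).toFunctor.map f) = f from rfl] at h2
  rw [show f = eqToHom (Functor.congr_obj (congrArg Cat.Hom.toFunctor hL) d).symm ≫ (L.toFunctor.map f).val ≫
        eqToHom (Functor.congr_obj (congrArg Cat.Hom.toFunctor hL) d') by rw [h2]; erw [Category.assoc, Category.assoc, eqToHom_trans_assoc, eqToHom_refl,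
          Category.id_comp, eqToHom_trans, eqToHom_refl, Category.comp_id]]
  exact (Gen.eqToHom' iA iC _).comp ((L.toFunctor.map f).2.comp (Gen.eqToHom' iA iC _))

theorem desc_unique (hpo : IsPushout F G iA iC) {E₂ : Type u₂} [Category.{v₂} E₂]
    (R R' : D ⥤ E₂) (hA : iA.toFunctor ⋙ R = iA.toFunctor ⋙ R') (hC : iC.toFunctor ⋙ R = iC.toFunctor ⋙ R') : R = R' := by
  have hobj : ∀ d : D, R.obj d = R'.obj d := by
    intro d
    rcases obj_covered F G iA iC hpo d with ⟨a, rfl⟩ | ⟨c, rfl⟩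
    · exact Functor.congr_obj hA a
    · exact Functor.congr_obj hC c
  refine CategoryTheory.Functor.ext hobj (fun d d' f => ?_)
  induction gen_all F G iA iC hpo f with
  | a g => exact Functor.congr_hom hA g
  | c g => exact Functor.congr_hom hC g
  | id d => simp
  | comp hf hg ihf ihg =>
      rw [Functor.map_comp, Functor.map_comp, ihf, ihg]
      simp

end


section
variable {A B C D : Cat.{u, u}} (F : B ⟶ A) (G : B ⟶ C) (iA : A ⟶ D) (iC : C ⟶ D)
theorem obj_descent (hpo : IsPushout F G iA iC) {S : Type u₂}
    (pA : A → S) (pC : C → S) (hco : ∀ b : B, pA (F.toFunctor.obj b) = pC (G.toFunctor.obj b)) :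
    ∃ r : D → S, (∀ a, r (iA.toFunctor.obj a) = pA a) ∧ (∀ c, r (iC.toFunctor.obj c) = pC c) := by
  classical
  let S₀ : Set S := Set.range pA ∪ Set.range pC
  haveI : Small.{u} S₀ := small_union _ _
  let e := equivShrink S₀
  let PA : A ⟶ Cat.of (Chaotic (Shrink.{u} S₀)) :=
    { toFunctor := { obj := fun a => e ⟨pA a, Or.inl ⟨a, rfl⟩⟩,
                     map := fun _ => ⟨⟩ } }
  let PC : C ⟶ Cat.of (Chaotic (Shrink.{u} S₀)) :=
    { toFunctor := { obj := fun c => e ⟨pC c, Or.inr ⟨c, rfl⟩⟩,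
                     map := fun _ => ⟨⟩ } }
  have hcompat : F ≫ PA = G ≫ PC :=
    Cat.Hom.ext <| chaotic_funext _ _ (fun b => congrArg e (Subtype.ext (hco b)))
  let R₀ := hpo.desc PA PC hcompat
  refine ⟨fun d => ((e.symm (R₀.toFunctor.obj d)) : S₀).val, fun a => ?_, fun c => ?_⟩
  · have h1 : R₀.toFunctor.obj (iA.toFunctor.obj a) = PA.toFunctor.obj a := Functor.congr_obj (congrArg Cat.Hom.toFunctor (hpo.inl_desc PA PC hcompat)) a
    show ((e.symm (R₀.toFunctor.obj (iA.toFunctor.obj a))) : S₀).val = pA a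
    rw [h1]
    show ((e.symm (e ⟨pA a, _⟩)) : S₀).val = pA a
    rw [Equiv.symm_apply_apply]
  · have h1 : R₀.toFunctor.obj (iC.toFunctor.obj c) = PC.toFunctor.obj c := Functor.congr_obj (congrArg Cat.Hom.toFunctor (hpo.inr_desc PA PC hcompat)) c
    show ((e.symm (R₀.toFunctor.obj (iC.toFunctor.obj c))) : S₀).val = pC c
    rw [h1]
    show ((e.symm (e ⟨pC c, _⟩)) : S₀).val = pC c
    rw [Equiv.symm_apply_apply]


end

section
variable {A B C D : Cat.{u, u}}

variable {E₂ : Type u₂} [Category.{v₂} E₂]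

/-- Generating arrows between objects of `D`: morphisms of `A` or of `C` with endpoints
mapping to the given objects. -/
def WArr (iA : A ⟶ D) (iC : C ⟶ D) (d d' : D) : Type u :=
  (Σ' (a : A) (a' : A) (_ : a ⟶ a'), iA.toFunctor.obj a = d ∧ iA.toFunctor.obj a' = d') ⊕
  (Σ' (c : C) (c' : C) (_ : c ⟶ c'), iC.toFunctor.obj c = d ∧ iC.toFunctor.obj c' = d')

/-- Vertices: objects of `D`, with the generating quiver structure. -/
structure GV (iA : A ⟶ D) (iC : C ⟶ D) : Type u where
  as : D

instance (iA : A ⟶ D) (iC : C ⟶ D) : Quiver.{u} (GV iA iC) :=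
  ⟨fun d d' => WArr iA iC d.as d'.as⟩

section

variable (iA : A ⟶ D) (iC : C ⟶ D) (P : A ⥤ E₂) (Q : C ⥤ E₂)
  (r : D → E₂) (hrA : ∀ a, r (iA.toFunctor.obj a) = P.obj a) (hrC : ∀ c, r (iC.toFunctor.obj c) = Q.obj c)

/-- Evaluation of a generating arrow in `E₂`. -/
def ev1 {d d' : D} : WArr iA iC d d' → (r d ⟶ r d')
  | .inl ⟨_, _, f, h1, h2⟩ =>
      eqToHom (by rw [← h1, hrA]) ≫ P.map f ≫ eqToHom (by rw [← h2, hrA])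
  | .inr ⟨_, _, f, h1, h2⟩ =>
      eqToHom (by rw [← h1, hrC]) ≫ Q.map f ≫ eqToHom (by rw [← h2, hrC])

/-- Evaluation of a path of generating arrows. -/
def evP {d : GV iA iC} : ∀ {d' : GV iA iC}, Quiver.Path d d' → (r d.as ⟶ r d'.as)
  | _, .nil => 𝟙 _
  | _, .cons p e => evP p ≫ ev1 iA iC P Q r hrA hrC e

lemma evP_comp {d₁ d₂ d₃ : GV iA iC} (p : Quiver.Path d₁ d₂) (q : Quiver.Path d₂ d₃) :
    evP iA iC P Q r hrA hrC (p.comp q) =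
      evP iA iC P Q r hrA hrC p ≫ evP iA iC P Q r hrA hrC q := by
  induction q with
  | nil => simp [evP]
  | cons q e ih => simp [evP, ih]

end

/-- The glued small category: paths modulo equal evaluation. -/
structure EC (iA : A ⟶ D) (iC : C ⟶ D) (P : A ⥤ E₂) (Q : C ⥤ E₂)
    (r : D → E₂) (hrA : ∀ a, r (iA.toFunctor.obj a) = P.obj a)
    (hrC : ∀ c, r (iC.toFunctor.obj c) = Q.obj c) : Type u where
  as : GV iA iC

section

variable {iA : A ⟶ D} {iC : C ⟶ D} {P : A ⥤ E₂} {Q : C ⥤ E₂}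
  {r : D → E₂} {hrA : ∀ a, r (iA.toFunctor.obj a) = P.obj a} {hrC : ∀ c, r (iC.toFunctor.obj c) = Q.obj c}

variable (iA iC P Q r hrA hrC) in
/-- Hom types of the glued category. -/
def EHom (d d' : EC iA iC P Q r hrA hrC) : Type u :=
  Quot (fun p q : Quiver.Path d.as d'.as =>
    evP iA iC P Q r hrA hrC p = evP iA iC P Q r hrA hrC q)

/-- Evaluation on the quotient. -/
def evQ {d d' : EC iA iC P Q r hrA hrC} (x : EHom iA iC P Q r hrA hrC d d') :
    r d.as.as ⟶ r d'.as.as :=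
  Quot.lift (evP iA iC P Q r hrA hrC) (fun _ _ h => h) x

lemma evQ_mk {d d' : EC iA iC P Q r hrA hrC} (p : Quiver.Path d.as d'.as) :
    evQ (Quot.mk _ p : EHom iA iC P Q r hrA hrC d d') = evP iA iC P Q r hrA hrC p := rfl

lemma evQ_inj {d d' : EC iA iC P Q r hrA hrC} {x y : EHom iA iC P Q r hrA hrC d d'}
    (h : evQ x = evQ y) : x = y := by
  revert h
  induction x using Quot.ind
  induction y using Quot.ind
  exact fun h => Quot.sound h

/-- Composition in the glued category. -/
def eComp {d₁ d₂ d₃ : EC iA iC P Q r hrA hrC} (x : EHom iA iC P Q r hrA hrC d₁ d₂)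
    (y : EHom iA iC P Q r hrA hrC d₂ d₃) : EHom iA iC P Q r hrA hrC d₁ d₃ :=
  Quot.map₂ (fun p q => p.comp q)
    (fun p q₁ q₂ h => by
      show evP iA iC P Q r hrA hrC _ = evP iA iC P Q r hrA hrC _
      rw [evP_comp, evP_comp, h])
    (fun p₁ p₂ q h => by
      show evP iA iC P Q r hrA hrC _ = evP iA iC P Q r hrA hrC _
      rw [evP_comp, evP_comp, h]) x y

lemma eComp_mk {d₁ d₂ d₃ : EC iA iC P Q r hrA hrC} (p : Quiver.Path d₁.as d₂.as)
    (q : Quiver.Path d₂.as d₃.as) :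
    eComp (Quot.mk _ p : EHom iA iC P Q r hrA hrC d₁ d₂) (Quot.mk _ q) =
      Quot.mk _ (p.comp q) := rfl

lemma evQ_comp {d₁ d₂ d₃ : EC iA iC P Q r hrA hrC} (x : EHom iA iC P Q r hrA hrC d₁ d₂)
    (y : EHom iA iC P Q r hrA hrC d₂ d₃) : evQ (eComp x y) = evQ x ≫ evQ y := by
  induction x using Quot.ind
  induction y using Quot.ind
  rw [eComp_mk, evQ_mk, evQ_mk, evQ_mk, evP_comp]

instance : Category.{u} (EC iA iC P Q r hrA hrC) where
  Hom d d' := EHom iA iC P Q r hrA hrC d d'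
  id d := Quot.mk _ Quiver.Path.nil
  comp x y := eComp x y
  id_comp x := evQ_inj (by
    show evQ (eComp (Quot.mk _ Quiver.Path.nil) x) = evQ x
    erw [evQ_comp]
    show 𝟙 _ ≫ _ = _
    simp)
  comp_id x := evQ_inj (by
    show evQ (eComp x (Quot.mk _ Quiver.Path.nil)) = evQ x
    erw [evQ_comp]
    show _ ≫ 𝟙 _ = _
    simp)
  assoc x y z := evQ_inj (by
    show evQ (eComp (eComp x y) z) = evQ (eComp x (eComp y z))
    rw [evQ_comp, evQ_comp, evQ_comp, evQ_comp, Category.assoc])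

lemma evQ_id (d : EC iA iC P Q r hrA hrC) : evQ (𝟙 d) = 𝟙 (r d.as.as) := rfl

lemma comp_eq_eComp {d₁ d₂ d₃ : EC iA iC P Q r hrA hrC} (x : d₁ ⟶ d₂) (y : d₂ ⟶ d₃) :
    x ≫ y = eComp x y := rfl

lemma evQ_comp' {d₁ d₂ d₃ : EC iA iC P Q r hrA hrC} (x : d₁ ⟶ d₂) (y : d₂ ⟶ d₃) :
    evQ (x ≫ y) = evQ x ≫ evQ y := evQ_comp x y

lemma evQ_eqToHom {d d' : EC iA iC P Q r hrA hrC} (h : d = d') :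
    evQ (eqToHom h) = eqToHom (congrArg (fun x => r x.as.as) h) := by
  subst h; rfl

variable (iA iC P Q r hrA hrC) in
/-- The evaluation functor to `E₂`. -/
def Jfun : EC iA iC P Q r hrA hrC ⥤ E₂ where
  obj d := r d.as.as
  map x := evQ x
  map_id _ := rfl
  map_comp x y := evQ_comp x y

variable (iA iC P Q r hrA hrC) in
/-- The canonical functor from `A`. -/
def PA : A ⥤ EC iA iC P Q r hrA hrC where
  obj a := ⟨⟨iA.toFunctor.obj a⟩⟩
  map {a a'} f := Quot.mk _ (Quiver.Hom.toPath
    (Sum.inl ⟨a, a', f, rfl, rfl⟩ : WArr iA iC (iA.toFunctor.obj a) (iA.toFunctor.obj a')))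
  map_id a := Quot.sound (by simp [evP, ev1, Quiver.Hom.toPath])
  map_comp {a a' a''} f g := by
    refine Quot.sound ?_
    show evP iA iC P Q r hrA hrC _ = evP iA iC P Q r hrA hrC _
    rw [evP_comp]
    simp [evP, ev1, Quiver.Hom.toPath]

variable (iA iC P Q r hrA hrC) in
/-- The canonical functor from `C`. -/
def QC : C ⥤ EC iA iC P Q r hrA hrC where
  obj c := ⟨⟨iC.toFunctor.obj c⟩⟩
  map {c c'} f := Quot.mk _ (Quiver.Hom.toPath
    (Sum.inr ⟨c, c', f, rfl, rfl⟩ : WArr iA iC (iC.toFunctor.obj c) (iC.toFunctor.obj c')))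
  map_id c := Quot.sound (by simp [evP, ev1, Quiver.Hom.toPath])
  map_comp {c c' c''} f g := by
    refine Quot.sound ?_
    show evP iA iC P Q r hrA hrC _ = evP iA iC P Q r hrA hrC _
    rw [evP_comp]
    simp [evP, ev1, Quiver.Hom.toPath]

variable (iA iC P Q r hrA hrC) in
/-- `PA` as a morphism in `Cat`. -/
def PAcat : A ⟶ Cat.of (EC iA iC P Q r hrA hrC) := (PA iA iC P Q r hrA hrC).toCatHom

variable (iA iC P Q r hrA hrC) in
/-- `QC` as a morphism in `Cat`. -/
def QCcat : C ⟶ Cat.of (EC iA iC P Q r hrA hrC) := (QC iA iC P Q r hrA hrC).toCatHom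

lemma PA_comp_J : PA iA iC P Q r hrA hrC ⋙ Jfun iA iC P Q r hrA hrC = P := by
  refine CategoryTheory.Functor.ext (fun a => hrA a) (fun a a' f => ?_)
  show evQ ((PA iA iC P Q r hrA hrC).map f) = _
  rw [show evQ ((PA iA iC P Q r hrA hrC).map f) = evP iA iC P Q r hrA hrC
      (Quiver.Hom.toPath (Sum.inl ⟨a, a', f, rfl, rfl⟩)) from rfl]
  simp [evP, ev1, Quiver.Hom.toPath]
  rfl

lemma QC_comp_J : QC iA iC P Q r hrA hrC ⋙ Jfun iA iC P Q r hrA hrC = Q := by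
  refine CategoryTheory.Functor.ext (fun c => hrC c) (fun c c' f => ?_)
  show evQ ((QC iA iC P Q r hrA hrC).map f) = _
  rw [show evQ ((QC iA iC P Q r hrA hrC).map f) = evP iA iC P Q r hrA hrC
      (Quiver.Hom.toPath (Sum.inr ⟨c, c', f, rfl, rfl⟩)) from rfl]
  simp [evP, ev1, Quiver.Hom.toPath]
  rfl

end


end

section
variable {A B C D : Cat.{u, u}} (F : B ⟶ A) (G : B ⟶ C) (iA : A ⟶ D) (iC : C ⟶ D)

theorem desc_exists (hpo : IsPushout F G iA iC) {E₂ : Type u₂} [Category.{v₂} E₂]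
    (P : A ⥤ E₂) (Q : C ⥤ E₂) (hPQ : F.toFunctor ⋙ P = G.toFunctor ⋙ Q) :
    ∃ R : D ⥤ E₂, iA.toFunctor ⋙ R = P ∧ iC.toFunctor ⋙ R = Q := by
  obtain ⟨r, hrA, hrC⟩ := obj_descent F G iA iC hpo P.obj Q.obj
    (fun b => Functor.congr_obj hPQ b)
  have hcompat : F ≫ PAcat iA iC P Q r hrA hrC = G ≫ QCcat iA iC P Q r hrA hrC := by
    refine Cat.Hom.ext <| CategoryTheory.Functor.ext
      (fun b => congrArg (fun d => (EC.mk ⟨d⟩ : EC iA iC P Q r hrA hrC))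
        (Functor.congr_obj (congrArg Cat.Hom.toFunctor hpo.w) b)) (fun b b' g => ?_)
    apply evQ_inj
    erw [evQ_comp', evQ_comp', evQ_eqToHom, evQ_eqToHom]
    rw [show evQ ((F ≫ PAcat iA iC P Q r hrA hrC).toFunctor.map g) = evP iA iC P Q r hrA hrC
        (Quiver.Hom.toPath (Sum.inl ⟨F.toFunctor.obj b, F.toFunctor.obj b', F.toFunctor.map g, rfl, rfl⟩)) from rfl]
    rw [show evQ ((G ≫ QCcat iA iC P Q r hrA hrC).toFunctor.map g) = evP iA iC P Q r hrA hrC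
        (Quiver.Hom.toPath (Sum.inr ⟨G.toFunctor.obj b, G.toFunctor.obj b', G.toFunctor.map g, rfl, rfl⟩)) from rfl]
    have hg := Functor.congr_hom hPQ g
    simp only [Functor.comp_map] at hg
    simp [evP, ev1, Quiver.Hom.toPath, hg]
    erw [Category.assoc, Category.assoc, eqToHom_trans_assoc, eqToHom_trans]
    rfl
  refine ⟨(hpo.desc _ _ hcompat).toFunctor ⋙ Jfun iA iC P Q r hrA hrC, ?_, ?_⟩
  · rw [show iA.toFunctor ⋙ ((hpo.desc _ _ hcompat).toFunctor ⋙ Jfun iA iC P Q r hrA hrC) =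
      (iA ≫ hpo.desc (PAcat iA iC P Q r hrA hrC) (QCcat iA iC P Q r hrA hrC) hcompat).toFunctor ⋙
        Jfun iA iC P Q r hrA hrC from rfl, hpo.inl_desc]
    exact PA_comp_J
  · rw [show iC.toFunctor ⋙ ((hpo.desc _ _ hcompat).toFunctor ⋙ Jfun iA iC P Q r hrA hrC) =
      (iC ≫ hpo.desc (PAcat iA iC P Q r hrA hrC) (QCcat iA iC P Q r hrA hrC) hcompat).toFunctor ⋙
        Jfun iA iC P Q r hrA hrC from rfl, hpo.inr_desc]
    exact QC_comp_J

end


section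
variable {E : Type w} [Category.{v} E]

lemma ι_comp_eqToHom [HasColimitsOfSize.{u, u} E] {J : Type u} [Category.{u} J]
    (K K' : J ⥤ E) (hK : K = K') (j : J) :
    colimit.ι K j ≫ eqToHom (congrArg (fun (L : J ⥤ E) => colimit L) hK) =
      eqToHom (Functor.congr_obj hK j) ≫ colimit.ι K' j := by
  subst hK; simp

lemma ι_congr [HasColimitsOfSize.{u, u} E] {J : Type u} [Category.{u} J]
    (K : J ⥤ E) {j j' : J} (h : j = j') :
    colimit.ι K j = eqToHom (congrArg K.obj h) ≫ colimit.ι K j' := by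
  subst h; simp

lemma csa_obj_ext {T : E} {e e' : E} (h : e = e') (f : e ⟶ T) (f' : e' ⟶ T)
    (hf : f = eqToHom h ≫ f') :
    CostructuredArrow.mk (S := 𝟭 E) (Y := e) f = CostructuredArrow.mk (Y := e') f' := by
  subst h
  rw [eqToHom_refl, Category.id_comp] at hf
  subst hf
  rfl

lemma csa_hom_of_eq {T : E} {x y : CostructuredArrow (𝟭 E) T} (hxy : x = y) :
    x.hom = eqToHom (congrArg Comma.left hxy) ≫ y.hom := by
  subst hxy; simp

end

section

variable {A B C D : Cat.{u, u}} (F : B ⟶ A) (G : B ⟶ C) (iA : A ⟶ D) (iC : C ⟶ D)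
  {E : Type w} [Category.{v} E] [HasColimitsOfSize.{u, u} E]

theorem glue (hpo : IsPushout F G iA iC) (X : D ⥤ E)
    (hcomm : (F.toFunctor ⋙ iA.toFunctor ⋙ X : B ⥤ E) = (G.toFunctor ⋙ iC.toFunctor ⋙ X : B ⥤ E)) (T : E)
    (h : colimit (iA.toFunctor ⋙ X) ⟶ T) (k : colimit (iC.toFunctor ⋙ X) ⟶ T)
    (hcond : colimit.pre (iA.toFunctor ⋙ X) F.toFunctor ≫ h =
      (eqToHom (congrArg (fun (K : B ⥤ E) => colimit K) hcomm) ≫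
        colimit.pre (iC.toFunctor ⋙ X) G.toFunctor) ≫ k) :
    ∃ m : colimit X ⟶ T, colimit.pre X iA.toFunctor ≫ m = h ∧ colimit.pre X iC.toFunctor ≫ m = k := by
  -- the two cocones as functors into the costructured arrow category
  let P : A ⥤ CostructuredArrow (𝟭 E) T :=
    { obj := fun a => CostructuredArrow.mk (S := 𝟭 E) (colimit.ι (iA.toFunctor ⋙ X) a ≫ h)
      map := fun {a a'} f => CostructuredArrow.homMk ((iA.toFunctor ⋙ X).map f)
        (by simpa using colimit.w_assoc (iA.toFunctor ⋙ X) f h)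
      map_id := fun a => by apply CostructuredArrow.hom_ext; simp
      map_comp := fun f g => by apply CostructuredArrow.hom_ext; simp }
  let Q : C ⥤ CostructuredArrow (𝟭 E) T :=
    { obj := fun c => CostructuredArrow.mk (S := 𝟭 E) (colimit.ι (iC.toFunctor ⋙ X) c ≫ k)
      map := fun {c c'} f => CostructuredArrow.homMk ((iC.toFunctor ⋙ X).map f)
        (by simpa using colimit.w_assoc (iC.toFunctor ⋙ X) f k)
      map_id := fun c => by apply CostructuredArrow.hom_ext; simp
      map_comp := fun f g => by apply CostructuredArrow.hom_ext; simp }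
  have hPQ : F.toFunctor ⋙ P = G.toFunctor ⋙ Q := by
    refine CategoryTheory.Functor.ext (fun b => ?_) (fun b b' g => ?_)
    · refine csa_obj_ext (congrArg X.obj (Functor.congr_obj (congrArg Cat.Hom.toFunctor hpo.w) b)) _ _ ?_
      have h1 := congrArg (fun (m : colimit (F.toFunctor ⋙ iA.toFunctor ⋙ X) ⟶ T) =>
        colimit.ι (F.toFunctor ⋙ iA.toFunctor ⋙ X) b ≫ m) hcond
      simp only [← Category.assoc] at h1
      rw [colimit.ι_pre] at h1
      rw [ι_comp_eqToHom (F.toFunctor ⋙ iA.toFunctor ⋙ X) (G.toFunctor ⋙ iC.toFunctor ⋙ X) hcomm b] at h1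
      simp only [Category.assoc] at h1
      rw [colimit.ι_pre_assoc] at h1
      exact h1
    · apply CostructuredArrow.hom_ext
      have hg := Functor.congr_hom (congrArg Cat.Hom.toFunctor hpo.w) g
      rw [show (F ≫ iA).toFunctor.map g = iA.toFunctor.map (F.toFunctor.map g) from rfl,
        show (G ≫ iC).toFunctor.map g = iC.toFunctor.map (G.toFunctor.map g) from rfl] at hg
      simp only [Functor.comp_map, Comma.comp_left, Comma.eqToHom_left,
        CostructuredArrow.homMk_left, P, Q]
      rw [hg]
      simp [eqToHom_map]
  obtain ⟨R, hRA, hRC⟩ := desc_exists F G iA iC hpo P Q hPQ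
  have hproj : R ⋙ CostructuredArrow.proj (𝟭 E) T = X := by
    refine desc_unique F G iA iC hpo _ _ ?_ ?_
    · rw [← Functor.assoc, hRA]
      rfl
    · rw [← Functor.assoc, hRC]
      rfl
  let γ : Cocone X :=
    { pt := T
      ι :=
        { app := fun d => eqToHom (Functor.congr_obj hproj d).symm ≫ (R.obj d).hom
          naturality := fun d d' f => by
            have hw := CostructuredArrow.w (R.map f)
            have hl : (R.map f).left = eqToHom (Functor.congr_obj hproj d) ≫ X.map f ≫
                eqToHom (Functor.congr_obj hproj d').symm := Functor.congr_hom hproj f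
            simp only [Functor.const_obj_obj, Functor.const_obj_map, Category.comp_id]
            rw [← hw, show (𝟭 E).map (R.map f).left = (R.map f).left from rfl, hl]
            simp
            erw [Category.assoc, Category.assoc, eqToHom_trans_assoc, eqToHom_refl, Category.id_comp]
            rfl } }
  refine ⟨colimit.desc X γ, ?_, ?_⟩
  · apply colimit.hom_ext
    intro a
    rw [colimit.ι_pre_assoc, colimit.ι_desc]
    have hobj : R.obj (iA.toFunctor.obj a) = P.obj a := Functor.congr_obj hRA a
    show eqToHom _ ≫ (R.obj (iA.toFunctor.obj a)).hom = _
    rw [csa_hom_of_eq hobj]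
    show eqToHom _ ≫ eqToHom _ ≫ colimit.ι (iA.toFunctor ⋙ X) a ≫ h = colimit.ι (iA.toFunctor ⋙ X) a ≫ h
    erw [eqToHom_trans_assoc, eqToHom_refl, Category.id_comp]
  · apply colimit.hom_ext
    intro c
    rw [colimit.ι_pre_assoc, colimit.ι_desc]
    have hobj : R.obj (iC.toFunctor.obj c) = Q.obj c := Functor.congr_obj hRC c
    show eqToHom _ ≫ (R.obj (iC.toFunctor.obj c)).hom = _
    rw [csa_hom_of_eq hobj]
    show eqToHom _ ≫ eqToHom _ ≫ colimit.ι (iC.toFunctor ⋙ X) c ≫ k = colimit.ι (iC.toFunctor ⋙ X) c ≫ k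
    erw [eqToHom_trans_assoc, eqToHom_refl, Category.id_comp]

end

end ColimPushoutAux

open ColimPushoutAux in
/-- If `D` is a pushout `A ∪_B C` in the category `Cat` of small categories and `X : D ⥤ E`
is a diagram in a cocomplete category `E`, then the square of colimits
`colim_B X → colim_A X`, `colim_B X → colim_C X`, `colim_A X → colim_D X`,
`colim_C X → colim_D X` (of the restrictions of `X` along the canonical functors into `D`)
is a pushout in `E`. -/
theorem colimit_isPushout_of_cat_isPushout {A B C D : Cat.{u, u}}
    (F : B ⟶ A) (G : B ⟶ C) (iA : A ⟶ D) (iC : C ⟶ D)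
    (hpo : IsPushout F G iA iC)
    {E : Type w} [Category.{v} E] [HasColimitsOfSize.{u, u} E] (X : D ⥤ E)
    (hcomm : (F.toFunctor ⋙ iA.toFunctor ⋙ X : B ⥤ E) = (G.toFunctor ⋙ iC.toFunctor ⋙ X : B ⥤ E)) :
    IsPushout
      (colimit.pre (iA.toFunctor ⋙ X) F.toFunctor)
      (eqToHom (congrArg (fun (K : B ⥤ E) => colimit K) hcomm) ≫ colimit.pre (iC.toFunctor ⋙ X) G.toFunctor)
      (colimit.pre X iA.toFunctor)
      (colimit.pre X iC.toFunctor) := by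
  have hw : colimit.pre (iA.toFunctor ⋙ X) F.toFunctor ≫ colimit.pre X iA.toFunctor =
      (eqToHom (congrArg (fun (K : B ⥤ E) => colimit K) hcomm) ≫ colimit.pre (iC.toFunctor ⋙ X) G.toFunctor) ≫
        colimit.pre X iC.toFunctor := by
    apply colimit.hom_ext
    intro b
    rw [colimit.ι_pre_assoc, colimit.ι_pre]
    simp only [← Category.assoc]
    rw [ι_comp_eqToHom (F.toFunctor ⋙ iA.toFunctor ⋙ X) (G.toFunctor ⋙ iC.toFunctor ⋙ X) hcomm b]
    simp only [Category.assoc]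
    rw [colimit.ι_pre_assoc, colimit.ι_pre]
    exact ι_congr X (Functor.congr_obj (congrArg Cat.Hom.toFunctor hpo.w) b)
  refine IsPushout.of_isColimit (PushoutCocone.IsColimit.mk hw
    (fun s => (glue F G iA iC hpo X hcomm s.pt s.inl s.inr s.condition).choose)
    (fun s => (glue F G iA iC hpo X hcomm s.pt s.inl s.inr s.condition).choose_spec.1)
    (fun s => (glue F G iA iC hpo X hcomm s.pt s.inl s.inr s.condition).choose_spec.2)
    (fun s m hm1 hm2 => ?_))
  apply colimit.hom_ext
  intro d
  obtain ⟨hg1, hg2⟩ := (glue F G iA iC hpo X hcomm s.pt s.inl s.inr s.condition).choose_spec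
  rcases obj_covered F G iA iC hpo d with ⟨a, rfl⟩ | ⟨c, rfl⟩
  · rw [← colimit.ι_pre X iA.toFunctor a, Category.assoc, Category.assoc, hm1, hg1]
  · rw [← colimit.ι_pre X iC.toFunctor c, Category.assoc, Category.assoc, hm2, hg2]
end

section
/- Let X be a topological space and A₁, A₂ ⊆ X closed subsets such that (X, A₁), (X, A₂), and (X, A₁ ∩ A₂) are NDR pairs (equivalently, the inclusions are closed Hurewicz cofibrations). Then (X, A₁ ∪ A₂) is an NDR pair, i.e. the inclusion A₁ ∪ A₂ → X is a closed Hurewicz cofibration. -/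
open Set Filter Topology unitInterval

/-! Auxiliary clamp to the unit interval. -/

noncomputable def clampI (r : ℝ) : unitInterval := Set.projIcc 0 1 zero_le_one r

lemma clampI_of_mem {r : ℝ} (h : r ∈ Set.Icc (0:ℝ) 1) : clampI r = ⟨r, h⟩ := by
  unfold clampI
  exact Set.projIcc_of_mem _ h

lemma continuous_clampI : Continuous clampI := by
  unfold clampI
  exact continuous_projIcc

lemma clampI_of_nonpos {r : ℝ} (h : r ≤ 0) : clampI r = 0 := by
  unfold clampI
  rw [Set.projIcc_of_le_left _ h]
  rfl

lemma clampI_zero : clampI 0 = 0 := clampI_of_nonpos le_rfl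

lemma clampI_of_one_le {r : ℝ} (h : 1 ≤ r) : clampI r = 1 := by
  unfold clampI
  rw [Set.projIcc_of_right_le _ h]
  rfl

lemma clampI_coe (t : unitInterval) : clampI (t : ℝ) = t := by
  rw [clampI_of_mem t.2]

/-! Tube-lemma based continuity helpers. -/

lemma tube_fix {Y : Type*} [TopologicalSpace Y] (h : C(Y × unitInterval, Y)) {y₀ : Y}
    (hy : ∀ s, h (y₀, s) = y₀) {Z : Type*} [TopologicalSpace Z] (f : Z → Y) (g : Z → unitInterval)
    {z₀ : Z} (hf : ContinuousAt f z₀) (hfz : f z₀ = y₀) :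
    ContinuousAt (fun z => h (f z, g z)) z₀ := by
  have hval : h (f z₀, g z₀) = y₀ := by rw [hfz]; exact hy _
  rw [ContinuousAt, hval, tendsto_nhds]
  intro U hUo hU
  have hsub0 : ({y₀} : Set Y) ×ˢ (Set.univ : Set unitInterval) ⊆ h ⁻¹' U := by
    rintro ⟨a, b⟩ ⟨ha, -⟩
    simp only [Set.mem_singleton_iff] at ha
    subst ha
    simpa [hy] using hU
  obtain ⟨V, W, hVo, _, hV, hW, hsub⟩ :=
    generalized_tube_lemma isCompact_singleton isCompact_univ
      (hUo.preimage h.continuous) hsub0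
  have hmem : f ⁻¹' V ∈ nhds z₀ := hf.preimage_mem_nhds (hVo.mem_nhds (hfz ▸ hV rfl))
  filter_upwards [hmem] with z hz
  exact hsub ⟨hz, hW (Set.mem_univ _)⟩

lemma tube_fix2 {X W : Type*} [TopologicalSpace X] [TopologicalSpace W]
    (G : C((X × unitInterval) × unitInterval, W)) {c : X}
    (hc : ∀ s s' t, G ((c, s), t) = G ((c, s'), t)) (v : X → unitInterval) (t₀ : unitInterval) :
    ContinuousAt (fun p : X × unitInterval => G ((p.1, v p.1), p.2)) (c, t₀) := by
  rw [ContinuousAt, tendsto_nhds]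
  intro U hUo hU
  have hsub0 : (({c} : Set X) ×ˢ (Set.univ : Set unitInterval)) ×ˢ ({t₀} : Set unitInterval) ⊆
      G ⁻¹' U := by
    rintro ⟨⟨a, s⟩, t⟩ ⟨⟨ha, -⟩, ht⟩
    simp only [Set.mem_singleton_iff] at ha ht
    rw [Set.mem_preimage, ha, ht, hc s (v c) t₀]
    simpa using hU
  obtain ⟨O, J, hOo, hJo, hO, hJ, hsub⟩ :=
    generalized_tube_lemma (isCompact_singleton.prod isCompact_univ) isCompact_singleton
      (hUo.preimage G.continuous) hsub0
  obtain ⟨V, W', hVo, _, hV, hW', hsub2⟩ :=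
    generalized_tube_lemma isCompact_singleton isCompact_univ hOo
      (by rintro ⟨a, s⟩ ⟨ha, -⟩; exact hO ⟨ha, Set.mem_univ _⟩)
  have hmem : V ×ˢ J ∈ nhds (c, t₀) :=
    (hVo.prod hJo).mem_nhds ⟨hV rfl, hJ rfl⟩
  filter_upwards [hmem] with p hp
  exact hsub ⟨hsub2 ⟨hp.1, hW' (Set.mem_univ _)⟩, hp.2⟩

/-- `(X, A)` is an NDR pair: `A` is closed in `X` and there are a map `u : X → [0,1]`
with `A = u⁻¹(0)` and a homotopy `h : X × [0,1] → X` with `h₀ = id`, `hₜ|_A = id` for all `t`,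
and `h₁(x) ∈ A` whenever `u(x) < 1`. -/
def IsNDRPair {X : Type*} [TopologicalSpace X] (A : Set X) : Prop :=
  IsClosed A ∧
  ∃ (u : C(X, ℝ)) (h : C(X × unitInterval, X)),
    (∀ x, u x ∈ Set.Icc (0 : ℝ) 1) ∧
    (A = u ⁻¹' {0}) ∧
    (∀ x, h (x, 0) = x) ∧
    (∀ a ∈ A, ∀ t, h (a, t) = a) ∧
    (∀ x, u x < 1 → h (x, 1) ∈ A)

section Strom

variable {X : Type*} [TopologicalSpace X]

/-- A Strøm retraction for the pair `(X, A)`: a retraction of `X × I` onto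
`X × {0} ∪ A × I`. -/
def IsStromRet (A : Set X) (r : C(X × unitInterval, X × unitInterval)) : Prop :=
  (∀ x, r (x, 0) = (x, 0)) ∧ (∀ a ∈ A, ∀ t, r (a, t) = (a, t)) ∧
  (∀ p, (r p).2 = 0 ∨ (r p).1 ∈ A)

/-- From NDR data to a Strøm retraction. -/
lemma ndr_to_ret (A : Set X) (u : C(X, ℝ)) (h : C(X × unitInterval, X))
    (hu01 : ∀ x, u x ∈ Set.Icc (0 : ℝ) 1)
    (hA : A = u ⁻¹' {0})
    (h0 : ∀ x, h (x, 0) = x)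
    (hfix : ∀ a ∈ A, ∀ t, h (a, t) = a)
    (h1 : ∀ x, u x < 1 → h (x, 1) ∈ A) :
    ∃ r : C(X × unitInterval, X × unitInterval), IsStromRet A r := by
  have huA : ∀ a ∈ A, u a = 0 := by intro a ha; rw [hA] at ha; exact ha
  have hAu : ∀ x, u x = 0 → x ∈ A := by intro x hx; rw [hA]; exact hx
  set τ : X × unitInterval → unitInterval :=
    fun p => clampI (min 1 ((p.2 : ℝ) / u p.1)) with hτ
  have hcont1 : Continuous fun p : X × unitInterval => h (p.1, τ p) := by
    rw [continuous_iff_continuousAt]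
    intro p₀
    by_cases hu0 : u p₀.1 = 0
    · exact tube_fix h (fun s => hfix _ (hAu _ hu0) s) Prod.fst τ
        continuousAt_fst rfl
    · have hτc : ContinuousAt τ p₀ := by
        apply continuous_clampI.continuousAt.comp
        exact (continuousAt_const.min
          (((continuous_subtype_val.comp continuous_snd).continuousAt).div
            ((u.continuous.comp continuous_fst).continuousAt) hu0))
      exact h.continuous.continuousAt.comp (continuousAt_fst.prodMk hτc)
  refine ⟨⟨fun p => (h (p.1, τ p), clampI ((p.2 : ℝ) - u p.1)), ?_⟩, ?_, ?_, ?_⟩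
  · exact hcont1.prodMk (continuous_clampI.comp
      ((continuous_subtype_val.comp continuous_snd).sub (u.continuous.comp continuous_fst)))
  · intro x
    have : τ (x, (0 : unitInterval)) = 0 := by
      simp [hτ, clampI_zero]
    simp only [ContinuousMap.coe_mk, this, h0]
    refine Prod.ext rfl ?_
    exact clampI_of_nonpos (by simpa using (hu01 x).1)
  · intro a ha t
    simp only [ContinuousMap.coe_mk, hfix a ha, huA a ha]
    refine Prod.ext rfl ?_
    simpa using clampI_coe t
  · rintro ⟨x, t⟩
    by_cases hle : (t : ℝ) ≤ u x
    · exact Or.inl (clampI_of_nonpos (by linarith))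
    · right
      push_neg at hle
      by_cases hu0 : u x = 0
      · have hxA : x ∈ A := hAu _ hu0
        show h (x, τ (x, t)) ∈ A
        rw [hfix x hxA]
        exact hxA
      · have hupos : 0 < u x := lt_of_le_of_ne (hu01 x).1 (Ne.symm hu0)
        have hdiv : (1 : ℝ) ≤ (t : ℝ) / u x := (one_le_div hupos).mpr hle.le
        have hτ1 : τ (x, t) = 1 := by
          simp only [hτ]
          rw [min_eq_left hdiv]
          exact clampI_of_one_le le_rfl
        show h (x, τ (x, t)) ∈ A
        rw [hτ1]
        exact h1 x (lt_of_lt_of_le hle t.2.2)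

/-- From a Strøm retraction to NDR data. -/
lemma ret_to_ndr {A : Set X} (hAc : IsClosed A) (r : C(X × unitInterval, X × unitInterval))
    (hr : IsStromRet A r) : IsNDRPair A := by
  obtain ⟨hr0, hrA, hrim⟩ := hr
  set G : C(X × unitInterval, ℝ) :=
    ⟨fun p => max 0 ((p.2 : ℝ) - ((r p).2 : ℝ)), by
      apply continuous_const.max
      exact (continuous_subtype_val.comp continuous_snd).sub
        (continuous_subtype_val.comp (continuous_snd.comp r.continuous))⟩ with hG
  set g : C(X, C(unitInterval, ℝ)) := ContinuousMap.curry G with hg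
  have hGnonneg : ∀ p, 0 ≤ G p := fun p => le_max_left _ _
  have hGle : ∀ p, G p ≤ 1 := by
    intro p
    apply max_le zero_le_one
    have h1 := ((r p).2).2.1
    have h2 := (p.2).2.2
    linarith
  refine ⟨hAc, ⟨fun x => ‖g x‖, continuous_norm.comp g.continuous⟩,
    ⟨fun p => (r p).1, continuous_fst.comp r.continuous⟩, ?_, ?_, ?_, ?_, ?_⟩
  · intro x
    constructor
    · show (0:ℝ) ≤ ‖g x‖
      exact norm_nonneg _
    · show ‖g x‖ ≤ 1
      refine (ContinuousMap.norm_le (g x) zero_le_one).mpr fun t => ?_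
      have hgt : (g x) t = G (x, t) := by simp [hg]
      rw [Real.norm_eq_abs, hgt, abs_of_nonneg (hGnonneg (x, t))]
      exact hGle (x, t)
  · ext x
    simp only [Set.mem_preimage, Set.mem_singleton_iff, ContinuousMap.coe_mk]
    constructor
    · intro hx
      have : g x = 0 := by
        ext t
        simp only [hg, ContinuousMap.curry_apply, ContinuousMap.zero_apply]
        show G (x, t) = 0
        have := hrA x hx t
        simp [hG, this]
      rw [this, norm_zero]
    · intro hx
      have hzero : ∀ t : unitInterval, (t : ℝ) ≤ ((r (x, t)).2 : ℝ) := by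
        intro t
        have h1 : |G (x, t)| ≤ ‖g x‖ := by
          have := (g x).norm_coe_le_norm t
          simpa [hg] using this
        rw [hx] at h1
        have h2 : G (x, t) = 0 := le_antisymm (by rw [abs_of_nonneg (hGnonneg _)] at h1; exact h1)
          (hGnonneg _)
        simp only [hG, ContinuousMap.coe_mk] at h2
        have h3 := le_sup_right.trans_eq h2
        linarith
      set seq : ℕ → unitInterval := fun n => ⟨1 / (n + 1), by
        constructor
        · positivity
        · rw [div_le_one (by positivity)]
          have : (0:ℝ) ≤ n := Nat.cast_nonneg n
          linarith⟩ with hseq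
      have hseqpos : ∀ n, (0 : ℝ) < (seq n : ℝ) := by
        intro n; simp only [hseq]; positivity
      have hmem : ∀ n, (r (x, seq n)).1 ∈ A := by
        intro n
        rcases hrim (x, seq n) with h | h
        · exfalso
          have := hzero (seq n)
          rw [h] at this
          simp only [Set.Icc.coe_zero] at this
          exact absurd (lt_of_lt_of_le (hseqpos n) this) (lt_irrefl 0)
        · exact h
      have hseqtend : Tendsto seq atTop (𝓝 0) := by
        rw [show (0 : unitInterval) = ⟨0, by norm_num⟩ from rfl]
        rw [tendsto_subtype_rng]
        simpa [hseq] using tendsto_one_div_add_atTop_nhds_zero_nat (𝕜 := ℝ)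
      have htend : Tendsto (fun n => (r (x, seq n)).1) atTop (𝓝 x) := by
        have hc : Continuous fun t : unitInterval => (r (x, t)).1 :=
          continuous_fst.comp (r.continuous.comp (Continuous.prodMk_right x))
        have := (hc.continuousAt (x := (0 : unitInterval))).tendsto.comp hseqtend
        simpa [hr0 x, Function.comp_def] using this
      exact hAc.mem_of_tendsto htend (Filter.Eventually.of_forall hmem)
  · intro x; simp [hr0 x]
  · intro a ha t; simp [hrA a ha t]
  · intro x hx
    rcases hrim (x, 1) with h | h
    · exfalso
      have h1 : |G (x, 1)| ≤ ‖g x‖ := by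
        have := (g x).norm_coe_le_norm 1
        simpa [hg] using this
      have h1' : G (x, 1) ≤ ‖g x‖ := (le_abs_self _).trans h1
      have h2 : G (x, 1) < 1 := lt_of_le_of_lt h1' hx
      simp only [hG, ContinuousMap.coe_mk, h, Set.Icc.coe_one, Set.Icc.coe_zero] at h2
      simp at h2
    · exact h

/-- Composition of Strøm retractions. -/
lemma ret_comp {B A : Set X} (hBc : IsClosed B) (hAB : A ⊆ B)
    (rB : C(X × unitInterval, X × unitInterval)) (hrB : IsStromRet B rB)
    (rA : C(↥B × unitInterval, ↥B × unitInterval)) (hrA : IsStromRet (Subtype.val ⁻¹' A) rA) :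
    ∃ r : C(X × unitInterval, X × unitInterval), IsStromRet A r := by
  classical
  obtain ⟨hB0, hBfix, hBim⟩ := hrB
  obtain ⟨hA0, hAfix, hAim⟩ := hrA
  set S : Set (X × unitInterval) := {q | q.1 ∈ B} with hS
  have hSc : IsClosed S := hBc.preimage continuous_fst
  set rA' : X × unitInterval → X × unitInterval := fun q =>
    if hq : q.1 ∈ B then (((rA (⟨q.1, hq⟩, q.2)).1 : X), (rA (⟨q.1, hq⟩, q.2)).2) else q
    with hrA'
  have hrA'S : ContinuousOn rA' S := by
    rw [continuousOn_iff_continuous_restrict]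
    have : Continuous fun q : ↥S => (((rA (⟨q.1.1, q.2⟩, q.1.2)).1 : X),
        (rA (⟨q.1.1, q.2⟩, q.1.2)).2) := by
      have he : Continuous fun q : ↥S => ((⟨q.1.1, q.2⟩ : ↥B), q.1.2) := by
        refine Continuous.prodMk ?_ (continuous_snd.comp continuous_subtype_val)
        exact Continuous.subtype_mk (continuous_fst.comp continuous_subtype_val) _
      have := rA.continuous.comp he
      exact (continuous_subtype_val.comp (continuous_fst.comp this)).prodMk
        (continuous_snd.comp this)
    refine this.congr fun q => ?_
    have hq : (q : X × unitInterval).1 ∈ B := q.2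
    simp only [Set.restrict_apply, hrA']
    rw [dif_pos hq]
  set Q : Set (X × unitInterval) := {p | (rB p).1 ∈ B} with hQ
  have hQc : IsClosed Q := hBc.preimage (continuous_fst.comp rB.continuous)
  have hPQ : ∀ p, p ∉ Q → (rB p).2 = 0 := by
    intro p hp
    rcases hBim p with h | h
    · exact h
    · exact absurd h hp
  set f : X × unitInterval → X × unitInterval := fun p => rA' (rB p) with hf
  set g : X × unitInterval → X × unitInterval := fun p => ((rB p).1, 0) with hg
  have hfP : ∀ p, (rB p).1 ∈ B → (rB p).2 = 0 → f p = ((rB p).1, 0) := by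
    intro p hp h0
    have hrBp : rB p = ((rB p).1, (0 : unitInterval)) := by
      rw [← h0]
    simp only [hf, hrA']
    rw [hrBp]
    simp only [dif_pos hp]
    rw [hA0 ⟨(rB p).1, hp⟩]
  have hcont : Continuous (Q.piecewise f g) := by
    refine continuous_piecewise (fun a ha => ?_) ?_ ?_
    · have haQ : a ∈ Q := by
        have := frontier_subset_closure (s := Q) ha
        rwa [hQc.closure_eq] at this
      have haP : (rB a).2 = 0 := by
        have h1 : a ∈ closure Qᶜ := by
          rw [frontier_eq_closure_inter_closure] at ha; exact ha.2
        have h2 : closure Qᶜ ⊆ {p | (rB p).2 = 0} := by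
          apply closure_minimal
          · intro p hp; exact hPQ p hp
          · exact (isClosed_singleton.preimage
              (continuous_snd.comp rB.continuous) : IsClosed {p | (rB p).2 = 0})
        exact h2 h1
      rw [hfP a haQ haP]
    · rw [hQc.closure_eq]
      exact hrA'S.comp rB.continuous.continuousOn (fun p hp => hp)
    · exact (continuous_fst.comp rB.continuous).prodMk continuous_const |>.continuousOn
  refine ⟨⟨Q.piecewise f g, hcont⟩, ?_, ?_, ?_⟩
  · intro x
    have hrB0 := hB0 x
    by_cases hx : (x, (0:unitInterval)) ∈ Q
    · have hx' : x ∈ B := by simpa [hQ, hrB0] using hx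
      simp only [ContinuousMap.coe_mk, Set.piecewise_eq_of_mem _ _ _ hx]
      have := hfP (x, (0:unitInterval)) (by rw [hrB0]; exact hx') (by rw [hrB0])
      rw [this, hrB0]
    · simp only [ContinuousMap.coe_mk, Set.piecewise_eq_of_notMem _ _ _ hx, hg, hrB0]
  · intro a ha t
    have hrBfix := hBfix a (hAB ha) t
    have hq : (a, t) ∈ Q := by simp [hQ, hrBfix, hAB ha]
    simp only [ContinuousMap.coe_mk, Set.piecewise_eq_of_mem _ _ _ hq]
    have hmem : ((rB (a, t)).1 : X) ∈ B := by rw [hrBfix]; exact hAB ha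
    simp only [hf, hrA', dif_pos hmem]
    have h1 : (⟨(rB (a, t)).1, hmem⟩ : ↥B) = ⟨a, hAB ha⟩ := by
      apply Subtype.ext; simp [hrBfix]
    have h2 : (rB (a, t)).2 = t := by rw [hrBfix]
    rw [h1, h2, hAfix ⟨a, hAB ha⟩ (by simpa using ha) t]
  · intro p
    by_cases hp : p ∈ Q
    · have hpm : (rB p).1 ∈ B := hp
      have hred : (Q.piecewise f g) p = (((rA (⟨(rB p).1, hpm⟩, (rB p).2)).1 : X),
          (rA (⟨(rB p).1, hpm⟩, (rB p).2)).2) := by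
        rw [Set.piecewise_eq_of_mem _ _ _ hp]
        simp only [hf, hrA']
        rw [dif_pos hpm]
      rw [ContinuousMap.coe_mk, hred]
      rcases hAim (⟨(rB p).1, hpm⟩, (rB p).2) with h | h
      · exact Or.inl h
      · exact Or.inr h
    · have hred : (Q.piecewise f g) p = ((rB p).1, 0) := Set.piecewise_eq_of_notMem _ _ _ hp
      rw [ContinuousMap.coe_mk, hred]
      exact Or.inl rfl

end Strom

/-! The interval datum `(I, {0,1})`. -/

noncomputable def vAux : unitInterval → ℝ := fun s => min 1 (3 * min (s : ℝ) (1 - (s : ℝ)))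

lemma vAux_continuous : Continuous vAux := by
  apply continuous_const.min
  exact continuous_const.mul (continuous_subtype_val.min
    (continuous_const.sub continuous_subtype_val))

lemma vAux_mem (s : unitInterval) : vAux s ∈ Set.Icc (0:ℝ) 1 := by
  unfold vAux
  constructor
  · apply le_min zero_le_one
    have h1 := s.2.1; have h2 := s.2.2
    rcases min_cases ((s:ℝ)) (1 - (s:ℝ)) with ⟨h, -⟩ | ⟨h, -⟩ <;> rw [h] <;> linarith
  · exact min_le_left _ _

lemma vAux_eq_zero_iff (s : unitInterval) : vAux s = 0 ↔ (s = 0 ∨ s = 1) := by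
  unfold vAux
  constructor
  · intro hs
    rcases min_cases (1:ℝ) (3 * min (s:ℝ) (1 - s)) with ⟨h, -⟩ | ⟨h, -⟩
    · rw [h] at hs; norm_num at hs
    · rw [h] at hs
      have hmin : min (s:ℝ) (1 - s) = 0 := by linarith
      rcases min_cases ((s:ℝ)) (1 - (s:ℝ)) with ⟨h2, -⟩ | ⟨h2, -⟩
      · left; ext; rw [h2] at hmin; exact hmin
      · right; ext; rw [h2] at hmin; simp only [Set.Icc.coe_one]; linarith
  · rintro (rfl | rfl) <;> simp

noncomputable def kAux : C(unitInterval × unitInterval, unitInterval) :=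
  ⟨fun q => clampI ((q.1 : ℝ) + (q.2 : ℝ) * (2 * q.1 - 1)), by
    apply continuous_clampI.comp
    exact (continuous_subtype_val.comp continuous_fst).add
      (((continuous_subtype_val.comp continuous_snd)).mul
        ((continuous_const.mul (continuous_subtype_val.comp continuous_fst)).sub
          continuous_const))⟩

lemma kAux_zero (s : unitInterval) : kAux (s, 0) = s := by
  simp only [kAux, ContinuousMap.coe_mk, Set.Icc.coe_zero, zero_mul, add_zero, clampI_coe]

lemma kAux_fix0 (τ : unitInterval) : kAux (0, τ) = 0 := by
  simp only [kAux, ContinuousMap.coe_mk, Set.Icc.coe_zero]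
  apply clampI_of_nonpos
  have := τ.2.1
  nlinarith

lemma kAux_fix1 (τ : unitInterval) : kAux (1, τ) = 1 := by
  simp only [kAux, ContinuousMap.coe_mk, Set.Icc.coe_one]
  apply clampI_of_one_le
  have := τ.2.1
  nlinarith

section Prod

variable {X : Type*} [TopologicalSpace X]

set_option maxHeartbeats 1000000 in
/-- Strøm retraction for `(X × I, X × ∂I ∪ C × I)` from NDR data for `(X, C)`. -/
lemma ret_prod {C : Set X} (u : C(X, ℝ)) (j : C(X × unitInterval, X))
    (hu01 : ∀ x, u x ∈ Set.Icc (0 : ℝ) 1)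
    (hC : C = u ⁻¹' {0})
    (hj0 : ∀ x, j (x, 0) = x)
    (hjfix : ∀ a ∈ C, ∀ t, j (a, t) = a)
    (hj1 : ∀ x, u x < 1 → j (x, 1) ∈ C) :
    ∃ r : C((X × unitInterval) × unitInterval, (X × unitInterval) × unitInterval),
      IsStromRet {p : X × unitInterval | p.2 = 0 ∨ p.2 = 1 ∨ p.1 ∈ C} r := by
  have huC : ∀ a ∈ C, u a = 0 := by intro a ha; rw [hC] at ha; exact ha
  have hCu : ∀ x, u x = 0 → x ∈ C := by intro x hx; rw [hC]; exact hx
  have hH1cont : Continuous fun p : (X × unitInterval) × unitInterval =>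
      j (p.1.1, clampI ((p.2 : ℝ) * min 1 (vAux p.1.2 / u p.1.1))) := by
    rw [continuous_iff_continuousAt]
    intro p₀
    by_cases hu0 : u p₀.1.1 = 0
    · exact tube_fix j (fun s => hjfix _ (hCu _ hu0) s)
        (fun p : (X × unitInterval) × unitInterval => p.1.1)
        (fun p : (X × unitInterval) × unitInterval =>
          clampI ((p.2 : ℝ) * min 1 (vAux p.1.2 / u p.1.1)))
        (Continuous.continuousAt
          (continuous_fst.comp continuous_fst :
            Continuous fun p : (X × unitInterval) × unitInterval => p.1.1)) rfl
    · refine j.continuous.continuousAt.comp (ContinuousAt.prodMk ?_ ?_)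
      · exact (continuous_fst.comp continuous_fst).continuousAt
      · have hcv : Continuous fun p : (X × unitInterval) × unitInterval => (p.2 : ℝ) :=
          continuous_subtype_val.comp continuous_snd
        have hvA : Continuous fun p : (X × unitInterval) × unitInterval => vAux p.1.2 :=
          vAux_continuous.comp (continuous_snd.comp continuous_fst)
        have huA : Continuous fun p : (X × unitInterval) × unitInterval => u p.1.1 :=
          u.continuous.comp (continuous_fst.comp continuous_fst)
        apply continuous_clampI.continuousAt.comp
        exact hcv.continuousAt.mul
          (continuousAt_const.min (hvA.continuousAt.div huA.continuousAt hu0))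
  have hH2cont : Continuous fun p : (X × unitInterval) × unitInterval =>
      kAux (p.1.2, clampI ((p.2 : ℝ) * min 1 (u p.1.1 / vAux p.1.2))) := by
    rw [continuous_iff_continuousAt]
    intro p₀
    by_cases hv0 : vAux p₀.1.2 = 0
    · have hfixk : ∀ τ, kAux (p₀.1.2, τ) = p₀.1.2 := by
        rcases (vAux_eq_zero_iff p₀.1.2).mp hv0 with h | h
        · rw [h]; exact kAux_fix0
        · rw [h]; exact kAux_fix1
      exact tube_fix kAux hfixk
        (fun p : (X × unitInterval) × unitInterval => p.1.2)
        (fun p : (X × unitInterval) × unitInterval =>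
          clampI ((p.2 : ℝ) * min 1 (u p.1.1 / vAux p.1.2)))
        (Continuous.continuousAt
          (continuous_snd.comp continuous_fst :
            Continuous fun p : (X × unitInterval) × unitInterval => p.1.2)) rfl
    · refine kAux.continuous.continuousAt.comp (ContinuousAt.prodMk ?_ ?_)
      · exact (continuous_snd.comp continuous_fst).continuousAt
      · have hcv : Continuous fun p : (X × unitInterval) × unitInterval => (p.2 : ℝ) :=
          continuous_subtype_val.comp continuous_snd
        have hvA : Continuous fun p : (X × unitInterval) × unitInterval => vAux p.1.2 :=
          vAux_continuous.comp (continuous_snd.comp continuous_fst)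
        have huA : Continuous fun p : (X × unitInterval) × unitInterval => u p.1.1 :=
          u.continuous.comp (continuous_fst.comp continuous_fst)
        apply continuous_clampI.continuousAt.comp
        exact hcv.continuousAt.mul
          (continuousAt_const.min (huA.continuousAt.div hvA.continuousAt hv0))
  refine ndr_to_ret _ ⟨fun q => u q.1 * vAux q.2,
      (u.continuous.comp continuous_fst).mul (vAux_continuous.comp continuous_snd)⟩
    ⟨fun p => (j (p.1.1, clampI ((p.2 : ℝ) * min 1 (vAux p.1.2 / u p.1.1))),
        kAux (p.1.2, clampI ((p.2 : ℝ) * min 1 (u p.1.1 / vAux p.1.2)))),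
      hH1cont.prodMk hH2cont⟩ ?_ ?_ ?_ ?_ ?_
  · intro q
    exact ⟨mul_nonneg (hu01 q.1).1 (vAux_mem q.2).1,
      mul_le_one₀ (hu01 q.1).2 (vAux_mem q.2).1 (vAux_mem q.2).2⟩
  · ext q
    simp only [Set.mem_setOf_eq, Set.mem_preimage, ContinuousMap.coe_mk, Set.mem_singleton_iff,
      mul_eq_zero]
    constructor
    · rintro (h | h | h)
      · right; rw [vAux_eq_zero_iff]; left; exact h
      · right; rw [vAux_eq_zero_iff]; right; exact h
      · left; exact huC _ h
    · rintro (h | h)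
      · right; right; exact hCu _ h
      · rcases (vAux_eq_zero_iff q.2).mp h with h | h
        · left; exact h
        · right; left; exact h
  · intro q
    simp only [ContinuousMap.coe_mk, Set.Icc.coe_zero, zero_mul, clampI_zero, hj0, kAux_zero]
  · rintro ⟨x, s⟩ hq t
    have hmin10 : min (1:ℝ) 0 = 0 := by norm_num
    simp only [ContinuousMap.coe_mk]
    rcases hq with h | h | h
    · have h' : s = 0 := h
      subst h'
      have hv0 : vAux (0 : unitInterval) = 0 := (vAux_eq_zero_iff 0).mpr (Or.inl rfl)
      simp only [hv0, zero_div, div_zero, hmin10, mul_zero, clampI_zero, hj0, kAux_zero]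
    · have h' : s = 1 := h
      subst h'
      have hv1 : vAux (1 : unitInterval) = 0 := (vAux_eq_zero_iff 1).mpr (Or.inr rfl)
      simp only [hv1, zero_div, div_zero, hmin10, mul_zero, clampI_zero, hj0, kAux_zero]
    · have h' : x ∈ C := h
      simp only [huC x h', zero_div, div_zero, hmin10, mul_zero, clampI_zero, kAux_zero,
        hjfix x h']
  · rintro ⟨x, s⟩ hq
    have hmin10 : min (1:ℝ) 0 = 0 := by norm_num
    simp only [ContinuousMap.coe_mk] at hq
    simp only [ContinuousMap.coe_mk, Set.mem_setOf_eq]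
    by_cases hu0 : u x = 0
    · right; right
      rw [hjfix x (hCu x hu0)]
      exact hCu x hu0
    · have hupos : 0 < u x := lt_of_le_of_ne (hu01 x).1 (Ne.symm hu0)
      by_cases hle : u x ≤ vAux s
      · right; right
        have hm1 : min (1:ℝ) (vAux s / u x) = 1 :=
          min_eq_left ((one_le_div hupos).mpr hle)
        rw [hm1, Set.Icc.coe_one, one_mul, clampI_of_one_le le_rfl]
        apply hj1
        nlinarith [(vAux_mem s).2, (hu01 x).1]
      · push_neg at hle
        by_cases hv0 : vAux s = 0
        · rcases (vAux_eq_zero_iff s).mp hv0 with h | h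
          · left
            rw [hv0, div_zero, hmin10, mul_zero, clampI_zero, kAux_zero]
            exact h
          · right; left
            rw [hv0, div_zero, hmin10, mul_zero, clampI_zero, kAux_zero]
            exact h
        · have hvpos : 0 < vAux s := lt_of_le_of_ne (vAux_mem s).1 (Ne.symm hv0)
          have hn1 : min (1:ℝ) (u x / vAux s) = 1 :=
            min_eq_left ((one_le_div hvpos).mpr hle.le)
          rw [hn1, Set.Icc.coe_one, one_mul, clampI_of_one_le le_rfl]
          have hvlt1 : vAux s < 1 := lt_of_lt_of_le hle (hu01 x).2
          have hmins : min (s : ℝ) (1 - s) < 1/3 := by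
            unfold vAux at hvlt1
            rcases min_cases (1:ℝ) (3 * min (s:ℝ) (1 - s)) with ⟨h', -⟩ | ⟨h', -⟩
            · rw [h'] at hvlt1; norm_num at hvlt1
            · rw [h'] at hvlt1; linarith
          rcases min_cases ((s:ℝ)) (1 - (s:ℝ)) with ⟨h', -⟩ | ⟨h', -⟩
          · left
            show clampI ((s : ℝ) + (1 : unitInterval) * (2 * s - 1)) = 0
            rw [Set.Icc.coe_one, one_mul]
            apply clampI_of_nonpos
            rw [h'] at hmins
            nlinarith
          · right; left
            show clampI ((s : ℝ) + (1 : unitInterval) * (2 * s - 1)) = 1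
            rw [Set.Icc.coe_one, one_mul]
            apply clampI_of_one_le
            rw [h'] at hmins
            nlinarith

end Prod

section ED

variable {X : Type*} [TopologicalSpace X]

set_option maxHeartbeats 1000000 in
/-- Strøm retraction for the pair `(E, D)` where `E = X × ∂I ∪ C × I` and
`D = A₁ × 0 ∪ A₂ × 1 ∪ C × I`, `C = A₁ ∩ A₂`. -/
lemma ret_ED {A₁ A₂ : Set X} (u₁ u₂ : C(X, ℝ)) (k₁ k₂ : C(X × unitInterval, X))
    (hu₁01 : ∀ x, u₁ x ∈ Set.Icc (0 : ℝ) 1) (hA₁u : A₁ = u₁ ⁻¹' {0})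
    (hk₁0 : ∀ x, k₁ (x, 0) = x) (hk₁fix : ∀ a ∈ A₁, ∀ t, k₁ (a, t) = a)
    (hk₁1 : ∀ x, u₁ x < 1 → k₁ (x, 1) ∈ A₁)
    (hu₂01 : ∀ x, u₂ x ∈ Set.Icc (0 : ℝ) 1) (hA₂u : A₂ = u₂ ⁻¹' {0})
    (hk₂0 : ∀ x, k₂ (x, 0) = x) (hk₂fix : ∀ a ∈ A₂, ∀ t, k₂ (a, t) = a)
    (hk₂1 : ∀ x, u₂ x < 1 → k₂ (x, 1) ∈ A₂) :
    ∃ r : C(↥{p : X × unitInterval | p.2 = 0 ∨ p.2 = 1 ∨ p.1 ∈ A₁ ∩ A₂} × unitInterval,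
        ↥{p : X × unitInterval | p.2 = 0 ∨ p.2 = 1 ∨ p.1 ∈ A₁ ∩ A₂} × unitInterval),
      IsStromRet (Subtype.val ⁻¹'
        {p : X × unitInterval | (p.2 = 0 ∧ p.1 ∈ A₁) ∨ (p.2 = 1 ∧ p.1 ∈ A₂) ∨ p.1 ∈ A₁ ∩ A₂}) r := by
  have hu₁A : ∀ a ∈ A₁, u₁ a = 0 := by intro a ha; rw [hA₁u] at ha; exact ha
  have hAu₁ : ∀ x, u₁ x = 0 → x ∈ A₁ := by intro x hx; rw [hA₁u]; exact hx
  have hu₂A : ∀ a ∈ A₂, u₂ a = 0 := by intro a ha; rw [hA₂u] at ha; exact ha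
  have hAu₂ : ∀ x, u₂ x = 0 → x ∈ A₂ := by intro x hx; rw [hA₂u]; exact hx
  set E : Set (X × unitInterval) := {p | p.2 = 0 ∨ p.2 = 1 ∨ p.1 ∈ A₁ ∩ A₂} with hEdef
  -- the underlying map of the homotopy
  have hmap : ∀ q : ↥E × unitInterval,
      (k₂ (k₁ ((q.1 : X × unitInterval).1,
          clampI ((q.2 : ℝ) * (1 - ((q.1 : X × unitInterval).2 : ℝ)))),
        clampI ((q.2 : ℝ) * ((q.1 : X × unitInterval).2 : ℝ))),
        (q.1 : X × unitInterval).2) ∈ E := by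
    rintro ⟨⟨⟨x, s⟩, he⟩, t⟩
    rcases he with h | h | h
    · exact Or.inl h
    · exact Or.inr (Or.inl h)
    · rw [hk₁fix x h.1, hk₂fix x h.2]
      exact Or.inr (Or.inr h)
  have hcontmap : Continuous fun q : ↥E × unitInterval =>
      (k₂ (k₁ ((q.1 : X × unitInterval).1,
          clampI ((q.2 : ℝ) * (1 - ((q.1 : X × unitInterval).2 : ℝ)))),
        clampI ((q.2 : ℝ) * ((q.1 : X × unitInterval).2 : ℝ))),
        (q.1 : X × unitInterval).2) := by
    have hx : Continuous fun q : ↥E × unitInterval => (q.1 : X × unitInterval).1 :=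
      continuous_fst.comp (continuous_subtype_val.comp continuous_fst)
    have hs : Continuous fun q : ↥E × unitInterval => ((q.1 : X × unitInterval).2 : ℝ) :=
      continuous_subtype_val.comp (continuous_snd.comp
        (continuous_subtype_val.comp continuous_fst))
    have ht : Continuous fun q : ↥E × unitInterval => (q.2 : ℝ) :=
      continuous_subtype_val.comp continuous_snd
    have hτ₁ : Continuous fun q : ↥E × unitInterval =>
        clampI ((q.2 : ℝ) * (1 - ((q.1 : X × unitInterval).2 : ℝ))) :=
      continuous_clampI.comp (ht.mul (continuous_const.sub hs))
    have hτ₂ : Continuous fun q : ↥E × unitInterval =>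
        clampI ((q.2 : ℝ) * ((q.1 : X × unitInterval).2 : ℝ)) :=
      continuous_clampI.comp (ht.mul hs)
    have hk₁c : Continuous fun q : ↥E × unitInterval =>
        k₁ ((q.1 : X × unitInterval).1,
          clampI ((q.2 : ℝ) * (1 - ((q.1 : X × unitInterval).2 : ℝ)))) :=
      k₁.continuous.comp (hx.prodMk hτ₁)
    exact ((k₂.continuous.comp (hk₁c.prodMk hτ₂)).prodMk
      (continuous_snd.comp (continuous_subtype_val.comp continuous_fst)))
  refine ndr_to_ret _
    ⟨fun e => (1 - ((e : X × unitInterval).2 : ℝ)) * u₁ (e : X × unitInterval).1 +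
        ((e : X × unitInterval).2 : ℝ) * u₂ (e : X × unitInterval).1, by
      have hs : Continuous fun e : ↥E => ((e : X × unitInterval).2 : ℝ) :=
        continuous_subtype_val.comp (continuous_snd.comp continuous_subtype_val)
      have hx1 : Continuous fun e : ↥E => u₁ (e : X × unitInterval).1 :=
        u₁.continuous.comp (continuous_fst.comp continuous_subtype_val)
      have hx2 : Continuous fun e : ↥E => u₂ (e : X × unitInterval).1 :=
        u₂.continuous.comp (continuous_fst.comp continuous_subtype_val)
      exact ((continuous_const.sub hs).mul hx1).add (hs.mul hx2)⟩
    ⟨fun q => ⟨_, hmap q⟩, hcontmap.subtype_mk _⟩ ?_ ?_ ?_ ?_ ?_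
  · rintro ⟨⟨x, s⟩, he⟩
    have h1 := (hu₁01 x).1
    have h2 := (hu₁01 x).2
    have h3 := (hu₂01 x).1
    have h4 := (hu₂01 x).2
    have h5 := s.2.1
    have h6 := s.2.2
    constructor
    · simp only [ContinuousMap.coe_mk]
      nlinarith
    · simp only [ContinuousMap.coe_mk]
      nlinarith
  · ext ⟨⟨x, s⟩, he⟩
    simp only [Set.mem_preimage, Set.mem_setOf_eq, ContinuousMap.coe_mk,
      Set.mem_singleton_iff]
    constructor
    · rintro (⟨hs, hx⟩ | ⟨hs, hx⟩ | hx)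
      · have : (s : ℝ) = 0 := by rw [hs]; rfl
        rw [this, hu₁A x hx]
        ring
      · have : (s : ℝ) = 1 := by rw [hs]; rfl
        rw [this, hu₂A x hx]
        ring
      · rw [hu₁A x hx.1, hu₂A x hx.2]
        ring
    · intro hz
      have h1 := (hu₁01 x).1
      have h3 := (hu₂01 x).1
      have h5 := s.2.1
      have h6 := s.2.2
      have ht1 : (1 - (s : ℝ)) * u₁ x = 0 := by nlinarith
      have ht2 : (s : ℝ) * u₂ x = 0 := by nlinarith
      rcases he with h | h | h
      · left
        refine ⟨h, hAu₁ x ?_⟩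
        have : (s : ℝ) = 0 := by rw [show s = (0 : unitInterval) from h]; simp
        rw [this] at ht1
        linarith
      · right; left
        refine ⟨h, hAu₂ x ?_⟩
        have : (s : ℝ) = 1 := by rw [show s = (1 : unitInterval) from h]; simp
        rw [this] at ht2
        linarith
      · right; right; exact h
  · rintro ⟨⟨x, s⟩, he⟩
    apply Subtype.ext
    simp only [ContinuousMap.coe_mk, Set.Icc.coe_zero, zero_mul, clampI_zero, hk₁0, hk₂0]
  · rintro ⟨⟨x, s⟩, he⟩ ha t
    simp only [Set.mem_preimage, Set.mem_setOf_eq] at ha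
    apply Subtype.ext
    simp only [ContinuousMap.coe_mk]
    rcases ha with ⟨hs, hx⟩ | ⟨hs, hx⟩ | hx
    · have hs' : (s : ℝ) = 0 := by rw [hs]; rfl
      rw [hs']
      simp only [sub_zero, mul_one, mul_zero, clampI_zero, clampI_coe, hk₂0]
      rw [hk₁fix x hx]
    · have hs' : (s : ℝ) = 1 := by rw [hs]; rfl
      rw [hs']
      simp only [sub_self, mul_zero, mul_one, clampI_zero, clampI_coe, hk₁0]
      rw [hk₂fix x hx]
    · rw [hk₁fix x hx.1, hk₂fix x hx.2]
  · rintro ⟨⟨x, s⟩, he⟩ hlt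
    simp only [ContinuousMap.coe_mk] at hlt
    simp only [Set.mem_preimage, Set.mem_setOf_eq, ContinuousMap.coe_mk]
    rcases he with h | h | h
    · left
      refine ⟨h, ?_⟩
      have hs' : (s : ℝ) = 0 := by rw [show s = (0 : unitInterval) from h]; simp
      rw [hs'] at hlt ⊢
      simp only [sub_zero, mul_one, mul_zero, zero_mul, add_zero, one_mul] at hlt ⊢
      simp only [Set.Icc.coe_one, mul_one, one_mul, mul_zero, clampI_zero, clampI_coe,
        clampI_of_one_le le_rfl, hk₂0, hk₁0]
      exact hk₁1 x hlt
    · right; left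
      refine ⟨h, ?_⟩
      have hs' : (s : ℝ) = 1 := by rw [show s = (1 : unitInterval) from h]; simp
      rw [hs'] at hlt ⊢
      simp only [sub_self, mul_zero, zero_mul, one_mul, zero_add] at hlt ⊢
      simp only [Set.Icc.coe_one, mul_one, one_mul, mul_zero, clampI_zero, clampI_coe,
        clampI_of_one_le le_rfl, hk₁0, hk₂0]
      exact hk₂1 x hlt
    · right; right
      rw [hk₁fix x h.1, hk₂fix x h.2]
      exact h

end ED

set_option maxHeartbeats 1000000 in
/-- **Lillig's union theorem for cofibrations.**  If `A₁`, `A₂` are closed subsets of `X` such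
that `(X, A₁)`, `(X, A₂)` and `(X, A₁ ∩ A₂)` are NDR pairs (equivalently, the inclusions are
closed Hurewicz cofibrations), then `(X, A₁ ∪ A₂)` is an NDR pair, i.e. the inclusion
`A₁ ∪ A₂ → X` is a closed Hurewicz cofibration. -/
theorem lillig_union_theorem {X : Type*} [TopologicalSpace X] (A₁ A₂ : Set X)
    (hA₁ : IsClosed A₁) (hA₂ : IsClosed A₂)
    (h₁ : IsNDRPair A₁) (h₂ : IsNDRPair A₂) (h₁₂ : IsNDRPair (A₁ ∩ A₂)) :
    IsNDRPair (A₁ ∪ A₂) := by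
  obtain ⟨-, u₁, k₁, hu₁01, hA₁u, hk₁0, hk₁fix, hk₁1⟩ := h₁
  obtain ⟨-, u₂, k₂, hu₂01, hA₂u, hk₂0, hk₂fix, hk₂1⟩ := h₂
  obtain ⟨hCc, u, j, hu01, hCu, hj0, hjfix, hj1⟩ := h₁₂
  have hu₁A : ∀ a ∈ A₁, u₁ a = 0 := by intro a ha; rw [hA₁u] at ha; exact ha
  have hAu₁ : ∀ x, u₁ x = 0 → x ∈ A₁ := by intro x hx; rw [hA₁u]; exact hx
  have hu₂A : ∀ a ∈ A₂, u₂ a = 0 := by intro a ha; rw [hA₂u] at ha; exact ha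
  have hAu₂ : ∀ x, u₂ x = 0 → x ∈ A₂ := by intro x hx; rw [hA₂u]; exact hx
  -- Strøm retraction for (X × I, E), E = X × ∂I ∪ C × I
  obtain ⟨rE, hrE⟩ := ret_prod u j hu01 hCu hj0 hjfix hj1
  -- Strøm retraction for (E, D)
  obtain ⟨rED, hrED⟩ := ret_ED u₁ u₂ k₁ k₂ hu₁01 hA₁u hk₁0 hk₁fix hk₁1
    hu₂01 hA₂u hk₂0 hk₂fix hk₂1
  -- compose: Strøm retraction for (X × I, D)
  have hEc : IsClosed {p : X × unitInterval | p.2 = 0 ∨ p.2 = 1 ∨ p.1 ∈ A₁ ∩ A₂} := by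
    have : {p : X × unitInterval | p.2 = 0 ∨ p.2 = 1 ∨ p.1 ∈ A₁ ∩ A₂} =
        (Prod.snd ⁻¹' ({0} : Set unitInterval)) ∪
          ((Prod.snd ⁻¹' ({1} : Set unitInterval)) ∪ (Prod.fst ⁻¹' (A₁ ∩ A₂))) := by
      ext p
      simp [Set.mem_preimage]
    rw [this]
    exact (isClosed_singleton.preimage continuous_snd).union
      ((isClosed_singleton.preimage continuous_snd).union
        ((hA₁.inter hA₂).preimage continuous_fst))
  have hDE : {p : X × unitInterval | (p.2 = 0 ∧ p.1 ∈ A₁) ∨ (p.2 = 1 ∧ p.1 ∈ A₂) ∨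
      p.1 ∈ A₁ ∩ A₂} ⊆ {p : X × unitInterval | p.2 = 0 ∨ p.2 = 1 ∨ p.1 ∈ A₁ ∩ A₂} := by
    rintro p (⟨h, -⟩ | ⟨h, -⟩ | h)
    · exact Or.inl h
    · exact Or.inr (Or.inl h)
    · exact Or.inr (Or.inr h)
  obtain ⟨rD, hrD⟩ := ret_comp hEc hDE rE hrE rED hrED
  obtain ⟨hrD0, hrDfix, hrDim⟩ := hrD
  -- the blending function
  set vfun : X → unitInterval := fun x => clampI (u₁ x / (u₁ x + u₂ x)) with hvfun
  have hmemD : ∀ a ∈ A₁ ∪ A₂, ((a, vfun a) : X × unitInterval) ∈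
      {p : X × unitInterval | (p.2 = 0 ∧ p.1 ∈ A₁) ∨ (p.2 = 1 ∧ p.1 ∈ A₂) ∨
        p.1 ∈ A₁ ∩ A₂} := by
    intro a ha
    by_cases hC : a ∈ A₁ ∩ A₂
    · exact Or.inr (Or.inr hC)
    · rcases ha with h | h
      · left
        refine ⟨?_, h⟩
        show vfun a = 0
        rw [hvfun]
        simp only
        rw [hu₁A a h, zero_div, clampI_zero]
      · right; left
        refine ⟨?_, h⟩
        have hne : u₁ a ≠ 0 := by
          intro h0
          exact hC ⟨hAu₁ a h0, h⟩
        show vfun a = 1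
        rw [hvfun]
        simp only
        rw [hu₂A a h, add_zero, div_self hne, clampI_of_one_le le_rfl]
  -- the candidate retraction for (X, A₁ ∪ A₂)
  set G : C((X × unitInterval) × unitInterval, X × unitInterval) :=
    ⟨fun p => ((rD p).1.1, (rD p).2),
      (continuous_fst.comp (continuous_fst.comp rD.continuous)).prodMk
        (continuous_snd.comp rD.continuous)⟩ with hG
  have hFcont : Continuous fun q : X × unitInterval => G ((q.1, vfun q.1), q.2) := by
    rw [continuous_iff_continuousAt]
    rintro ⟨x₀, t₀⟩
    by_cases hx : x₀ ∈ A₁ ∩ A₂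
    · refine tube_fix2 G ?_ vfun t₀
      intro s s' t
      have h1 : rD ((x₀, s), t) = ((x₀, s), t) :=
        hrDfix (x₀, s) (Or.inr (Or.inr hx)) t
      have h2 : rD ((x₀, s'), t) = ((x₀, s'), t) :=
        hrDfix (x₀, s') (Or.inr (Or.inr hx)) t
      simp only [hG, ContinuousMap.coe_mk, h1, h2]
    · have hsum : u₁ x₀ + u₂ x₀ ≠ 0 := by
        intro h0
        have h1 := (hu₁01 x₀).1
        have h2 := (hu₂01 x₀).1
        exact hx ⟨hAu₁ x₀ (by linarith), hAu₂ x₀ (by linarith)⟩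
      have hvAt : ContinuousAt vfun x₀ := by
        rw [hvfun]
        apply continuous_clampI.continuousAt.comp
        exact (u₁.continuous.continuousAt).div
          ((u₁.continuous.add u₂.continuous).continuousAt) hsum
      exact G.continuous.continuousAt.comp
        ((continuousAt_fst.prodMk (ContinuousAt.comp (g := vfun) (f := Prod.fst) hvAt continuousAt_fst :
          ContinuousAt (fun q : X × unitInterval => vfun q.1) (x₀, t₀))).prodMk continuousAt_snd)
  refine ret_to_ndr (hA₁.union hA₂)
    ⟨fun q => G ((q.1, vfun q.1), q.2), hFcont⟩ ?_
  refine ⟨?_, ?_, ?_⟩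
  · intro x
    have h := hrD0 (x, vfun x)
    simp only [ContinuousMap.coe_mk, hG, h]
  · intro a ha t
    have h := hrDfix (a, vfun a) (hmemD a ha) t
    simp only [ContinuousMap.coe_mk, hG, h]
  · intro p
    rcases hrDim ((p.1, vfun p.1), p.2) with h | h
    · left
      simp only [ContinuousMap.coe_mk, hG]
      exact h
    · right
      simp only [ContinuousMap.coe_mk, hG]
      rcases h with ⟨-, h⟩ | ⟨-, h⟩ | h
      · exact Or.inl h
      · exact Or.inr h
      · exact Or.inl h.1
end

section
/- If i₁ : A₁ → X₁ and i₂ : A₂ → X₂ are closed Hurewicz cofibrations of topological spaces, then the product map i₁ × i₂ : A₁ × A₂ → X₁ × X₂ is a closed Hurewicz cofibration. -/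
universe u

/-- A continuous map `i : A → X` is a closed Hurewicz cofibration if it is a closed embedding
and has the homotopy extension property with respect to all spaces. -/
def IsClosedCofibration {A X : Type u} [TopologicalSpace A] [TopologicalSpace X]
    (i : C(A, X)) : Prop :=
  Topology.IsClosedEmbedding i ∧
  ∀ (Y : Type u) [TopologicalSpace Y] (f : C(X, Y)) (H : C(A × unitInterval, Y)),
    (∀ a, H (a, 0) = f (i a)) →
    ∃ G : C(X × unitInterval, Y), (∀ x, G (x, 0) = f x) ∧ ∀ a t, G (i a, t) = H (a, t)

/-- Gluing a continuous-on function over two closed sets. -/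
lemma continuousOn_union_of_isClosed {α β : Type*} [TopologicalSpace α] [TopologicalSpace β]
    {f : α → β} {s t : Set α} (hs : IsClosed s) (ht : IsClosed t)
    (hfs : ContinuousOn f s) (hft : ContinuousOn f t) : ContinuousOn f (s ∪ t) := by
  intro x hx
  apply ContinuousWithinAt.union
  · by_cases hxs : x ∈ s
    · exact hfs x hxs
    · exact continuousWithinAt_of_notMem_closure (by rwa [hs.closure_eq])
  · by_cases hxt : x ∈ t
    · exact hft x hxt
    · exact continuousWithinAt_of_notMem_closure (by rwa [ht.closure_eq])

/-- From the homotopy extension property we get a retraction of `X × I` onto the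
subset `X × {0} ∪ i(A) × I`. -/
lemma exists_retraction {A X : Type u} [TopologicalSpace A] [TopologicalSpace X]
    (i : C(A, X)) (h : IsClosedCofibration i) :
    ∃ r : C(X × unitInterval, X × unitInterval),
      (∀ x, r (x, 0) = (x, 0)) ∧ (∀ a t, r (i a, t) = (i a, t)) ∧
      ∀ p, (r p).2 = 0 ∨ (r p).1 ∈ Set.range i := by
  classical
  set M : Type u := {p : X × unitInterval // p.2 = 0 ∨ p.1 ∈ Set.range i} with hM
  let f : C(X, M) := ⟨fun x => ⟨(x, 0), Or.inl rfl⟩,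
    Continuous.subtype_mk (by fun_prop) _⟩
  let H : C(A × unitInterval, M) := ⟨fun p => ⟨(i p.1, p.2), Or.inr ⟨p.1, rfl⟩⟩,
    Continuous.subtype_mk (by fun_prop) _⟩
  obtain ⟨G, hG0, hGa⟩ := h.2 M f H (fun a => rfl)
  refine ⟨⟨fun p => (G p).1, (continuous_subtype_val.comp G.continuous)⟩, ?_, ?_, ?_⟩
  · intro x
    show (G (x, 0)).1 = (x, 0)
    rw [hG0 x]
    rfl
  · intro a t
    show (G (i a, t)).1 = (i a, t)
    rw [hGa a t]
    rfl
  · intro p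
    exact (G p).2

/-- If `i₁ : A₁ → X₁` and `i₂ : A₂ → X₂` are closed Hurewicz cofibrations of topological
spaces, then the product map `i₁ × i₂ : A₁ × A₂ → X₁ × X₂` is a closed Hurewicz
cofibration. -/
theorem isClosedCofibration_prodMap {A₁ X₁ A₂ X₂ : Type u}
    [TopologicalSpace A₁] [TopologicalSpace X₁] [TopologicalSpace A₂] [TopologicalSpace X₂]
    (i₁ : C(A₁, X₁)) (i₂ : C(A₂, X₂))
    (h₁ : IsClosedCofibration i₁) (h₂ : IsClosedCofibration i₂) :
    IsClosedCofibration (i₁.prodMap i₂) := by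
  classical
  have hemb : Topology.IsClosedEmbedding ⇑(i₁.prodMap i₂) := by
    have : ⇑(i₁.prodMap i₂) = Prod.map ⇑i₁ ⇑i₂ := rfl
    rw [this]
    exact ⟨h₁.1.isEmbedding.prodMap h₂.1.isEmbedding,
      by rw [Set.range_prodMap]; exact h₁.1.isClosed_range.prod h₂.1.isClosed_range⟩
  refine ⟨hemb, ?_⟩
  intro Y _ f H hcomp
  rcases isEmpty_or_nonempty (A₁ × A₂) with hE | hN
  · exact ⟨⟨fun p => f p.1, by fun_prop⟩, fun x => rfl, fun a => hE.elim a⟩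
  obtain ⟨r₁, hr₁0, hr₁a, hr₁m⟩ := exists_retraction i₁ h₁
  obtain ⟨r₂, hr₂0, hr₂a, hr₂m⟩ := exists_retraction i₂ h₂
  set i := i₁.prodMap i₂ with hi
  -- the combined retraction
  have hmin : ∀ u v : unitInterval, min (u : ℝ) (v : ℝ) ∈ unitInterval :=
    fun u v => ⟨le_min u.2.1 v.2.1, min_le_of_left_le u.2.2⟩
  let r : (X₁ × X₂) × unitInterval → (X₁ × X₂) × unitInterval := fun p =>
    (((r₁ (p.1.1, p.2)).1, (r₂ (p.1.2, p.2)).1),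
      ⟨min ((r₁ (p.1.1, p.2)).2 : ℝ) ((r₂ (p.1.2, p.2)).2 : ℝ), hmin _ _⟩)
  have hrc : Continuous r := by
    apply Continuous.prodMk
    · fun_prop
    · exact Continuous.subtype_mk (by fun_prop) _
  set S : Set (X₁ × X₂) := Set.range ⇑i with hS
  have hSclosed : IsClosed S := hemb.isClosed_range
  -- the retraction lands in `X × {0} ∪ S × I`
  have hrm : ∀ p, (r p).2 = 0 ∨ (r p).1 ∈ S := by
    intro p
    rcases hr₁m (p.1.1, p.2) with h1 | h1
    · left
      apply Subtype.ext
      show min ((r₁ (p.1.1, p.2)).2 : ℝ) _ = 0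
      rw [h1]
      exact min_eq_left (r₂ (p.1.2, p.2)).2.2.1
    · rcases hr₂m (p.1.2, p.2) with h2 | h2
      · left
        apply Subtype.ext
        show min _ ((r₂ (p.1.2, p.2)).2 : ℝ) = 0
        rw [h2]
        exact min_eq_right (r₁ (p.1.1, p.2)).2.2.1
      · right
        have : ⇑i = Prod.map ⇑i₁ ⇑i₂ := rfl
        rw [hS, this, Set.range_prodMap]
        exact ⟨h1, h2⟩
  -- the glued map on `X × {0} ∪ S × I`
  let inv : X₁ × X₂ → A₁ × A₂ := Function.invFun ⇑i
  have hinv : ∀ x ∈ S, i (inv x) = x := fun x hx => Function.invFun_eq hx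
  have hinva : ∀ a : A₁ × A₂, inv (i a) = a :=
    fun a => Function.leftInverse_invFun hemb.injective a
  let g : (X₁ × X₂) × unitInterval → Y := fun p =>
    if h : p.1 ∈ S then H (inv p.1, p.2) else f p.1
  set C : Set ((X₁ × X₂) × unitInterval) := {p | p.2 = 0} with hC
  set D : Set ((X₁ × X₂) × unitInterval) := {p | p.1 ∈ S} with hD
  have hCclosed : IsClosed C := isClosed_eq continuous_snd continuous_const
  have hDclosed : IsClosed D := hSclosed.preimage continuous_fst
  have hgC : ContinuousOn g C := by
    apply ContinuousOn.congr ((f.continuous.comp continuous_fst).continuousOn)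
    intro p hp
    simp only [g]
    split_ifs with h
    · have hp2 : p.2 = 0 := hp
      rw [hp2, hcomp, hinv p.1 h]; rfl
    · rfl
  have hgD : ContinuousOn g D := by
    have heq : Set.EqOn g (fun p => H (inv p.1, p.2)) D := by
      intro p hp
      exact dif_pos hp
    apply ContinuousOn.congr ?_ heq
    rw [continuousOn_iff_continuous_restrict]
    -- the restriction to `D` factors through the inverse on the range
    have hinvS : Continuous (fun q : D => inv q.1.1) := by
      rw [hemb.isEmbedding.continuous_iff]
      have : (⇑i ∘ fun q : D => inv q.1.1) = fun q : D => q.1.1 := by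
        funext q
        exact hinv q.1.1 q.2
      rw [this]
      fun_prop
    exact H.continuous.comp (hinvS.prodMk (by fun_prop))
  have hg : ContinuousOn g (C ∪ D) :=
    continuousOn_union_of_isClosed hCclosed hDclosed hgC hgD
  refine ⟨⟨fun p => g (r p), hg.comp_continuous hrc (fun p => hrm p)⟩, ?_, ?_⟩
  · intro x
    show g (r (x, 0)) = f x
    have e1 : r₁ (x.1, 0) = (x.1, 0) := hr₁0 x.1
    have e2 : r₂ (x.2, 0) = (x.2, 0) := hr₂0 x.2
    have : r (x, 0) = (x, 0) := by
      simp only [r, e1, e2]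
      refine Prod.ext rfl (Subtype.ext ?_)
      show min ((0:unitInterval) : ℝ) ((0:unitInterval) : ℝ) = ((0:unitInterval) : ℝ)
      simp
    rw [this]
    simp only [g]
    split_ifs with h
    · rw [hcomp, hinv x h]
    · rfl
  · intro a t
    show g (r (i a, t)) = H (a, t)
    have e1 : r₁ (i₁ a.1, t) = (i₁ a.1, t) := hr₁a a.1 t
    have e2 : r₂ (i₂ a.2, t) = (i₂ a.2, t) := hr₂a a.2 t
    have : r (i a, t) = (i a, t) := by
      simp only [r]
      have h11 : (i a).1 = i₁ a.1 := rfl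
      have h12 : (i a).2 = i₂ a.2 := rfl
      rw [h11, h12, e1, e2]
      refine Prod.ext rfl (Subtype.ext ?_)
      show min (t : ℝ) (t : ℝ) = (t : ℝ)
      simp
    rw [this]
    have hmem : (i a : X₁ × X₂) ∈ S := ⟨a, rfl⟩
    simp only [g, dif_pos hmem, hinva a]
end

section
/- Let G be a simplicial topological group such that each inclusion of the identity element {1} → Gₙ is a closed Hurewicz cofibration (G is well pointed). Then for every n and every 0 ≤ i ≤ n, the degeneracy map sᵢ : Gₙ → G_{n+1} is a closed Hurewicz cofibration. -/
universe u

open CategoryTheory Simplicial Opposite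

/-- Let `G` be a simplicial topological group (a simplicial object in topological spaces with
a continuous, levelwise group structure for which all simplicial structure maps are group
homomorphisms), such that each inclusion of the identity element `{1} → Gₙ` is a closed
Hurewicz cofibration (i.e. `G` is well pointed).  Then for every `n` and every `0 ≤ i ≤ n`,
the degeneracy map `sᵢ : Gₙ → Gₙ₊₁` is a closed Hurewicz cofibration. -/
theorem degeneracy_isClosedCofibration_of_wellPointed
    (G : SimplicialObject TopCat.{u})
    (grp : ∀ x : SimplexCategoryᵒᵖ, Group (G.obj x))
    (contMul : ∀ x : SimplexCategoryᵒᵖ,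
      Continuous fun p : (G.obj x) × (G.obj x) =>
        (letI := grp x; p.1 * p.2 : G.obj x))
    (contInv : ∀ x : SimplexCategoryᵒᵖ,
      Continuous fun g : G.obj x => (letI := grp x; g⁻¹ : G.obj x))
    (homMaps : ∀ {x y : SimplexCategoryᵒᵖ} (f : x ⟶ y) (a b : G.obj x),
      letI := grp x; letI := grp y
      G.map f (a * b) = G.map f a * G.map f b)
    (wellPointed : ∀ x : SimplexCategoryᵒᵖ,
      IsClosedCofibration
        (⟨fun _ : PUnit.{u + 1} => (letI := grp x; (1 : G.obj x)), continuous_const⟩ :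
          C(PUnit, G.obj x))) :
    ∀ (n : ℕ) (i : Fin (n + 1)), IsClosedCofibration ((G.σ i).hom : C(G _⦋n⦌, G _⦋n + 1⦌)) := by
  classical
  intro n i
  letI : Group (G _⦋n⦌) := grp _
  letI : Group (G _⦋n + 1⦌) := grp _
  set s : C(G _⦋n⦌, G _⦋n + 1⦌) := ((G.σ i).hom : C(G _⦋n⦌, G _⦋n + 1⦌)) with hs_def
  set d : C(G _⦋n + 1⦌, G _⦋n⦌) := ((G.δ i.succ).hom : C(G _⦋n + 1⦌, G _⦋n⦌)) with hd_def
  -- d ∘ s = id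
  have hds : ∀ a : G _⦋n⦌, d (s a) = a := by
    intro a
    have h := SimplicialObject.δ_comp_σ_succ (X := G) (i := i)
    have := ConcreteCategory.congr_hom h a
    simpa using this
  -- s and d are group homomorphisms
  have hsmul : ∀ a b : G _⦋n⦌, s (a * b) = s a * s b := fun a b =>
    homMaps ((SimplexCategory.σ i).op) a b
  have hdmul : ∀ a b : G _⦋n + 1⦌, d (a * b) = d a * d b := fun a b =>
    homMaps ((SimplexCategory.δ i.succ).op) a b
  have hs1 : s 1 = 1 := by
    have h := hsmul 1 1
    rw [mul_one] at h
    exact (left_eq_mul.mp h)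
  have hd1 : d 1 = 1 := by
    have h := hdmul 1 1
    rw [mul_one] at h
    exact (left_eq_mul.mp h)
  have hdinv : ∀ a : G _⦋n + 1⦌, d a⁻¹ = (d a)⁻¹ := by
    intro a
    refine eq_inv_of_mul_eq_one_left ?_
    rw [← hdmul, inv_mul_cancel, hd1]
  -- the retraction r' g = g * (s (d g))⁻¹
  have hr'cont : Continuous fun g : G _⦋n + 1⦌ => g * (s (d g))⁻¹ :=
    (contMul (op ⦋n + 1⦌)).comp
      (continuous_id.prodMk ((contInv (op ⦋n + 1⦌)).comp
        (s.continuous.comp d.continuous)))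
  set r' : C(G _⦋n + 1⦌, G _⦋n + 1⦌) := ⟨fun g => g * (s (d g))⁻¹, hr'cont⟩ with hr'_def
  have hr'sd : ∀ g : G _⦋n + 1⦌, r' g * s (d g) = g := fun g => inv_mul_cancel_right g _
  have hr's : ∀ a : G _⦋n⦌, r' (s a) = 1 := by
    intro a
    show s a * (s (d (s a)))⁻¹ = 1
    rw [hds, mul_inv_cancel]
  have hdr' : ∀ g : G _⦋n + 1⦌, d (r' g) = 1 := by
    intro g
    show d (g * (s (d g))⁻¹) = 1
    rw [hdmul, hdinv, hds, mul_inv_cancel]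
  have hr'1 : r' 1 = 1 := by
    show (1 : G _⦋n + 1⦌) * (s (d 1))⁻¹ = 1
    rw [hd1, hs1, inv_one, mul_one]
  -- {1} is closed in G_{n+1}
  have hone : IsClosed ({1} : Set (G _⦋n + 1⦌)) := by
    have h := (wellPointed (op ⦋n + 1⦌)).1.isClosed_range
    have hr : Set.range (fun _ : PUnit.{u + 1} => (1 : G _⦋n + 1⦌)) =
        ({1} : Set (G _⦋n + 1⦌)) := Set.range_const
    rw [show ⇑(⟨fun _ : PUnit.{u + 1} => (1 : G _⦋n + 1⦌), continuous_const⟩ :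
        C(PUnit, G _⦋n + 1⦌)) = fun _ : PUnit.{u + 1} => (1 : G _⦋n + 1⦌) from rfl, hr] at h
    exact h
  constructor
  · -- closed embedding
    have hinj : Function.Injective s := fun a b hab => by
      rw [← hds a, ← hds b, hab]
    have hrange : IsClosed (Set.range s) := by
      have : Set.range s = r' ⁻¹' {1} := by
        ext g
        constructor
        · rintro ⟨a, rfl⟩
          exact hr's a
        · intro hg
          have : g * (s (d g))⁻¹ = 1 := hg
          exact ⟨d g, (mul_inv_eq_one.mp this).symm⟩
      rw [this]
      exact hone.preimage r'.continuous
    have hclosedmap : IsClosedMap s := by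
      intro C hC
      have himg : s '' C = Set.range s ∩ d ⁻¹' C := by
        ext g
        constructor
        · rintro ⟨a, ha, rfl⟩
          exact ⟨⟨a, rfl⟩, by simpa [hds] using ha⟩
        · rintro ⟨⟨a, rfl⟩, hg⟩
          exact ⟨a, by simpa [hds] using hg, rfl⟩
      rw [himg]
      exact hrange.inter (hC.preimage d.continuous)
    exact Topology.IsClosedEmbedding.of_continuous_injective_isClosedMap
      s.continuous hinj hclosedmap
  · -- homotopy extension property
    intro Y _ f H hH
    -- the subspace U = G_{n+1} × {0} ∪ {1} × I
    set U : Type u := {p : ↑(G.obj (op ⦋n + 1⦌)) × unitInterval // p.2 = 0 ∨ p.1 = 1}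
      with hU_def
    letI : TopologicalSpace U := by unfold U; infer_instance
    set f₀ : C(G _⦋n + 1⦌, U) :=
      ⟨fun g => ⟨(r' g, 0), Or.inl rfl⟩,
        Continuous.subtype_mk (r'.continuous.prodMk continuous_const) _⟩ with hf₀_def
    set H₀ : C(PUnit.{u + 1} × unitInterval, U) :=
      ⟨fun p => ⟨(1, p.2), Or.inr rfl⟩,
        Continuous.subtype_mk (continuous_const.prodMk continuous_snd) _⟩ with hH₀_def
    obtain ⟨Ghat, hG0, hG1⟩ := (wellPointed (op ⦋n + 1⦌)).2 U f₀ H₀ (by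
      intro a
      apply Subtype.ext
      show ((1 : G _⦋n + 1⦌), (0 : unitInterval)) = (r' 1, 0)
      rw [hr'1])
    -- the glued map Φ on G_n × U
    set C₁ : Set ((G _⦋n⦌) × U) := {p | (p.2 : (G _⦋n + 1⦌) × unitInterval).2 = 0} with hC₁_def
    set C₂ : Set ((G _⦋n⦌) × U) := {p | (p.2 : (G _⦋n + 1⦌) × unitInterval).1 = 1} with hC₂_def
    set F₁ : (G _⦋n⦌) × U → Y :=
      fun p => f ((p.2 : (G _⦋n + 1⦌) × unitInterval).1 * s p.1) with hF₁_def
    set F₂ : (G _⦋n⦌) × U → Y := fun p => H (p.1, (p.2 : (G _⦋n + 1⦌) × unitInterval).2)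
      with hF₂_def
    have hC₁closed : IsClosed C₁ := by
      have : C₁ = (fun p : (G _⦋n⦌) × U => (p.2 : (G _⦋n + 1⦌) × unitInterval).2) ⁻¹'
          ({0} : Set unitInterval) := rfl
      rw [this]
      exact isClosed_singleton.preimage
        (continuous_snd.comp (continuous_subtype_val.comp continuous_snd))
    have hC₂closed : IsClosed C₂ := by
      have : C₂ = (fun p : (G _⦋n⦌) × U => (p.2 : (G _⦋n + 1⦌) × unitInterval).1) ⁻¹'
          ({1} : Set (G _⦋n + 1⦌)) := rfl
      rw [this]
      exact hone.preimage (continuous_fst.comp (continuous_subtype_val.comp continuous_snd))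
    have hsub : C₁ᶜ ⊆ C₂ := fun p hp => (p.2.2).resolve_left hp
    have hagree : ∀ p ∈ C₁ ∩ C₂, F₁ p = F₂ p := by
      rintro ⟨a, u⟩ ⟨h1, h2⟩
      have h1' : (u : ↑(G.obj (op ⦋n + 1⦌)) × unitInterval).2 = 0 := h1
      have h2' : (u : ↑(G.obj (op ⦋n + 1⦌)) × unitInterval).1 = 1 := h2
      show f ((u : ↑(G.obj (op ⦋n + 1⦌)) × unitInterval).1 * s a) =
        H (a, (u : ↑(G.obj (op ⦋n + 1⦌)) × unitInterval).2)
      rw [h1', h2', one_mul, hH a]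
    have hfr : ∀ p ∈ frontier C₁, F₁ p = F₂ p := by
      intro p hp
      have hp1 : p ∈ C₁ := hC₁closed.closure_eq ▸ frontier_subset_closure hp
      have hp2 : p ∈ C₂ := by
        have : p ∈ closure C₁ᶜ := by
          rw [← frontier_compl] at hp
          exact frontier_subset_closure hp
        exact closure_minimal hsub hC₂closed this
      exact hagree p ⟨hp1, hp2⟩
    have hF₁cont : Continuous F₁ :=
      f.continuous.comp ((contMul (op ⦋n + 1⦌)).comp
        ((continuous_fst.comp (continuous_subtype_val.comp continuous_snd)).prodMk
          (s.continuous.comp continuous_fst)))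
    have hF₂cont : Continuous F₂ :=
      H.continuous.comp (continuous_fst.prodMk
        (continuous_snd.comp (continuous_subtype_val.comp continuous_snd)))
    set Φ : (G _⦋n⦌) × U → Y := C₁.piecewise F₁ F₂ with hΦ_def
    have hΦcont : Continuous Φ := Continuous.piecewise hfr hF₁cont hF₂cont
    refine ⟨⟨fun p => Φ (d p.1, Ghat (r' p.1, p.2)),
      hΦcont.comp ((d.continuous.comp continuous_fst).prodMk
        (Ghat.continuous.comp ((r'.continuous.comp continuous_fst).prodMk
          continuous_snd)))⟩, ?_, ?_⟩
    · intro x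
      show Φ (d x, Ghat (r' x, 0)) = f x
      rw [hG0 (r' x)]
      have hmem : ((d x, f₀ (r' x)) : (G _⦋n⦌) × U) ∈ C₁ := rfl
      rw [hΦ_def, Set.piecewise_eq_of_mem C₁ F₁ F₂ hmem]
      show f (r' (r' x) * s (d x)) = f x
      have : r' (r' x) = r' x := by
        show r' x * (s (d (r' x)))⁻¹ = r' x
        rw [hdr', hs1, inv_one, mul_one]
      rw [this, hr'sd]
    · intro a t
      show Φ (d (s a), Ghat (r' (s a), t)) = H (a, t)
      have h1 : Ghat (r' (s a), t) = H₀ (PUnit.unit, t) := by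
        rw [hr's a]
        exact hG1 PUnit.unit t
      rw [h1, hds]
      by_cases ht : t = 0
      · subst ht
        have hmem : ((a, H₀ (PUnit.unit, 0)) : (G _⦋n⦌) × U) ∈ C₁ := rfl
        rw [hΦ_def, Set.piecewise_eq_of_mem C₁ F₁ F₂ hmem]
        show f ((1 : G _⦋n + 1⦌) * s a) = H (a, 0)
        rw [one_mul, hH a]
      · have hmem : ((a, H₀ (PUnit.unit, t)) : (G _⦋n⦌) × U) ∉ C₁ := ht
        rw [hΦ_def, Set.piecewise_eq_of_notMem C₁ F₁ F₂ hmem]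
        rfl
end

section
/- For a simplicial object X in a category with finite limits, and for any i < j, the square with maps s_i : X_{n−1} → X_n, s_{j−1} : X_{n−1} → X_n, s_j : X_n → X_{n+1}, s_i : X_n → X_{n+1} (i.e., s_j ∘ s_i = s_i ∘ s_{j−1}) is a pullback square. -/
universe v u

open CategoryTheory Simplicial

/-- For a simplicial object `X` in a category with finite limits, the commutative square of
degeneracies expressing the simplicial identity `sⱼ ∘ sᵢ = sᵢ ∘ sⱼ₋₁` (for `i < j`, here
written with `i ≤ j` and the square `σᵢ ≫ σ_{j+1} = σⱼ ≫ σ_{i}` with appropriately cast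
indices) is a pullback square. -/
theorem degeneracy_square_isPullback {C : Type u} [Category.{v} C]
    [Limits.HasFiniteLimits C] (X : SimplicialObject C) {n : ℕ}
    (i j : Fin (n + 1)) (H : i ≤ j) :
    IsPullback (X.σ i) (X.σ j) (X.σ j.succ) (X.σ i.castSucc) := by
  have sq : X.σ i ≫ X.σ j.succ = X.σ j ≫ X.σ i.castSucc := (X.σ_comp_σ H).symm
  refine IsPullback.of_isLimit' ⟨sq⟩ ?_
  refine Limits.PullbackCone.IsLimit.mk _ (fun s => s.fst ≫ X.δ i.castSucc) ?_ ?_ ?_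
  · -- fac₁ : lift ≫ σ i = s.fst
    intro s
    have fac2 : (s.fst ≫ X.δ i.castSucc) ≫ X.σ j = s.snd := by
      rw [Category.assoc, ← X.δ_comp_σ_of_le (by simpa using H), ← Category.assoc,
        s.condition, Category.assoc, X.δ_comp_σ_self' rfl,
        Category.comp_id]
    calc (s.fst ≫ X.δ i.castSucc) ≫ X.σ i
        = ((s.fst ≫ X.δ i.castSucc) ≫ X.σ i) ≫ X.σ j.succ ≫ X.δ j.succ.castSucc := by
          rw [X.δ_comp_σ_self, Category.comp_id]
      _ = ((s.fst ≫ X.δ i.castSucc) ≫ X.σ j) ≫ X.σ i.castSucc ≫ X.δ j.succ.castSucc := by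
          simp only [Category.assoc]; rw [← X.σ_comp_σ_assoc H]
      _ = s.snd ≫ X.σ i.castSucc ≫ X.δ j.succ.castSucc := by rw [fac2]
      _ = s.fst ≫ X.σ j.succ ≫ X.δ j.succ.castSucc := by
          rw [← Category.assoc, ← s.condition, Category.assoc]
      _ = s.fst := by rw [X.δ_comp_σ_self, Category.comp_id]
  · -- fac₂ : lift ≫ σ j = s.snd
    intro s
    rw [Category.assoc, ← X.δ_comp_σ_of_le (by simpa using H), ← Category.assoc,
      s.condition, Category.assoc, X.δ_comp_σ_self' rfl,
      Category.comp_id]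
  · -- uniqueness
    intro s m hm₁ _
    rw [← hm₁, Category.assoc, X.δ_comp_σ_self, Category.comp_id]
end

section
/- Let f : Y₁ ×_{Y₀^{[2]}} Y₁ → S¹ be a continuous map, where Y₁ → Y₀^{[2]} is a surjection admitting local sections, satisfying the cocycle condition f(u,v)·f(v,w) = f(u,w) for all triples u,v,w ∈ Y₁ lying over the same point of Y₀^{[2]}. Then the quotient L of Y₁ × S¹ by the relation (u,ξ) ∼ (v,η) iff ξ = η·f(u,v) is a principal S¹-bundle over Y₀^{[2]}. -/
universe u

open unitInterval

namespace BundleGerbeAux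

variable {M Y₀ Y₁ : Type u} [TopologicalSpace M] [TopologicalSpace Y₀] [TopologicalSpace Y₁]
  {q : Y₀ → M} (p : Y₁ → {z : Y₀ × Y₀ // q z.1 = q z.2})
  (f : {uv : Y₁ × Y₁ // p uv.1 = p uv.2} → Circle)

/-- The relation from the statement. -/
def Rel : Y₁ × Circle → Y₁ × Circle → Prop :=
  fun a b => ∃ h : p a.1 = p b.1, a.2 = b.2 * f ⟨(a.1, b.1), h⟩

set_option linter.unusedSectionVars false

lemma grp1 {G : Type*} [CommGroup G] (a b x y : G) :
    a⁻¹ * (b * y) * x = a⁻¹ * b * (x * y) := by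
  rw [mul_assoc, mul_assoc, mul_assoc, mul_comm y x]

lemma grp2 {G : Type*} [CommGroup G] (c b x F : G) :
    (c * x)⁻¹ * b * F = c⁻¹ * b * (x⁻¹ * F) := by
  rw [mul_inv_rev, mul_comm x⁻¹ c⁻¹, mul_assoc c⁻¹, mul_assoc c⁻¹, mul_assoc, mul_assoc,
    mul_left_comm x⁻¹ b F]

lemma grp3 {G : Type*} [CommGroup G] (c x y : G) : c * y * x = c * (x * y) := by
  rw [mul_assoc, mul_comm y x]

lemma grp4 {G : Type*} [CommGroup G] (a b x F : G) :
    (a * x)⁻¹ * (b * (x * F)) = a⁻¹ * b * F := by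
  rw [mul_inv_rev, mul_left_comm b x F, mul_comm x⁻¹ a⁻¹, mul_assoc,
    inv_mul_cancel_left, ← mul_assoc]

lemma f_congr {u u' v v' : Y₁} (h : p u = p v) (h' : p u' = p v')
    (hu : u = u') (hv : v = v') : f ⟨(u, v), h⟩ = f ⟨(u', v'), h'⟩ := by
  subst hu; subst hv; rfl

variable
  (hcocycle : ∀ (u v w : Y₁) (huv : p u = p v) (hvw : p v = p w),
      f ⟨(u, v), huv⟩ * f ⟨(v, w), hvw⟩ = f ⟨(u, w), huv.trans hvw⟩)

include hcocycle

lemma f_one (u : Y₁) (h : p u = p u) : f ⟨(u, u), h⟩ = 1 := by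
  have h2 := hcocycle u u u h h
  have h3 : f ⟨(u, u), h⟩ * f ⟨(u, u), h⟩ = f ⟨(u, u), h⟩ * 1 := by
    rw [mul_one]; exact h2.trans (f_congr p f _ _ rfl rfl)
  exact mul_left_cancel h3

lemma f_symm (u v : Y₁) (h : p u = p v) :
    f ⟨(v, u), h.symm⟩ = (f ⟨(u, v), h⟩)⁻¹ := by
  have h2 := hcocycle u v u h h.symm
  rw [f_one p f hcocycle u (h.trans h.symm)] at h2
  exact eq_inv_of_mul_eq_one_right h2

lemma rel_refl (a : Y₁ × Circle) : Rel p f a a :=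
  ⟨rfl, by rw [f_one p f hcocycle a.1 rfl, mul_one]⟩

lemma rel_symm {a b : Y₁ × Circle} (h : Rel p f a b) : Rel p f b a := by
  obtain ⟨h, e⟩ := h
  refine ⟨h.symm, ?_⟩
  rw [e, mul_assoc, f_symm p f hcocycle a.1 b.1 h, mul_inv_cancel, mul_one]

lemma rel_trans {a b c : Y₁ × Circle} (hab : Rel p f a b) (hbc : Rel p f b c) :
    Rel p f a c := by
  obtain ⟨h1, e1⟩ := hab
  obtain ⟨h2, e2⟩ := hbc
  refine ⟨h1.trans h2, ?_⟩
  rw [e1, e2, ← hcocycle a.1 b.1 c.1 h1 h2]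
  exact grp3 c.2 _ _

lemma rel_of_mk_eq {a b : Y₁ × Circle}
    (h : Quot.mk (Rel p f) a = Quot.mk (Rel p f) b) : Rel p f a b := by
  have hequiv : Equivalence (Rel p f) :=
    ⟨rel_refl p f hcocycle, rel_symm p f hcocycle, rel_trans p f hcocycle⟩
  exact (Equivalence.eqvGen_iff hequiv).mp (Quot.eqvGen_exact h)

end BundleGerbeAux

open BundleGerbeAux in
/-- **From a cocycle to a bundle gerbe line bundle.**
Let `q : Y₀ → M` be a continuous surjection, `Z = Y₀ ×_M Y₀ = Y₀^{[2]}` and let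
`p : Y₁ → Z` be a continuous surjection admitting local sections.  Let
`f : Y₁ ×_Z Y₁ → S¹` be continuous, satisfying the cocycle condition
`f(u,v) · f(v,w) = f(u,w)` for all `u, v, w` lying over the same point of `Z`.
Then the quotient `L` of `Y₁ × S¹` by the relation `(u, ξ) ∼ (v, η) ↔ ξ = η · f(u,v)`
is a principal `S¹`-bundle over `Z`:  the evident circle action on `L` is continuous,
strongly free (there is a continuous "difference" function), and the projection
`L → Z` admits local sections. -/
theorem bundle_gerbe_of_cocycle
    {M Y₀ Y₁ : Type u} [TopologicalSpace M] [TopologicalSpace Y₀] [TopologicalSpace Y₁]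
    (q : Y₀ → M) (hq : Continuous q) (hq_surj : Function.Surjective q)
    (p : Y₁ → {z : Y₀ × Y₀ // q z.1 = q z.2}) (hp : Continuous p)
    (hp_surj : Function.Surjective p)
    (hp_sec : ∀ z, ∃ U : Set {z : Y₀ × Y₀ // q z.1 = q z.2},
      IsOpen U ∧ z ∈ U ∧ ∃ s : U → Y₁, Continuous s ∧ ∀ x : U, p (s x) = x)
    (f : {uv : Y₁ × Y₁ // p uv.1 = p uv.2} → Circle)
    (hf : Continuous f)
    (hcocycle : ∀ (u v w : Y₁) (huv : p u = p v) (hvw : p v = p w),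
      f ⟨(u, v), huv⟩ * f ⟨(v, w), hvw⟩ = f ⟨(u, w), huv.trans hvw⟩) :
    ∃ (π : Quot (fun a b : Y₁ × Circle =>
          ∃ h : p a.1 = p b.1, a.2 = b.2 * f ⟨(a.1, b.1), h⟩) →
        {z : Y₀ × Y₀ // q z.1 = q z.2})
      (act : Quot (fun a b : Y₁ × Circle =>
          ∃ h : p a.1 = p b.1, a.2 = b.2 * f ⟨(a.1, b.1), h⟩) → Circle →
        Quot (fun a b : Y₁ × Circle =>
          ∃ h : p a.1 = p b.1, a.2 = b.2 * f ⟨(a.1, b.1), h⟩)),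
      (∀ y : Y₁ × Circle, π (Quot.mk _ y) = p y.1) ∧
      Continuous π ∧
      (∀ (y : Y₁ × Circle) (g : Circle),
        act (Quot.mk _ y) g = Quot.mk _ (y.1, y.2 * g)) ∧
      Continuous (fun s : (Quot (fun a b : Y₁ × Circle =>
          ∃ h : p a.1 = p b.1, a.2 = b.2 * f ⟨(a.1, b.1), h⟩)) × Circle =>
        act s.1 s.2) ∧
      (∀ l, act l 1 = l) ∧ (∀ l g h, act (act l g) h = act l (g * h)) ∧
      (∀ l g, π (act l g) = π l) ∧
      (∃ d : {y : (Quot (fun a b : Y₁ × Circle =>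
            ∃ h : p a.1 = p b.1, a.2 = b.2 * f ⟨(a.1, b.1), h⟩)) ×
          (Quot (fun a b : Y₁ × Circle =>
            ∃ h : p a.1 = p b.1, a.2 = b.2 * f ⟨(a.1, b.1), h⟩)) // π y.1 = π y.2} →
          Circle, Continuous d ∧
        (∀ y, act y.1.1 (d y) = y.1.2) ∧
        (∀ l g, ∀ h : π l = π (act l g), d ⟨(l, act l g), h⟩ = g)) ∧
      (∀ z, ∃ U : Set {z : Y₀ × Y₀ // q z.1 = q z.2},
        IsOpen U ∧ z ∈ U ∧ ∃ s : U → Quot (fun a b : Y₁ × Circle =>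
          ∃ h : p a.1 = p b.1, a.2 = b.2 * f ⟨(a.1, b.1), h⟩),
          Continuous s ∧ ∀ x : U, π (s x) = x) := by
  classical
  -- the quotient space
  set L := Quot (Rel p f) with hL
  -- the projection
  set π : L → {z : Y₀ × Y₀ // q z.1 = q z.2} :=
    Quot.lift (fun y => p y.1) (fun a b h => h.1) with hπdef
  -- the action
  have act_wd : ∀ (g : Circle) (a b : Y₁ × Circle), Rel p f a b →
      Quot.mk (Rel p f) (a.1, a.2 * g) = Quot.mk (Rel p f) (b.1, b.2 * g) := by
    rintro g a b ⟨h, e⟩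
    exact Quot.sound ⟨h, by rw [e, mul_assoc, mul_comm (f _) g, ← mul_assoc]⟩
  set act : L → Circle → L := fun l g =>
    Quot.lift (fun y => Quot.mk (Rel p f) (y.1, y.2 * g)) (act_wd g) l with hactdef
  -- the difference function on representatives
  set Da : Y₁ × Circle → Y₁ × Circle → Circle := fun a b =>
    if h : p a.1 = p b.1 then a.2⁻¹ * b.2 * f ⟨(a.1, b.1), h⟩ else 1 with hDadef
  have Da_pos : ∀ (a b : Y₁ × Circle) (h : p a.1 = p b.1),
      Da a b = a.2⁻¹ * b.2 * f ⟨(a.1, b.1), h⟩ := by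
    intro a b h; rw [hDadef]; exact dif_pos h
  have Da_right : ∀ (a b b' : Y₁ × Circle), Rel p f b b' → Da a b = Da a b' := by
    rintro a b b' ⟨h, e⟩
    by_cases hab : p a.1 = p b.1
    · rw [Da_pos a b hab, Da_pos a b' (hab.trans h), e, ← hcocycle a.1 b.1 b'.1 hab h]
      exact grp1 a.2 b'.2 _ _
    · simp only [hDadef]
      rw [dif_neg hab, dif_neg (fun hc => hab (hc.trans h.symm))]
  have Da_left : ∀ (a a' b : Y₁ × Circle), Rel p f a a' → Da a b = Da a' b := by
    rintro a a' b ⟨h, e⟩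
    by_cases hab : p a.1 = p b.1
    · have ha'b : p a'.1 = p b.1 := h.symm.trans hab
      rw [Da_pos a b hab, Da_pos a' b ha'b, e, ← hcocycle a'.1 a.1 b.1 h.symm hab,
        f_symm p f hcocycle a.1 a'.1 h]
      exact grp2 a'.2 b.2 _ _
    · simp only [hDadef]
      rw [dif_neg hab, dif_neg (fun hc => hab (h.trans hc))]
  set D : L → L → Circle :=
    Quot.lift (fun a => Quot.lift (Da a) (fun b b' hr => Da_right a b b' hr))
      (fun a a' hr => funext (fun l => Quot.inductionOn l (fun b => Da_left a a' b hr))) with hDdef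
  refine ⟨π, act, fun y => rfl, ?_, fun y g => rfl, ?_, ?_, ?_, fun l g => ?_, ?_, ?_⟩
  · -- continuity of π
    exact continuous_quot_lift _ (hp.comp continuous_fst)
  · -- continuity of the action
    apply isQuotientMap_quot_mk.continuous_lift_prod_left
    show Continuous fun y : (Y₁ × Circle) × Circle => Quot.mk (Rel p f) (y.1.1, y.1.2 * y.2)
    exact continuous_quot_mk.comp
      ((continuous_fst.fst).prodMk ((continuous_fst.snd).mul continuous_snd))
  · -- act l 1 = l
    intro l
    refine Quot.inductionOn (motive := fun l => act l 1 = l) l (fun a => ?_)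
    show Quot.mk (Rel p f) (a.1, a.2 * 1) = Quot.mk (Rel p f) a
    rw [mul_one]
  · -- associativity
    intro l g h
    refine Quot.inductionOn (motive := fun l => act (act l g) h = act l (g * h)) l (fun a => ?_)
    show Quot.mk (Rel p f) (a.1, a.2 * g * h) = Quot.mk (Rel p f) (a.1, a.2 * (g * h))
    rw [mul_assoc]
  · -- π (act l g) = π l
    exact Quot.inductionOn (motive := fun l => π (act l g) = π l) l (fun a => rfl)
  · -- the difference function
    refine ⟨fun y => D y.1.1 y.1.2, ?_, ?_, ?_⟩
    · -- continuity of d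
      rw [continuous_iff_continuousAt]
      intro t
      obtain ⟨U, hUopen, hzU, s, hs_cont, hs_sec⟩ := hp_sec (π t.1.1)
      set g' : Y₁ × Circle → Circle := fun y =>
        if h : p y.1 ∈ U then y.2 * f ⟨(s ⟨p y.1, h⟩, y.1), hs_sec ⟨p y.1, h⟩⟩ else 1
        with hg'def
      have hg'_pos : ∀ (y : Y₁ × Circle) (h : p y.1 ∈ U),
          g' y = y.2 * f ⟨(s ⟨p y.1, h⟩, y.1), hs_sec ⟨p y.1, h⟩⟩ := by
        intro y h; simp only [hg'def]; rw [dif_pos h]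
      have hg'_wd : ∀ a b, Rel p f a b → g' a = g' b := by
        rintro a b ⟨h, e⟩
        by_cases ha : p a.1 ∈ U
        · have hb : p b.1 ∈ U := h ▸ ha
          rw [hg'_pos a ha, hg'_pos b hb, e]
          have hw : s ⟨p a.1, ha⟩ = s ⟨p b.1, hb⟩ := congrArg s (Subtype.ext h)
          have hcongr : f ⟨(s ⟨p a.1, ha⟩, b.1), (hs_sec ⟨p a.1, ha⟩).trans h⟩
              = f ⟨(s ⟨p b.1, hb⟩, b.1), hs_sec ⟨p b.1, hb⟩⟩ := f_congr p f _ _ hw rfl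
          have hc := hcocycle (s ⟨p a.1, ha⟩) a.1 b.1 (hs_sec ⟨p a.1, ha⟩) h
          rw [← hcongr, ← hc]
          exact grp3 b.2 _ _
        · have hb : p b.1 ∉ U := fun hc => ha (h ▸ hc)
          simp only [hg'def]; rw [dif_neg ha, dif_neg hb]
      set χ : L → Circle := Quot.lift g' hg'_wd with hχdef
      have hπcont : Continuous π := continuous_quot_lift _ (hp.comp continuous_fst)
      have hO : IsOpen (π ⁻¹' U) := hUopen.preimage hπcont
      have hO' : IsOpen {y : Y₁ × Circle | p y.1 ∈ U} :=
        hUopen.preimage (hp.comp continuous_fst)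
      have hg'_on : ContinuousOn g' {y : Y₁ × Circle | p y.1 ∈ U} := by
        rw [continuousOn_iff_continuous_restrict]
        have hrestr : Set.domRestrict {y : Y₁ × Circle | p y.1 ∈ U} g' =
            fun y : {y : Y₁ × Circle | p y.1 ∈ U} =>
              y.1.2 * f ⟨(s ⟨p y.1.1, y.2⟩, y.1.1), hs_sec ⟨p y.1.1, y.2⟩⟩ := by
          funext y; exact hg'_pos y.1 y.2
        rw [hrestr]
        refine Continuous.mul (continuous_snd.comp continuous_subtype_val) (hf.comp ?_)
        refine Continuous.subtype_mk (Continuous.prodMk ?_ ?_) _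
        · exact hs_cont.comp (Continuous.subtype_mk
            (hp.comp (continuous_fst.comp continuous_subtype_val)) (fun y => y.2))
        · exact continuous_fst.comp continuous_subtype_val
      have hχ_on : ContinuousOn χ (π ⁻¹' U) := by
        rw [continuousOn_open_iff hO]
        intro t' ht'
        rw [← isQuotientMap_quot_mk.isOpen_preimage]
        have hpre : Quot.mk (Rel p f) ⁻¹' (π ⁻¹' U ∩ χ ⁻¹' t') =
            {y : Y₁ × Circle | p y.1 ∈ U} ∩ g' ⁻¹' t' := rfl
        rw [hpre]
        exact hg'_on.isOpen_inter_preimage hO' ht'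
      set W : Set {y : L × L // π y.1 = π y.2} := {t' | π t'.1.1 ∈ U} with hWdef
      have hWopen : IsOpen W :=
        hUopen.preimage (hπcont.comp (continuous_fst.comp continuous_subtype_val))
      have htW : t ∈ W := hzU
      have heq : ∀ t' ∈ W, D t'.1.1 t'.1.2 = (χ t'.1.1)⁻¹ * χ t'.1.2 := by
        rintro ⟨⟨l₁, l₂⟩, hl⟩ hw
        obtain ⟨a, rfl⟩ := Quot.exists_rep l₁
        obtain ⟨b, rfl⟩ := Quot.exists_rep l₂
        have hab : p a.1 = p b.1 := hl
        have ha : p a.1 ∈ U := hw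
        have hb : p b.1 ∈ U := hab ▸ ha
        show Da a b = (g' a)⁻¹ * g' b
        rw [Da_pos a b hab, hg'_pos a ha, hg'_pos b hb]
        have hw' : s ⟨p a.1, ha⟩ = s ⟨p b.1, hb⟩ := congrArg s (Subtype.ext hab)
        have hcongr : f ⟨(s ⟨p a.1, ha⟩, b.1), (hs_sec ⟨p a.1, ha⟩).trans hab⟩
            = f ⟨(s ⟨p b.1, hb⟩, b.1), hs_sec ⟨p b.1, hb⟩⟩ := f_congr p f _ _ hw' rfl
        have hc := hcocycle (s ⟨p a.1, ha⟩) a.1 b.1 (hs_sec ⟨p a.1, ha⟩) hab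
        rw [← hcongr, ← hc]
        exact (grp4 a.2 b.2 _ _).symm
      have hc1 : ContinuousAt (fun t' : {y : L × L // π y.1 = π y.2} => χ t'.1.1) t := by
        refine (hχ_on.continuousAt (hO.mem_nhds ?_)).comp
          ((continuous_fst.comp continuous_subtype_val).continuousAt)
        exact hzU
      have hc2 : ContinuousAt (fun t' : {y : L × L // π y.1 = π y.2} => χ t'.1.2) t := by
        refine (hχ_on.continuousAt (hO.mem_nhds ?_)).comp
          ((continuous_snd.comp continuous_subtype_val).continuousAt)
        show π t.1.2 ∈ U
        rw [← t.2]; exact hzU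
      refine ContinuousAt.congr (hc1.inv.mul hc2) ?_
      exact Filter.eventually_of_mem (hWopen.mem_nhds htW) (fun t' ht' => (heq t' ht').symm)
    · -- act y.1.1 (d y) = y.1.2
      rintro ⟨⟨l₁, l₂⟩, hy⟩
      obtain ⟨a, rfl⟩ := Quot.exists_rep l₁
      obtain ⟨b, rfl⟩ := Quot.exists_rep l₂
      have hab : p a.1 = p b.1 := hy
      show Quot.mk (Rel p f) (a.1, a.2 * Da a b) = Quot.mk (Rel p f) b
      apply Quot.sound
      refine ⟨hab, ?_⟩
      show a.2 * Da a b = b.2 * f ⟨(a.1, b.1), hab⟩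
      rw [Da_pos a b hab, ← mul_assoc, ← mul_assoc, mul_inv_cancel, one_mul]
    · -- d (l, act l g) = g
      intro l g h
      obtain ⟨a, rfl⟩ := Quot.exists_rep l
      show Da a (a.1, a.2 * g) = g
      rw [Da_pos a (a.1, a.2 * g) rfl]
      show a.2⁻¹ * (a.2 * g) * f ⟨(a.1, a.1), rfl⟩ = g
      rw [f_one p f hcocycle a.1 rfl, mul_one, inv_mul_cancel_left]
  · -- local sections
    intro z
    obtain ⟨U, hUopen, hzU, s, hs_cont, hs_sec⟩ := hp_sec z
    refine ⟨U, hUopen, hzU, fun x => Quot.mk (Rel p f) (s x, 1), ?_, ?_⟩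
    · exact continuous_quot_mk.comp (hs_cont.prodMk continuous_const)
    · intro x
      show p (s x) = x
      exact hs_sec x
end

section
/- Let π : P → M be a numerable principal G-bundle of topological spaces and A ⊆ M a closed subspace such that (M, A) is an NDR pair. Then (P, P|_A) is a G-equivariant NDR pair: there exist a G-invariant map ũ : P → [0,1] with P|_A = ũ⁻¹(0) and a G-equivariant homotopy h̃ : P × I → P with h̃₀ = id, h̃ₜ|_{P|_A} = id for all t, and h̃₁(p) ∈ P|_A whenever ũ(p) < 1. -/
universe u

open unitInterval

variable (G : Type u) [Group G] [TopologicalSpace G] [IsTopologicalGroup G]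

/-- A principal `G`-bundle structure: a continuous map `proj : P → M` with a continuous,
strongly free `G`-action over `M`, admitting local sections. -/
structure PrincipalBundle (M P : Type u) [TopologicalSpace M] [TopologicalSpace P] where
  proj : P → M
  proj_continuous : Continuous proj
  smul : P → G → P
  smul_continuous : Continuous fun q : P × G => smul q.1 q.2
  smul_one : ∀ p, smul p 1 = p
  smul_mul : ∀ p g h, smul (smul p g) h = smul p (g * h)
  proj_smul : ∀ p g, proj (smul p g) = proj p
  stronglyFree : IsHomeomorph fun q : P × G =>
    (⟨(q.1, smul q.1 q.2), (proj_smul q.1 q.2).symm⟩ :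
      {y : P × P // proj y.1 = proj y.2})
  local_sections : ∀ m : M, ∃ U : Set M, IsOpen U ∧ m ∈ U ∧
    ∃ s : U → P, Continuous s ∧ ∀ x : U, proj (s x) = x

/-- A principal bundle is numerable if it admits local sections (equivalently, local
trivializations) over a numerable open cover, i.e. an open cover admitting a subordinate
partition of unity. -/
def PrincipalBundle.Numerable {M P : Type u} [TopologicalSpace M] [TopologicalSpace P]
    (B : PrincipalBundle G M P) : Prop :=
  ∃ (ι : Type u) (V : ι → Set M), (∀ i, IsOpen (V i)) ∧ (⋃ i, V i) = Set.univ ∧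
    (∃ pou : PartitionOfUnity ι M, pou.IsSubordinate V) ∧
    ∀ i, ∃ s : V i → P, Continuous s ∧ ∀ x : V i, B.proj (s x) = x

namespace ENDR

set_option linter.unusedSectionVars false

/-! ### Preliminaries -/

theorem continuous_finset_inf' {X ι : Type*} [TopologicalSpace X] {S : Finset ι}
    (hS : S.Nonempty) {f : ι → X → ℝ} (hf : ∀ i, Continuous (f i)) :
    Continuous fun x => S.inf' hS (fun c => f c x) := by
  rw [continuous_iff_continuousAt]
  intro x
  exact Filter.Tendsto.finset_inf'_nhds_apply hS fun i _ => (hf i).continuousAt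

theorem lipschitz_iInf {K : Type*} [TopologicalSpace K] [CompactSpace K] [Nonempty K] :
    LipschitzWith 1 fun g : C(K, ℝ) => ⨅ s : K, g s := by
  apply LipschitzWith.of_dist_le_mul
  intro g₁ g₂
  have key : ∀ g₁' g₂' : C(K, ℝ), (⨅ s : K, g₁' s) - (⨅ s : K, g₂' s) ≤ dist g₁' g₂' := by
    intro g₁' g₂'
    have hb : BddBelow (Set.range fun s : K => g₁' s) :=
      (isCompact_range (map_continuous g₁')).bddBelow
    have key2 : (⨅ s : K, g₁' s) - dist g₁' g₂' ≤ ⨅ s : K, g₂' s := by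
      refine le_ciInf fun s : K => ?_
      have h1 : (⨅ s : K, g₁' s) ≤ g₁' s := ciInf_le hb s
      have h2 : g₁' s ≤ g₂' s + dist g₁' g₂' := by
        have hd := ContinuousMap.dist_apply_le_dist (f := g₁') (g := g₂') s
        rw [Real.dist_eq] at hd
        have := abs_le.1 hd
        linarith [this.2]
      linarith
    linarith
  rw [NNReal.coe_one, one_mul, Real.dist_eq, abs_le]
  constructor
  · have := key g₂ g₁
    rw [dist_comm] at this
    linarith
  · linarith [key g₁ g₂]

theorem continuous_iInf_param {X K : Type*} [TopologicalSpace X] [TopologicalSpace K]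
    [CompactSpace K] [Nonempty K] {F : X × K → ℝ} (hF : Continuous F) :
    Continuous fun x => ⨅ s : K, F (x, s) := by
  have : (fun x => ⨅ s : K, F (x, s)) =
      (fun g : C(K, ℝ) => ⨅ s : K, g s) ∘ (fun x => (ContinuousMap.mk F hF).curry x) := rfl
  rw [this]
  exact lipschitz_iInf.continuous.comp (map_continuous (ContinuousMap.mk F hF).curry)

theorem iInf_pos_of_continuous {K : Type*} [TopologicalSpace K] [CompactSpace K]
    [Nonempty K] {f : K → ℝ} (hf : Continuous f) (h : ∀ s, 0 < f s) : 0 < ⨅ s, f s := by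
  obtain ⟨s₀, -, hs₀⟩ :=
    isCompact_univ.exists_isMinOn (Set.univ_nonempty) hf.continuousOn
  refine lt_of_lt_of_le (h s₀) (le_ciInf fun s : K => ?_)
  exact hs₀ (Set.mem_univ s)

/-- clamp `min t r` into `[0,1]`. -/
noncomputable def mtimeC (t : I) (r : ℝ) : I :=
  ⟨max 0 (min (↑t) r), le_max_left _ _,
    max_le zero_le_one ((min_le_left _ _).trans t.2.2)⟩

@[simp] lemma mtimeC_zero (r : ℝ) : mtimeC 0 r = 0 := by
  apply Subtype.ext
  show max 0 (min ((0 : I) : ℝ) r) = ((0 : I) : ℝ)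
  rw [show ((0:I):ℝ) = 0 from rfl]
  exact max_eq_left (min_le_left 0 r)

lemma mtimeC_coe_of_nonneg (t : I) (r : ℝ) (h : 0 ≤ r) :
    (mtimeC t r : ℝ) = min (↑t) r := max_eq_right (le_min t.2.1 h)

lemma mtimeC_one (t : I) : mtimeC t 1 = t := by
  apply Subtype.ext
  rw [mtimeC_coe_of_nonneg _ _ zero_le_one]
  exact min_eq_left t.2.2

lemma mtimeC_congr (t : I) {r r' : ℝ} (h : r = r') : mtimeC t r = mtimeC t r' := by rw [h]

/-- Charted bundle data: all the structure extracted from a numerable principal bundle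
that the lifting construction needs. -/
structure CB (G M P : Type u) [Group G] [TopologicalSpace G] [TopologicalSpace M]
    [TopologicalSpace P] where
  proj : P → M
  proj_continuous : Continuous proj
  smul : P → G → P
  smul_continuous : Continuous fun q : P × G => smul q.1 q.2
  smul_mul : ∀ p g h, smul (smul p g) h = smul p (g * h)
  proj_smul : ∀ p g, proj (smul p g) = proj p
  tau : {y : P × P // proj y.1 = proj y.2} → G
  tau_continuous : Continuous tau
  tau_spec : ∀ y, smul y.val.1 (tau y) = y.val.2
  smul_injective : ∀ p : P, Function.Injective (smul p)
  ι : Type u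
  V : ι → Set M
  V_open : ∀ i, IsOpen (V i)
  ρ : ι → C(M, ℝ)
  ρ_nonneg : ∀ i x, 0 ≤ ρ i x
  ρ_lf : LocallyFinite fun i => Function.support fun x => ρ i x
  ρ_pos_mem : ∀ i x, ρ i x ≠ 0 → x ∈ V i
  ρ_cover : ∀ x, ∃ i, 0 < ρ i x
  sec : (i : ι) → ↥(V i) → P
  sec_continuous : ∀ i, Continuous (sec i)
  sec_proj : ∀ i x, proj (sec i x) = ↑x

namespace CB

variable {G M P : Type u} [Group G] [TopologicalSpace G] [IsTopologicalGroup G]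
  [TopologicalSpace M] [TopologicalSpace P]

variable (D : CB G M P)

lemma tau_mul (a b : P) (h : D.proj a = D.proj b) (g : G) :
    D.tau ⟨(a, D.smul b g), by rw [D.proj_smul]; exact h⟩ = D.tau ⟨(a, b), h⟩ * g := by
  apply D.smul_injective a
  rw [D.tau_spec ⟨(a, D.smul b g), _⟩, ← D.smul_mul, D.tau_spec ⟨(a, b), h⟩]

variable (k : C(M × I, M))

/-- affine parametrization of the `l`-th of `n+1` subintervals of `I`. -/
noncomputable def aff (n : ℕ) (l : Fin (n+1)) (s : I) : I := by
  refine ⟨((l : ℝ) + s) / (n+1), ?_, ?_⟩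
  · have hn : (0:ℝ) < (n:ℝ) + 1 := by positivity
    exact div_nonneg (add_nonneg (Nat.cast_nonneg _) s.2.1) hn.le
  · have hn : (0:ℝ) < (n:ℝ) + 1 := by positivity
    rw [div_le_one hn]
    have h1 : ((l : ℕ) : ℝ) + 1 ≤ (n : ℝ) + 1 := by exact_mod_cast Nat.succ_le_of_lt l.2
    have := s.2.2
    linarith

lemma aff_continuous (n : ℕ) (l : Fin (n+1)) : Continuous fun s : I => aff n l s := by
  apply Continuous.subtype_mk
  exact (continuous_const.add continuous_subtype_val).div_const _

/-- per-subinterval infimum -/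
noncomputable def wl (n : ℕ) (i : D.ι) (l : Fin (n+1)) : M → ℝ :=
  fun x => ⨅ s : I, D.ρ i (k (x, aff n l s))

lemma wl_continuous (n : ℕ) (i : D.ι) (l : Fin (n+1)) : Continuous (wl D k n i l) := by
  show Continuous fun x => ⨅ s : I, D.ρ i (k (x, aff n l s))
  apply continuous_iInf_param (F := fun z : M × I => D.ρ i (k (z.1, aff n l z.2)))
  exact (map_continuous (D.ρ i)).comp <| (map_continuous k).comp
    (continuous_fst.prodMk ((aff_continuous n l).comp continuous_snd))

lemma wl_nonneg (n : ℕ) (i : D.ι) (l : Fin (n+1)) (x : M) : 0 ≤ wl D k n i l x :=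
  Real.iInf_nonneg fun s => D.ρ_nonneg _ _

lemma wl_le (n : ℕ) (i : D.ι) (l : Fin (n+1)) (x : M) (s : I) :
    wl D k n i l x ≤ D.ρ i (k (x, aff n l s)) := by
  refine ciInf_le ⟨0, ?_⟩ s
  rintro y ⟨s', rfl⟩
  exact D.ρ_nonneg _ _

/-- The basic family measuring adaptedness of the chart sequence `c` to `k` over the
`(n+1)`-fold subdivision of `I`. -/
noncomputable def w (n : ℕ) (c : Fin (n+1) → D.ι) : M → ℝ :=
  fun x => Finset.univ.inf' Finset.univ_nonempty (fun l => wl D k n (c l) l x)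

lemma w_continuous (n : ℕ) (c : Fin (n+1) → D.ι) : Continuous (w D k n c) :=
  continuous_finset_inf' _ fun l => wl_continuous D k n (c l) l

lemma w_nonneg (n : ℕ) (c : Fin (n+1) → D.ι) (x : M) : 0 ≤ w D k n c x := by
  rw [w, Finset.le_inf'_iff]
  exact fun l _ => wl_nonneg D k n (c l) l x

lemma w_le (n : ℕ) (c : Fin (n+1) → D.ι) (x : M) (l : Fin (n+1)) :
    w D k n c x ≤ wl D k n (c l) l x :=
  Finset.inf'_le _ (Finset.mem_univ l)

/-- The set of basepoints over which the chart sequence `c` is valid for `k`. -/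
def good (n : ℕ) (c : Fin (n+1) → D.ι) : Set M :=
  {x | ∀ (l : Fin (n+1)) (t : I), (l : ℝ) / (n+1) ≤ ↑t → (t : ℝ) ≤ ((l : ℝ) + 1) / (n+1) →
    k (x, t) ∈ D.V (c l)}

lemma w_pos_good (n : ℕ) (c : Fin (n+1) → D.ι) (x : M) (hw : 0 < w D k n c x) :
    x ∈ good D k n c := by
  intro l t hlo hhi
  have hn : (0:ℝ) < (n:ℝ) + 1 := by positivity
  set s : ℝ := ((n:ℝ)+1) * ↑t - (l:ℝ) with hs
  have hs0 : 0 ≤ s := by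
    have := (div_le_iff₀' hn).1 hlo
    simp only [hs]
    nlinarith
  have hs1 : s ≤ 1 := by
    have := (le_div_iff₀' hn).1 hhi
    simp only [hs]
    nlinarith
  have haff : aff n l ⟨s, hs0, hs1⟩ = t := by
    apply Subtype.ext
    show ((l : ℝ) + s) / ((n:ℝ)+1) = ↑t
    field_simp [hs]
    linarith
  have h1 : 0 < wl D k n (c l) l x := lt_of_lt_of_le hw (w_le D k n c x l)
  have h2 : 0 < D.ρ (c l) (k (x, t)) := by
    rw [← haff]
    exact lt_of_lt_of_le h1 (wl_le D k n (c l) l x _)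
  exact D.ρ_pos_mem _ _ h2.ne'


section Ref

variable (A : Set M)

theorem exists_ref (hkA : ∀ a ∈ A, ∀ t : I, k (a, t) = a)
    (n : ℕ) (c : Fin (n+1) → D.ι) :
    ∃ R : C(↥(good D k n c) × I, P),
      (∀ x t, D.proj (R (x, t)) = k (↑x, t)) ∧
      (∀ (x : ↥(good D k n c)), (↑x : M) ∈ A → ∀ t, R (x, t) = R (x, 0)) := by
  classical
  have hNpos : (0:ℝ) < (n:ℝ) + 1 := by positivity
  set al : ℕ → ℝ := fun l => min ((l:ℝ)/((n:ℝ)+1)) 1 with hal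
  have al_nonneg : ∀ l, 0 ≤ al l := fun l => le_min (by positivity) zero_le_one
  have al_le_one : ∀ l, al l ≤ 1 := fun l => min_le_right _ _
  have al_mono : ∀ l, al l ≤ al (l+1) := by
    intro l
    refine min_le_min ?_ le_rfl
    gcongr
    push_cast
    linarith
  have al_zero : al 0 = 0 := by simp [hal]
  have al_ge : ∀ m : ℕ, n + 1 ≤ m → al m = 1 := by
    intro m hm
    apply min_eq_right
    rw [le_div_iff₀ hNpos, one_mul]
    exact_mod_cast hm
  -- clamped times
  set cl : ℕ → I → I := fun l t =>
    ⟨max (al l) (min (↑t) (al (l+1))),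
      le_trans (al_nonneg l) (le_max_left _ _),
      max_le (al_le_one l) (le_trans (min_le_right _ _) (al_le_one _))⟩ with hcl
  have clamp_lo : ∀ l t, al l ≤ ↑(cl l t) := fun l t => le_max_left _ _
  have clamp_hi : ∀ l t, ↑(cl l t) ≤ al (l+1) :=
    fun l t => max_le (al_mono l) (min_le_right _ _)
  set atI : ℕ → I := fun l => ⟨al l, al_nonneg l, al_le_one l⟩ with hatI
  set cf : ℕ → Fin (n+1) := fun l => ⟨min l n, by omega⟩ with hcf
  -- chart membership
  have memV : ∀ (x : ↥(good D k n c)) (l : ℕ) (t : I), al l ≤ ↑t → ↑t ≤ al (l+1) →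
      k (↑x, t) ∈ D.V (c (cf l)) := by
    intro x l t h1 h2
    by_cases hl : l ≤ n
    · have hmin : cf l = ⟨l, by omega⟩ := by
        simp only [hcf]
        exact Fin.mk_eq_mk.2 (min_eq_left hl)
      have hln : (l:ℝ) ≤ (n:ℝ) := by exact_mod_cast hl
      have hall : al l = (l:ℝ)/((n:ℝ)+1) := by
        apply min_eq_left
        rw [div_le_one hNpos]
        linarith
      have hall1 : al (l+1) = ((l:ℝ)+1)/((n:ℝ)+1) := by
        have hc : ((l+1 : ℕ):ℝ) = (l:ℝ)+1 := by push_cast; ring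
        show min (((l+1:ℕ):ℝ)/((n:ℝ)+1)) 1 = ((l:ℝ)+1)/((n:ℝ)+1)
        rw [hc]
        apply min_eq_left
        rw [div_le_one hNpos]
        linarith
      rw [hmin]
      refine x.2 ⟨l, by omega⟩ t ?_ ?_
      · show ((⟨l, by omega⟩ : Fin (n+1)) : ℝ) / ((n:ℝ)+1) ≤ ↑t
        have hv : ((⟨l, by omega⟩ : Fin (n+1)) : ℝ) = (l:ℝ) := by norm_cast
        rw [hv, ← hall]
        exact h1
      · show (t : ℝ) ≤ (((⟨l, by omega⟩ : Fin (n+1)) : ℝ) + 1) / ((n:ℝ)+1)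
        have hv : ((⟨l, by omega⟩ : Fin (n+1)) : ℝ) = (l:ℝ) := by norm_cast
        rw [hv, ← hall1]
        exact h2
    · push_neg at hl
      have ht1 : (↑t : ℝ) = 1 := le_antisymm t.2.2 (by rw [← al_ge l hl]; exact h1)
      have hcfl : cf l = ⟨n, by omega⟩ := by
        simp only [hcf]
        exact Fin.mk_eq_mk.2 (min_eq_right (by omega))
      rw [hcfl]
      refine x.2 ⟨n, by omega⟩ t ?_ ?_
      · show ((⟨n, by omega⟩ : Fin (n+1)) : ℝ) / ((n:ℝ)+1) ≤ ↑t
        have hv : ((⟨n, by omega⟩ : Fin (n+1)) : ℝ) = (n:ℝ) := by norm_cast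
        rw [hv, ht1, div_le_one hNpos]
        linarith
      · show (t : ℝ) ≤ (((⟨n, by omega⟩ : Fin (n+1)) : ℝ) + 1) / ((n:ℝ)+1)
        have hv : ((⟨n, by omega⟩ : Fin (n+1)) : ℝ) = (n:ℝ) := by norm_cast
        rw [hv, ht1, le_div_iff₀ hNpos, one_mul]
  -- the inductive construction of partial reference lifts
  have main : ∀ l : ℕ, ∃ R : C(↥(good D k n c) × I, P),
      (∀ x t, D.proj (R (x, t)) = k (↑x, mtimeC t (al (l+1)))) ∧
      (∀ x : ↥(good D k n c), (↑x : M) ∈ A → ∀ t, R (x, t) = R (x, 0)) := by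
    intro l
    induction l with
    | zero =>
      have hmem : ∀ (z : ↥(good D k n c) × I), k (↑z.1, cl 0 z.2) ∈ D.V (c (cf 0)) :=
        fun z => memV z.1 0 (cl 0 z.2) (clamp_lo 0 z.2) (clamp_hi 0 z.2)
      refine ⟨⟨fun z => D.sec (c (cf 0)) ⟨k (↑z.1, cl 0 z.2), hmem z⟩, ?_⟩, ?_, ?_⟩
      · apply (D.sec_continuous _).comp
        apply Continuous.subtype_mk
        apply (map_continuous k).comp
        refine (continuous_subtype_val.comp continuous_fst).prodMk ?_
        apply Continuous.subtype_mk
        exact continuous_const.max ((continuous_subtype_val.comp continuous_snd).min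
          continuous_const)
      · intro x t
        simp only [ContinuousMap.coe_mk]
        rw [D.sec_proj]
        show k (↑x, cl 0 t) = k (↑x, mtimeC t (al 1))
        have hcm : cl 0 t = mtimeC t (al 1) := by
          apply Subtype.ext
          show max (al 0) (min (↑t) (al 1)) = max 0 (min (↑t) (al 1))
          rw [al_zero]
        rw [hcm]
      · intro x hx t
        simp only [ContinuousMap.coe_mk]
        apply congrArg
        apply Subtype.ext
        show k (↑x, cl 0 t) = k (↑x, cl 0 0)
        rw [hkA ↑x hx, hkA ↑x hx]
    | succ l ih =>
      obtain ⟨R, hR1, hR2⟩ := ih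
      have hmem2 : ∀ (z : ↥(good D k n c) × I),
          k (↑z.1, cl (l+1) z.2) ∈ D.V (c (cf (l+1))) :=
        fun z => memV z.1 (l+1) (cl (l+1) z.2) (clamp_lo _ z.2) (clamp_hi _ z.2)
      have hmemat : ∀ (x : ↥(good D k n c)),
          k (↑x, atI (l+1)) ∈ D.V (c (cf (l+1))) :=
        fun x => memV x (l+1) (atI (l+1)) le_rfl (al_mono (l+1))
      -- the new section pieces
      set sjoint : ↥(good D k n c) → P :=
        fun x => D.sec (c (cf (l+1))) ⟨k (↑x, atI (l+1)), hmemat x⟩ with hsjoint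
      set smap : ↥(good D k n c) × I → P :=
        fun z => D.sec (c (cf (l+1))) ⟨k (↑z.1, cl (l+1) z.2), hmem2 z⟩ with hsmap
      have hmt_at : mtimeC (atI (l+1)) (al (l+1)) = atI (l+1) := by
        apply Subtype.ext
        rw [mtimeC_coe_of_nonneg _ _ (al_nonneg _)]
        exact min_self _
      have pf : ∀ x : ↥(good D k n c),
          D.proj (sjoint x) = D.proj (R (x, atI (l+1))) := by
        intro x
        rw [hR1 x (atI (l+1)), hmt_at]
        exact D.sec_proj _ _
      refine ⟨⟨fun z => if (↑z.2 : ℝ) ≤ al (l+1) then R z else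
        D.smul (smap z) (D.tau ⟨(sjoint z.1, R (z.1, atI (l+1))), pf z.1⟩), ?_⟩, ?_, ?_⟩
      · apply Continuous.if_le
        · exact R.continuous
        · have hsmapc : Continuous smap := by
            apply (D.sec_continuous _).comp
            apply Continuous.subtype_mk
            apply (map_continuous k).comp
            refine (continuous_subtype_val.comp continuous_fst).prodMk ?_
            apply Continuous.subtype_mk
            exact continuous_const.max ((continuous_subtype_val.comp continuous_snd).min
              continuous_const)
          have hsjointc : Continuous sjoint := by
            apply (D.sec_continuous _).comp
            apply Continuous.subtype_mk
            apply (map_continuous k).comp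
            exact continuous_subtype_val.prodMk continuous_const
          have htauc : Continuous fun z : ↥(good D k n c) × I =>
              D.tau ⟨(sjoint z.1, R (z.1, atI (l+1))), pf z.1⟩ := by
            apply D.tau_continuous.comp
            apply Continuous.subtype_mk
            exact (hsjointc.comp continuous_fst).prodMk
              (R.continuous.comp (continuous_fst.prodMk continuous_const))
          exact D.smul_continuous.comp (hsmapc.prodMk htauc)
        · exact continuous_subtype_val.comp continuous_snd
        · exact continuous_const
        · -- boundary agreement
          rintro ⟨x, t⟩ hb
          show R (x, t) = D.smul (smap (x, t)) _
          have htat : t = atI (l+1) := Subtype.ext hb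
          have hclat : cl (l+1) t = atI (l+1) := by
            apply Subtype.ext
            show max (al (l+1)) (min (↑t) (al (l+2))) = al (l+1)
            rw [htat]
            show max (al (l+1)) (min (al (l+1)) (al (l+2))) = al (l+1)
            rw [min_eq_left (al_mono (l+1)), max_self]
          have hsm : smap (x, t) = sjoint x := by
            simp only [hsmap, hsjoint]
            apply congrArg
            apply Subtype.ext
            show k (↑x, cl (l+1) t) = k (↑x, atI (l+1))
            rw [hclat]
          rw [hsm, D.tau_spec ⟨(sjoint x, R (x, atI (l+1))), pf x⟩, htat]
      · -- projection invariant
        rintro x t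
        simp only [ContinuousMap.coe_mk]
        by_cases h : (↑t : ℝ) ≤ al (l+1)
        · rw [if_pos h, hR1]
          have hcm : mtimeC t (al (l+1)) = mtimeC t (al (l+1+1)) := by
            apply Subtype.ext
            show max 0 (min (↑t) (al (l+1))) = max 0 (min (↑t) (al (l+1+1)))
            rw [min_eq_left h, min_eq_left (h.trans (al_mono (l+1)))]
          rw [hcm]
        · rw [if_neg h, D.proj_smul]
          simp only [hsmap]
          rw [D.sec_proj]
          show k (↑x, cl (l+1) t) = k (↑x, mtimeC t (al (l+1+1)))
          have hcm : cl (l+1) t = mtimeC t (al (l+1+1)) := by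
            apply Subtype.ext
            show max (al (l+1)) (min (↑t) (al (l+2))) = max 0 (min (↑t) (al (l+2)))
            push_neg at h
            have hm : al (l+1) ≤ min (↑t) (al (l+2)) := le_min h.le (al_mono (l+1))
            rw [max_eq_right hm, max_eq_right ((al_nonneg (l+1)).trans hm)]
          rw [hcm]
      · -- A-constancy
        intro x hx t
        have h0 : (((0 : I)) : ℝ) ≤ al (l+1) := al_nonneg (l+1)
        simp only [ContinuousMap.coe_mk]
        rw [if_pos h0]
        by_cases h : (↑t : ℝ) ≤ al (l+1)
        · rw [if_pos h]
          exact hR2 x hx t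
        · rw [if_neg h]
          have e1 : smap (x, t) = sjoint x := by
            simp only [hsmap, hsjoint]
            apply congrArg
            apply Subtype.ext
            show k (↑x, cl (l+1) t) = k (↑x, atI (l+1))
            rw [hkA ↑x hx, hkA ↑x hx]
          have e2 : R (x, atI (l+1)) = R (x, 0) := hR2 x hx _
          have pf' : D.proj (sjoint x) = D.proj (R (x, 0)) := e2 ▸ pf x
          have e3 : (⟨(sjoint x, R (x, atI (l+1))), pf x⟩ :
              {y : P × P // D.proj y.1 = D.proj y.2}) = ⟨(sjoint x, R (x, 0)), pf'⟩ :=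
            Subtype.ext (Prod.ext rfl e2)
          rw [e1, e3, D.tau_spec ⟨(sjoint x, R (x, 0)), pf'⟩]
  obtain ⟨R, hR1, hR2⟩ := main n
  refine ⟨R, fun x t => ?_, hR2⟩
  rw [hR1, al_ge (n+1) le_rfl, mtimeC_one]

/-! ### Tube lemma, local finiteness and covering for `w` -/

lemma tube (x₀ : M) : ∃ N ∈ nhds x₀, ∃ F : Set D.ι, F.Finite ∧
    ∀ x ∈ N, ∀ t : I, ∀ i, D.ρ i (k (x, t)) ≠ 0 → i ∈ F := by
  classical
  have H : ∀ t : I, ∃ O : Set M, IsOpen O ∧ k (x₀, t) ∈ O ∧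
      {i | ((Function.support fun y => D.ρ i y) ∩ O).Nonempty}.Finite := by
    intro t
    obtain ⟨W, hW, hWf⟩ := D.ρ_lf (k (x₀, t))
    refine ⟨interior W, isOpen_interior, mem_interior_iff_mem_nhds.2 hW, ?_⟩
    apply hWf.subset
    rintro i ⟨y, hy1, hy2⟩
    exact ⟨y, hy1, interior_subset hy2⟩
  choose O hOopen hOmem hOfin using H
  have hcpt : IsCompact ({x₀} ×ˢ (Set.univ : Set I)) := isCompact_singleton.prod isCompact_univ
  have hcov : ({x₀} ×ˢ (Set.univ : Set I)) ⊆ ⋃ t : I, (⇑k) ⁻¹' (O t) := by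
    rintro ⟨x, t⟩ ⟨hx, -⟩
    rcases hx with rfl
    exact Set.mem_iUnion.2 ⟨t, hOmem t⟩
  obtain ⟨T, hT⟩ := hcpt.elim_finite_subcover (fun t => (⇑k) ⁻¹' (O t))
    (fun t => (hOopen t).preimage (map_continuous k)) hcov
  have hbig : IsOpen (⋃ t ∈ T, (⇑k) ⁻¹' (O t)) :=
    isOpen_biUnion fun t _ => (hOopen t).preimage (map_continuous k)
  obtain ⟨u, v, hu, hv, hxu, hvI, huv⟩ :=
    generalized_tube_lemma isCompact_singleton isCompact_univ hbig hT
  refine ⟨u, hu.mem_nhds (hxu rfl), ⋃ t ∈ T, {i | ((Function.support fun y => D.ρ i y) ∩ O t).Nonempty}, Set.Finite.biUnion T.finite_toSet (fun t _ => hOfin t), ?_⟩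
  intro x hx t i hi
  have hmem : (x, t) ∈ ⋃ t' ∈ T, (⇑k) ⁻¹' (O t') := huv ⟨hx, hvI trivial⟩
  obtain ⟨t', ht', hmem'⟩ := Set.mem_iUnion₂.1 hmem
  apply Set.mem_biUnion ht'
  exact ⟨k (x, t), hi, hmem'⟩

lemma w_lf (n : ℕ) : LocallyFinite fun c : Fin (n+1) → D.ι => Function.support (w D k n c) := by
  intro x₀
  obtain ⟨N, hN, F, hFfin, hF⟩ := tube D k x₀
  refine ⟨N, hN, ?_⟩
  refine (Set.Finite.pi (fun _ : Fin (n+1) => hFfin)).subset ?_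
  rintro c ⟨x, hx1, hx2⟩
  intro l _
  have hwpos : 0 < w D k n c x := lt_of_le_of_ne (w_nonneg D k n c x) (Ne.symm hx1)
  have h1 : 0 < wl D k n (c l) l x := lt_of_lt_of_le hwpos (w_le D k n c x l)
  have h2 : 0 < D.ρ (c l) (k (x, aff n l 0)) := lt_of_lt_of_le h1 (wl_le D k n (c l) l x 0)
  exact hF x hx2 (aff n l 0) (c l) h2.ne'

lemma w_cover (x : M) : ∃ n, ∃ c : Fin (n+1) → D.ι, 0 < w D k n c x := by
  classical
  set Oi : D.ι → Set I := fun i => {t : I | 0 < D.ρ i (k (x, t))} with hOi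
  have hOopen : ∀ i, IsOpen (Oi i) := by
    intro i
    apply isOpen_lt continuous_const
    exact (map_continuous (D.ρ i)).comp ((map_continuous k).comp (Continuous.prodMk_right x))
  have hcov : (Set.univ : Set I) ⊆ ⋃ i, Oi i := by
    intro t _
    obtain ⟨i, hi⟩ := D.ρ_cover (k (x, t))
    exact Set.mem_iUnion.2 ⟨i, hi⟩
  obtain ⟨δ, hδ, hball⟩ := lebesgue_number_lemma_of_metric isCompact_univ hOopen hcov
  obtain ⟨n, hn⟩ := exists_nat_gt (1/δ)
  have hNpos : (0:ℝ) < (n:ℝ)+1 := by positivity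
  have hδN : 1/((n:ℝ)+1) < δ := by
    rw [div_lt_iff₀ hNpos]
    rw [div_lt_iff₀ hδ] at hn
    nlinarith
  set mid : Fin (n+1) → I := fun l =>
    ⟨((l:ℝ)+2⁻¹)/((n:ℝ)+1), by
      constructor
      · positivity
      · rw [div_le_one hNpos]
        have h1 : ((l : ℕ) : ℝ) + 1 ≤ (n : ℝ) + 1 := by exact_mod_cast Nat.succ_le_of_lt l.2
        norm_num
        linarith⟩ with hmid
  have hmempt : ∀ l : Fin (n+1), ∃ i, Metric.ball (mid l) δ ⊆ Oi i :=
    fun l => hball (mid l) trivial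
  choose ci hci using hmempt
  refine ⟨n, ci, ?_⟩
  rw [w, Finset.lt_inf'_iff]
  intro l _
  have hpos : ∀ s : I, 0 < D.ρ (ci l) (k (x, aff n l s)) := by
    intro s
    apply hci l
    show dist (aff n l s) (mid l) < δ
    rw [Subtype.dist_eq, Real.dist_eq]
    show |((l:ℝ) + ↑s)/((n:ℝ)+1) - ((l:ℝ)+2⁻¹)/((n:ℝ)+1)| < δ
    rw [div_sub_div_same]
    have he : (l:ℝ) + ↑s - ((l:ℝ)+2⁻¹) = ↑s - 2⁻¹ := by ring
    rw [he, abs_div]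
    have h1 : |(↑s : ℝ) - 2⁻¹| ≤ 2⁻¹ := by
      rw [abs_le]
      constructor
      · have := s.2.1; linarith
      · have := s.2.2; linarith
    have h2 : |(n:ℝ)+1| = (n:ℝ)+1 := abs_of_pos hNpos
    rw [h2]
    calc |(↑s:ℝ) - 2⁻¹| / ((n:ℝ)+1) ≤ 2⁻¹/((n:ℝ)+1) := by gcongr
    _ < 1/((n:ℝ)+1) := by gcongr <;> norm_num
    _ < δ := hδN
  show 0 < wl D k n (ci l) l x
  apply iInf_pos_of_continuous _ hpos
  exact (map_continuous (D.ρ (ci l))).comp ((map_continuous k).comp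
    ((continuous_const).prodMk (aff_continuous n l)))

/-! ### Disjointization -/

open scoped Classical in
noncomputable def rest (n : ℕ) (S : Finset (Fin (n+1) → D.ι)) : M → ℝ :=
  fun x => ∑ᶠ c, if c ∈ S then 0 else w D k n c x

lemma rest_supp_sub (n : ℕ) (S : Finset (Fin (n+1) → D.ι)) [∀ c, Decidable (c ∈ S)] (c : Fin (n+1) → D.ι) :
    (Function.support fun x => if c ∈ S then 0 else w D k n c x) ⊆
      Function.support (w D k n c) := by
  intro x hx
  by_cases h : c ∈ S
  · simp [h] at hx
  · simpa [h] using hx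

lemma rest_nonneg (n : ℕ) (S : Finset (Fin (n+1) → D.ι)) (x : M) : 0 ≤ rest D k n S x := by
  classical
  unfold rest
  apply finsum_nonneg
  intro c
  by_cases h : c ∈ S
  · simp [h]
  · simpa [h] using w_nonneg D k n c x

lemma rest_continuous (n : ℕ) (S : Finset (Fin (n+1) → D.ι)) : Continuous (rest D k n S) := by
  classical
  unfold rest
  apply continuous_finsum
  · intro c
    by_cases h : c ∈ S
    · simpa [h] using continuous_const
    · simpa [h] using w_continuous D k n c
  · exact (w_lf D k n).subset (rest_supp_sub D k n S)

lemma w_le_rest (n : ℕ) (S : Finset (Fin (n+1) → D.ι)) (x : M) (c : Fin (n+1) → D.ι)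
    (hc : c ∉ S) : w D k n c x ≤ rest D k n S x := by
  classical
  have hfin : (Function.support fun c' => if c' ∈ S then 0 else w D k n c' x).Finite := by
    apply Set.Finite.subset ((w_lf D k n).point_finite x)
    intro c' hc'
    by_cases h : c' ∈ S
    · simp [h] at hc'
    · simpa [h, Function.mem_support] using hc'
  have := single_le_finsum c hfin (fun c' => by
    by_cases h : c' ∈ S
    · simp [h]
    · simpa [h] using w_nonneg D k n c' x)
  unfold rest
  simpa [hc] using this

/-- Index type of pieces: finsets of chart-sequences of fixed cardinality `s+1`. -/
def SIdx (n s : ℕ) : Type u := {S : Finset (Fin (n+1) → D.ι) // S.card = s + 1}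

lemma sidx_nonempty {n s : ℕ} (sg : SIdx D n s) : sg.1.Nonempty :=
  Finset.card_pos.1 (by rw [sg.2]; omega)

noncomputable def dd (n s : ℕ) (sg : SIdx D n s) : M → ℝ :=
  fun x => max 0 (sg.1.inf' (sidx_nonempty D sg) (fun c => w D k n c x) - rest D k n sg.1 x)

lemma dd_nonneg (n s : ℕ) (sg : SIdx D n s) (x : M) : 0 ≤ dd D k n s sg x := le_max_left _ _

lemma dd_continuous (n s : ℕ) (sg : SIdx D n s) : Continuous (dd D k n s sg) := by
  unfold dd
  exact continuous_const.max ((continuous_finset_inf' (sidx_nonempty D sg)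
    (fun c => w_continuous D k n c)).sub (rest_continuous D k n sg.1))

lemma dd_pos (n s : ℕ) (sg : SIdx D n s) (x : M) (hx : 0 < dd D k n s sg x) :
    rest D k n sg.1 x < sg.1.inf' (sidx_nonempty D sg) (fun c => w D k n c x) := by
  by_contra hy
  push_neg at hy
  have : dd D k n s sg x = 0 := max_eq_left (by linarith)
  rw [this] at hx
  exact lt_irrefl 0 hx

lemma dd_eq (n s : ℕ) (sg : SIdx D n s) (x : M) : dd D k n s sg x =
    max 0 (sg.1.inf' (sidx_nonempty D sg) (fun c => w D k n c x) - rest D k n sg.1 x) := rfl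

lemma dd_pos_w (n s : ℕ) (sg : SIdx D n s) (x : M) (hx : 0 < dd D k n s sg x) :
    ∀ c ∈ sg.1, 0 < w D k n c x := by
  intro c hc
  have h1 := dd_pos D k n s sg x hx
  have h2 : sg.1.inf' (sidx_nonempty D sg) (fun c => w D k n c x) ≤ w D k n c x :=
    Finset.inf'_le _ hc
  have h3 := rest_nonneg D k n sg.1 x
  linarith

lemma dd_disjoint (n s : ℕ) (sg sg' : SIdx D n s) (hne : sg ≠ sg') (x : M)
    (hx : 0 < dd D k n s sg x) (hx' : 0 < dd D k n s sg' x) : False := by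
  have hSne : sg.1 ≠ sg'.1 := fun h => hne (Subtype.ext h)
  have h1 : ∃ c ∈ sg.1, c ∉ sg'.1 := by
    by_contra hsub
    push_neg at hsub
    exact hSne (Finset.eq_of_subset_of_card_le (fun c hc => hsub c hc)
      (le_of_eq (by rw [sg.2, sg'.2])))
  have h2 : ∃ c ∈ sg'.1, c ∉ sg.1 := by
    by_contra hsub
    push_neg at hsub
    exact hSne.symm (Finset.eq_of_subset_of_card_le (fun c hc => hsub c hc)
      (le_of_eq (by rw [sg'.2, sg.2])))
  obtain ⟨c1, hc1, hc1'⟩ := h1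
  obtain ⟨c2, hc2', hc2⟩ := h2
  have e1 : w D k n c2 x ≤ rest D k n sg.1 x := w_le_rest D k n sg.1 x c2 hc2
  have e2 : w D k n c1 x ≤ rest D k n sg'.1 x := w_le_rest D k n sg'.1 x c1 hc1'
  have e3 := (dd_pos D k n s sg x hx).trans_le (Finset.inf'_le _ hc1)
  have e4 := (dd_pos D k n s sg' x hx').trans_le (Finset.inf'_le _ hc2')
  linarith

noncomputable def chart {n s : ℕ} (sg : SIdx D n s) : Fin (n+1) → D.ι :=
  (sidx_nonempty D sg).choose

lemma chart_mem {n s : ℕ} (sg : SIdx D n s) : chart D sg ∈ sg.1 :=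
  (sidx_nonempty D sg).choose_spec

lemma dd_pos_good (n s : ℕ) (sg : SIdx D n s) (x : M) (hx : 0 < dd D k n s sg x) :
    x ∈ good D k n (chart D sg) :=
  w_pos_good D k n _ x (dd_pos_w D k n s sg x hx _ (chart_mem D sg))

lemma dd_lf (n s : ℕ) :
    LocallyFinite fun sg : SIdx D n s => Function.support (dd D k n s sg) := by
  intro x₀
  obtain ⟨N, hN, hfin⟩ := w_lf D k n x₀
  refine ⟨N, hN, ?_⟩
  set C' : Finset (Fin (n+1) → D.ι) := hfin.toFinset with hC'
  have hsub : {sg : SIdx D n s | (Function.support (dd D k n s sg) ∩ N).Nonempty} ⊆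
      Subtype.val ⁻¹' {S : Finset (Fin (n+1) → D.ι) | S ⊆ C'} := by
    rintro sg ⟨x, hx1, hx2⟩
    intro c hc
    have hdd : 0 < dd D k n s sg x := lt_of_le_of_ne (dd_nonneg D k n s sg x) (Ne.symm hx1)
    have hw : 0 < w D k n c x := dd_pos_w D k n s sg x hdd c hc
    rw [hC', Set.Finite.mem_toFinset]
    exact ⟨x, hw.ne', hx2⟩
  apply Set.Finite.subset _ hsub
  apply Set.Finite.preimage (Set.injOn_of_injective Subtype.val_injective)
  have : {S : Finset (Fin (n+1) → D.ι) | S ⊆ C'} = ↑C'.powerset := by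
    ext S
    simp [Finset.mem_powerset]
  rw [this]
  exact C'.powerset.finite_toSet

noncomputable def ff (n s : ℕ) : M → ℝ := fun x => ∑ᶠ sg : SIdx D n s, dd D k n s sg x

lemma ff_continuous (n s : ℕ) : Continuous (ff D k n s) := by
  unfold ff
  exact continuous_finsum (fun sg => dd_continuous D k n s sg) (dd_lf D k n s)

lemma ff_nonneg (n s : ℕ) (x : M) : 0 ≤ ff D k n s x :=
  finsum_nonneg fun sg => dd_nonneg D k n s sg x

lemma ff_eq (n s : ℕ) (x : M) : ff D k n s x = ∑ᶠ sg : SIdx D n s, dd D k n s sg x := rfl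

lemma dd_le_ff (n s : ℕ) (sg : SIdx D n s) (x : M) : dd D k n s sg x ≤ ff D k n s x := by
  rw [ff_eq]
  apply single_le_finsum sg _ (fun sg' => dd_nonneg D k n s sg' x)
  apply Set.Finite.subset (((dd_lf D k n s).point_finite x))
  intro sg' hsg'
  exact hsg'

lemma ff_pos_elim (n s : ℕ) (x : M) (hx : 0 < ff D k n s x) :
    ∃ sg : SIdx D n s, 0 < dd D k n s sg x := by
  by_contra hall
  push_neg at hall
  have : ff D k n s x = 0 := by
    rw [ff_eq]
    exact finsum_eq_zero_of_forall_eq_zero fun sg =>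
      le_antisymm (hall sg) (dd_nonneg D k n s sg x)
  rw [this] at hx
  exact lt_irrefl 0 hx

lemma ff_cover (x : M) : ∃ n s, 0 < ff D k n s x := by
  classical
  obtain ⟨n, c₀, hw⟩ := w_cover D k x
  set Sfin : Finset (Fin (n+1) → D.ι) := ((w_lf D k n).point_finite x).toFinset with hSfin
  have hmemS : ∀ c, c ∈ Sfin ↔ w D k n c x ≠ 0 := by
    intro c
    rw [hSfin, Set.Finite.mem_toFinset]
    simp [Function.mem_support]
  have hc₀ : c₀ ∈ Sfin := (hmemS c₀).2 hw.ne'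
  have hcard : 1 ≤ Sfin.card := Finset.card_pos.2 ⟨c₀, hc₀⟩
  refine ⟨n, Sfin.card - 1, ?_⟩
  set sg : SIdx D n (Sfin.card - 1) := ⟨Sfin, by omega⟩ with hsg
  have hdd : 0 < dd D k n (Sfin.card - 1) sg x := by
    have hinf : 0 < sg.1.inf' (sidx_nonempty D sg) (fun c => w D k n c x) := by
      rw [Finset.lt_inf'_iff]
      intro c hc
      have : w D k n c x ≠ 0 := (hmemS c).1 hc
      exact lt_of_le_of_ne (w_nonneg D k n c x) (Ne.symm this)
    have hrest : rest D k n sg.1 x = 0 := by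
      unfold rest
      apply finsum_eq_zero_of_forall_eq_zero
      intro c
      by_cases h : c ∈ sg.1
      · simp [h]
      · have : w D k n c x = 0 := by
          by_contra hne
          exact h ((hmemS c).2 hne)
        simp [h, this]
    rw [dd_eq, hrest, sub_zero]
    exact lt_max_of_lt_right hinf
  exact lt_of_lt_of_le hdd (dd_le_ff D k n (Sfin.card - 1) sg x)

/-! ### Countable partition machinery -/

def nm (m : ℕ) : ℕ := (Nat.pairEquiv.symm m).1
def sm (m : ℕ) : ℕ := (Nat.pairEquiv.symm m).2

noncomputable def fcap (m : ℕ) : M → ℝ :=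
  fun x => min (ff D k (nm m) (sm m) x) ((2:ℝ)⁻¹ ^ m)

def Vm (m : ℕ) : Set M := {x | 0 < fcap D k m x}

lemma fcap_continuous (m : ℕ) : Continuous (fcap D k m) :=
  (ff_continuous D k _ _).min continuous_const

lemma fcap_nonneg (m : ℕ) (x : M) : 0 ≤ fcap D k m x :=
  le_min (ff_nonneg D k _ _ x) (by positivity)

lemma fcap_le (m : ℕ) (x : M) : fcap D k m x ≤ (2:ℝ)⁻¹ ^ m := min_le_right _ _

lemma fcap_le_one (m : ℕ) (x : M) : fcap D k m x ≤ 1 :=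
  (fcap_le D k m x).trans (pow_le_one₀ (by norm_num) (by norm_num))

lemma fcap_pos_iff (m : ℕ) (x : M) : 0 < fcap D k m x ↔ 0 < ff D k (nm m) (sm m) x := by
  unfold fcap
  rw [lt_min_iff]
  constructor
  · exact fun h => h.1
  · exact fun h => ⟨h, by positivity⟩

lemma Vm_open (m : ℕ) : IsOpen (Vm D k m) :=
  isOpen_lt continuous_const (fcap_continuous D k m)

noncomputable def Ssup : M → ℝ := fun x => ⨆ m, fcap D k m x

lemma fcap_bddAbove (x : M) : BddAbove (Set.range fun m => fcap D k m x) := by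
  refine ⟨1, ?_⟩
  rintro y ⟨m, rfl⟩
  exact fcap_le_one D k m x

lemma fcap_le_Ssup (m : ℕ) (x : M) : fcap D k m x ≤ Ssup D k x :=
  le_ciSup (fcap_bddAbove D k x) m

lemma Ssup_pos (x : M) : 0 < Ssup D k x := by
  obtain ⟨n, s, hpos⟩ := ff_cover D k x
  set m := Nat.pairEquiv (n, s) with hm
  have h1 : nm m = n := by
    show (Nat.pairEquiv.symm (Nat.pairEquiv (n, s))).1 = n
    rw [Equiv.symm_apply_apply]
  have h2 : sm m = s := by
    show (Nat.pairEquiv.symm (Nat.pairEquiv (n, s))).2 = s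
    rw [Equiv.symm_apply_apply]
  have : 0 < fcap D k m x := by
    rw [fcap_pos_iff, h1, h2]
    exact hpos
  exact lt_of_lt_of_le this (fcap_le_Ssup D k m x)

/-- partial maxima -/
noncomputable def PM : ℕ → M → ℝ
  | 0 => fcap D k 0
  | (N+1) => fun x => max (PM N x) (fcap D k (N+1) x)

lemma PM_continuous (N : ℕ) : Continuous (PM D k N) := by
  induction N with
  | zero => exact fcap_continuous D k 0
  | succ N ih => exact ih.max (fcap_continuous D k (N+1))

lemma PM_nonneg (N : ℕ) (x : M) : 0 ≤ PM D k N x := by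
  induction N with
  | zero => exact fcap_nonneg D k 0 x
  | succ N ih => exact ih.trans (le_max_left _ _)

lemma fcap_le_PM (m N : ℕ) (hm : m ≤ N) (x : M) : fcap D k m x ≤ PM D k N x := by
  induction N with
  | zero =>
    have : m = 0 := by omega
    rw [this]
    exact le_refl _
  | succ N ih =>
    by_cases h : m ≤ N
    · exact (ih h).trans (le_max_left _ _)
    · have : m = N + 1 := by omega
      rw [this]
      exact le_max_right _ _

lemma PM_le_Ssup (N : ℕ) (x : M) : PM D k N x ≤ Ssup D k x := by
  induction N with
  | zero => exact fcap_le_Ssup D k 0 x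
  | succ N ih => exact max_le ih (fcap_le_Ssup D k (N+1) x)

lemma Ssup_le_max (N : ℕ) (x : M) : Ssup D k x ≤ max (PM D k N x) ((2:ℝ)⁻¹ ^ N) := by
  apply ciSup_le
  intro m
  by_cases h : m ≤ N
  · exact (fcap_le_PM D k m N h x).trans (le_max_left _ _)
  · refine le_trans ?_ (le_max_right _ _)
    refine (fcap_le D k m x).trans ?_
    apply pow_le_pow_of_le_one (by norm_num) (by norm_num)
    omega

lemma Ssup_continuous : Continuous (Ssup D k) := by
  have hpow : Filter.Tendsto (fun N : ℕ => (2:ℝ)⁻¹ ^ N) Filter.atTop (nhds 0) :=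
    tendsto_pow_atTop_nhds_zero_of_lt_one (by norm_num) (by norm_num)
  have hTU : TendstoUniformly (fun N x => PM D k N x) (Ssup D k) Filter.atTop := by
    rw [Metric.tendstoUniformly_iff]
    intro ε hε
    filter_upwards [hpow.eventually (gt_mem_nhds hε)] with N hN x
    rw [Real.dist_eq, abs_sub_lt_iff]
    have h1 := PM_le_Ssup D k N x
    have h2 := Ssup_le_max D k N x
    have h3 : (0:ℝ) < (2:ℝ)⁻¹ ^ N := by positivity
    have h4 := PM_nonneg D k N x
    constructor
    · rcases max_cases (PM D k N x) ((2:ℝ)⁻¹ ^ N) with ⟨he, -⟩ | ⟨he, hle⟩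
      · rw [he] at h2; linarith
      · rw [he] at h2; linarith
    · linarith
  exact hTU.continuous (Filter.Eventually.of_forall (PM_continuous D k)).frequently

noncomputable def em (m : ℕ) : M → ℝ :=
  fun x => max 0 (fcap D k m x - Ssup D k x / 2)

lemma em_continuous (m : ℕ) : Continuous (em D k m) :=
  continuous_const.max ((fcap_continuous D k m).sub ((Ssup_continuous D k).div_const 2))

lemma em_nonneg (m : ℕ) (x : M) : 0 ≤ em D k m x := le_max_left _ _

lemma em_pos_fcap (m : ℕ) (x : M) (h : em D k m x ≠ 0) :
    Ssup D k x / 2 < fcap D k m x := by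
  by_contra hc
  push_neg at hc
  exact h (max_eq_left (by linarith))

lemma em_subord (m : ℕ) : closure (Function.support (em D k m)) ⊆ Vm D k m := by
  have h1 : Function.support (em D k m) ⊆ {x | Ssup D k x / 2 ≤ fcap D k m x} :=
    fun x hx => (em_pos_fcap D k m x hx).le
  have h2 : IsClosed {x | Ssup D k x / 2 ≤ fcap D k m x} :=
    isClosed_le ((Ssup_continuous D k).div_const 2) (fcap_continuous D k m)
  intro x hx
  have := (closure_minimal h1 h2) hx
  have hS := Ssup_pos D k x
  show 0 < fcap D k m x
  simp only [Set.mem_setOf_eq] at this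
  linarith

lemma em_zero_of_small (m : ℕ) (x : M) (h : (2:ℝ)⁻¹ ^ m < Ssup D k x / 2) :
    em D k m x = 0 :=
  max_eq_left (by linarith [fcap_le D k m x])

lemma em_lf : LocallyFinite fun m : ℕ => Function.support (em D k m) := by
  intro x₀
  have hS := Ssup_pos D k x₀
  refine ⟨{x | Ssup D k x₀ / 2 < Ssup D k x}, ?_, ?_⟩
  · exact (isOpen_lt continuous_const (Ssup_continuous D k)).mem_nhds (by simp; linarith)
  · have hpow : Filter.Tendsto (fun N : ℕ => (2:ℝ)⁻¹ ^ N) Filter.atTop (nhds 0) :=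
      tendsto_pow_atTop_nhds_zero_of_lt_one (by norm_num) (by norm_num)
    obtain ⟨J, hJ⟩ := Filter.eventually_atTop.1
      (hpow.eventually (gt_mem_nhds (show 0 < Ssup D k x₀ / 4 by linarith)))
    apply Set.Finite.subset (Set.finite_Iio J)
    intro m hm
    simp only [Set.mem_Iio]
    by_contra hle
    push_neg at hle
    obtain ⟨x, hx1, hx2⟩ := hm
    have h1 : (2:ℝ)⁻¹ ^ m < Ssup D k x₀ / 4 := hJ m hle
    have h2 : Ssup D k x₀ / 2 < Ssup D k x := hx2
    have := em_zero_of_small D k m x (by linarith)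
    exact hx1 this

lemma em_cover (x : M) : ∃ m, Ssup D k x / 2 < fcap D k m x := by
  by_contra hall
  push_neg at hall
  have h1 : Ssup D k x ≤ Ssup D k x / 2 := ciSup_le hall
  have h2 := Ssup_pos D k x
  linarith

noncomputable def Esum : M → ℝ := fun x => ∑ᶠ m, em D k m x

lemma Esum_eq (x : M) : Esum D k x = ∑ᶠ m, em D k m x := rfl

lemma Esum_continuous : Continuous (Esum D k) := by
  unfold Esum
  exact continuous_finsum (fun m => em_continuous D k m) (em_lf D k)

lemma em_le_Esum (m : ℕ) (x : M) : em D k m x ≤ Esum D k x := by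
  rw [Esum_eq]
  apply single_le_finsum m _ (fun m' => em_nonneg D k m' x)
  exact (em_lf D k).point_finite x

lemma Esum_pos (x : M) : 0 < Esum D k x := by
  obtain ⟨m, hm⟩ := em_cover D k x
  have h1 : 0 < em D k m x := lt_max_of_lt_right (by linarith)
  exact lt_of_lt_of_le h1 (em_le_Esum D k m x)

/-- The progress functions. -/
noncomputable def T (j : ℕ) : M → ℝ :=
  fun x => (∑ m ∈ Finset.range j, em D k m x) / Esum D k x

lemma T_continuous (j : ℕ) : Continuous (T D k j) := by
  unfold T
  exact (continuous_finset_sum _ (fun m _ => em_continuous D k m)).div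
    (Esum_continuous D k) (fun x => (Esum_pos D k x).ne')

lemma T_zero (x : M) : T D k 0 x = 0 := by simp [T]

lemma T_nonneg (j : ℕ) (x : M) : 0 ≤ T D k j x :=
  div_nonneg (Finset.sum_nonneg fun m _ => em_nonneg D k m x) (Esum_pos D k x).le

lemma partial_le_Esum (j : ℕ) (x : M) :
    ∑ m ∈ Finset.range j, em D k m x ≤ Esum D k x := by
  classical
  have hfin := (em_lf D k).point_finite x
  have hsub : (Function.support fun m => em D k m x) ⊆
      ↑(hfin.toFinset ∪ Finset.range j) := by
    intro m hm
    rw [Finset.coe_union, Set.Finite.coe_toFinset]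
    exact Set.mem_union_left _ hm
  rw [Esum_eq, finsum_eq_sum_of_support_subset _ hsub]
  exact Finset.sum_le_sum_of_subset_of_nonneg Finset.subset_union_right
    (fun m _ _ => em_nonneg D k m x)

lemma T_le_one (j : ℕ) (x : M) : T D k j x ≤ 1 := by
  unfold T
  rw [div_le_one (Esum_pos D k x)]
  exact partial_le_Esum D k j x

lemma T_mono (j j' : ℕ) (hj : j ≤ j') (x : M) : T D k j x ≤ T D k j' x := by
  unfold T
  rw [div_le_div_iff_of_pos_right (Esum_pos D k x)]
  exact Finset.sum_le_sum_of_subset_of_nonneg (Finset.range_subset_range.2 hj)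
    (fun m _ _ => em_nonneg D k m x)

lemma T_succ_eq_of (j : ℕ) (x : M) (hx : em D k j x = 0) : T D k (j+1) x = T D k j x := by
  unfold T
  rw [Finset.sum_range_succ, hx, add_zero]

lemma T_stab (x₀ : M) : ∃ N ∈ nhds x₀, ∃ J : ℕ, ∀ x ∈ N, ∀ j, J ≤ j → T D k j x = 1 := by
  have hS := Ssup_pos D k x₀
  have hpow : Filter.Tendsto (fun N : ℕ => (2:ℝ)⁻¹ ^ N) Filter.atTop (nhds 0) :=
    tendsto_pow_atTop_nhds_zero_of_lt_one (by norm_num) (by norm_num)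
  obtain ⟨J, hJ⟩ := Filter.eventually_atTop.1
    (hpow.eventually (gt_mem_nhds (show 0 < Ssup D k x₀ / 4 by linarith)))
  refine ⟨{x | Ssup D k x₀ / 2 < Ssup D k x},
    (isOpen_lt continuous_const (Ssup_continuous D k)).mem_nhds (by simp; linarith), J, ?_⟩
  intro x hx j hj
  have hzero : ∀ m, j ≤ m → em D k m x = 0 := by
    intro m hm
    apply em_zero_of_small
    have h1 : (2:ℝ)⁻¹ ^ m ≤ (2:ℝ)⁻¹ ^ J := by
      apply pow_le_pow_of_le_one (by norm_num) (by norm_num)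
      omega
    have h2 := hJ J le_rfl
    have h3 : Ssup D k x₀ / 2 < Ssup D k x := hx
    linarith
  have hsupp : (Function.support fun m => em D k m x) ⊆ ↑(Finset.range j) := by
    intro m hm
    rw [Finset.coe_range, Set.mem_Iio]
    by_contra hle
    push_neg at hle
    exact hm (hzero m hle)
  unfold T
  rw [Esum_eq, finsum_eq_sum_of_support_subset _ hsupp, div_self]
  rw [← finsum_eq_sum_of_support_subset _ hsupp, ← Esum_eq]
  exact (Esum_pos D k x).ne'

/-! ### Glued reference lifts over the countable cover -/

theorem exists_Rm (A : Set M) (hkA : ∀ a ∈ A, ∀ t : I, k (a, t) = a) (m : ℕ) :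
    ∃ R : C(↥(Vm D k m) × I, P),
      (∀ z : ↥(Vm D k m) × I, D.proj (R z) = k (↑z.1, z.2)) ∧
      (∀ (x : ↥(Vm D k m)), (↑x : M) ∈ A → ∀ t, R (x, t) = R (x, 0)) := by
  classical
  set n := nm m with hn
  set s := sm m with hs
  have href := fun sg : SIdx D n s => exists_ref D k A hkA n (chart D sg)
  choose Ref hRef1 hRef2 using href
  set Spc : SIdx D n s → Set (↥(Vm D k m) × I) :=
    fun sg => {z | 0 < dd D k n s sg ↑z.1} with hSpc
  have hSpc_open : ∀ sg, IsOpen (Spc sg) := by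
    intro sg
    exact (isOpen_lt continuous_const (dd_continuous D k n s sg)).preimage
      (continuous_subtype_val.comp continuous_fst)
  set incl : ∀ sg : SIdx D n s, ↥(Spc sg) → ↥(good D k n (chart D sg)) × I :=
    fun sg z => (⟨↑z.1.1, dd_pos_good D k n s sg _ z.2⟩, z.1.2) with hincl
  have hincl_cont : ∀ sg, Continuous (incl sg) := by
    intro sg
    refine Continuous.prodMk ?_ ?_
    · exact Continuous.subtype_mk
        (continuous_subtype_val.comp (continuous_fst.comp continuous_subtype_val)) _
    · exact continuous_snd.comp continuous_subtype_val
  set φb : ∀ sg : SIdx D n s, C(↥(Spc sg), P) :=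
    fun sg => (Ref sg).comp ⟨incl sg, hincl_cont sg⟩ with hφb
  have hφ : ∀ (sg sg' : SIdx D n s) (z : ↥(Vm D k m) × I) (hzi : z ∈ Spc sg)
      (hzj : z ∈ Spc sg'), φb sg ⟨z, hzi⟩ = φb sg' ⟨z, hzj⟩ := by
    intro sg sg' z hzi hzj
    rcases eq_or_ne sg sg' with rfl | hne
    · rfl
    · exact absurd (dd_disjoint D k n s sg sg' hne ↑z.1 hzi hzj) not_false
  have hS : ∀ z : ↥(Vm D k m) × I, ∃ sg, Spc sg ∈ nhds z := by
    intro z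
    have hfc : 0 < fcap D k m ↑z.1 := z.1.2
    have hffpos : 0 < ff D k n s ↑z.1 := (fcap_pos_iff D k m ↑z.1).1 hfc
    obtain ⟨sg, hsg⟩ := ff_pos_elim D k n s ↑z.1 hffpos
    exact ⟨sg, (hSpc_open sg).mem_nhds hsg⟩
  refine ⟨ContinuousMap.liftCover Spc φb hφ hS, ?_, ?_⟩
  · intro z
    obtain ⟨sg, hsg⟩ : ∃ sg, z ∈ Spc sg := by
      have hfc : 0 < fcap D k m ↑z.1 := z.1.2
      obtain ⟨sg, hsg⟩ := ff_pos_elim D k n s ↑z.1 ((fcap_pos_iff D k m ↑z.1).1 hfc)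
      exact ⟨sg, hsg⟩
    have := ContinuousMap.liftCover_coe (S := Spc) (φ := φb) (hφ := hφ) (hS := hS)
      (⟨z, hsg⟩ : ↥(Spc sg))
    rw [this]
    show D.proj (Ref sg (incl sg ⟨z, hsg⟩)) = k (↑z.1, z.2)
    rw [hRef1 sg]
  · intro x hx t
    obtain ⟨sg, hsg⟩ : ∃ sg, 0 < dd D k n s sg ↑x := by
      have hfc : 0 < fcap D k m ↑x := x.2
      exact ff_pos_elim D k n s ↑x ((fcap_pos_iff D k m ↑x).1 hfc)
    have h1 := ContinuousMap.liftCover_coe (S := Spc) (φ := φb) (hφ := hφ) (hS := hS)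
      (⟨(x, t), hsg⟩ : ↥(Spc sg))
    have h2 := ContinuousMap.liftCover_coe (S := Spc) (φ := φb) (hφ := hφ) (hS := hS)
      (⟨(x, 0), hsg⟩ : ↥(Spc sg))
    rw [h1, h2]
    show Ref sg (incl sg ⟨(x, t), hsg⟩) = Ref sg (incl sg ⟨(x, 0), hsg⟩)
    exact hRef2 sg ⟨↑x, dd_pos_good D k n s sg _ hsg⟩ hx t

/-! ### The step construction -/

lemma smul_tau_eq (a b q : P) (hab : a = b) (h : D.proj a = D.proj q) :
    D.smul b (D.tau ⟨(a, q), h⟩) = q := by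
  subst hab
  exact D.tau_spec ⟨(a, q), h⟩

def DSpec (A : Set M) (j : ℕ) (F : C(P × I, P)) : Prop :=
  (∀ p t, D.proj (F (p, t)) = k (D.proj p, mtimeC t (T D k j (D.proj p)))) ∧
  (∀ p, F (p, 0) = p) ∧
  (∀ p g t, F (D.smul p g, t) = D.smul (F (p, t)) g) ∧
  (∀ p t, D.proj p ∈ A → F (p, t) = p)

theorem exists_step (A : Set M) (hkA : ∀ a ∈ A, ∀ t : I, k (a, t) = a) (j : ℕ)
    (F : C(P × I, P)) (hF : DSpec D k A j F) :
    ∃ F' : C(P × I, P), DSpec D k A (j+1) F' ∧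
      (∀ p t, T D k j (D.proj p) = T D k (j+1) (D.proj p) → F' (p, t) = F (p, t)) := by
  classical
  obtain ⟨hF1, hF2, hF3, hF4⟩ := hF
  obtain ⟨R, hR1, hR2⟩ := exists_Rm D k A hkA j
  set O1 : Set (P × I) := {z | D.proj z.1 ∈ Vm D k j} with hO1
  set O2 : Set (P × I) := {z | D.proj z.1 ∉ closure (Function.support (em D k j))} with hO2
  have hO1open : IsOpen O1 := (Vm_open D k j).preimage (D.proj_continuous.comp continuous_fst)
  have hO2open : IsOpen O2 :=
    isClosed_closure.isOpen_compl.preimage (D.proj_continuous.comp continuous_fst)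
  have pf1 : ∀ z : ↥O1,
      D.proj (R (⟨D.proj z.1.1, z.2⟩, mtimeC z.1.2 (T D k j (D.proj z.1.1)))) =
      D.proj (F z.1) := by
    intro z
    rw [hR1]
    exact (hF1 z.1.1 z.1.2).symm
  set step1 : ↥O1 → P := fun z =>
    D.smul (R (⟨D.proj z.1.1, z.2⟩, mtimeC z.1.2 (T D k (j+1) (D.proj z.1.1))))
      (D.tau ⟨(R (⟨D.proj z.1.1, z.2⟩, mtimeC z.1.2 (T D k j (D.proj z.1.1))), F z.1),
        pf1 z⟩) with hstep1
  have hstep1_cont : Continuous step1 := by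
    have hxhat : Continuous fun z : ↥O1 => (⟨D.proj z.1.1, z.2⟩ : ↥(Vm D k j)) :=
      Continuous.subtype_mk
        (D.proj_continuous.comp (continuous_fst.comp continuous_subtype_val)) _
    have htcoe : Continuous fun z : ↥O1 => ((z.1.2 : I) : ℝ) :=
      continuous_subtype_val.comp (continuous_snd.comp continuous_subtype_val)
    have hm : ∀ (i : ℕ),
        Continuous fun z : ↥O1 => mtimeC z.1.2 (T D k i (D.proj z.1.1)) := by
      intro i
      apply Continuous.subtype_mk
      exact continuous_const.max (htcoe.min ((T_continuous D k i).comp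
        (D.proj_continuous.comp (continuous_fst.comp continuous_subtype_val))))
    have ha : ∀ i, Continuous fun z : ↥O1 =>
        R (⟨D.proj z.1.1, z.2⟩, mtimeC z.1.2 (T D k i (D.proj z.1.1))) :=
      fun i => R.continuous.comp (hxhat.prodMk (hm i))
    have hFc : Continuous fun z : ↥O1 => F z.1 :=
      F.continuous.comp continuous_subtype_val
    exact D.smul_continuous.comp ((ha (j+1)).prodMk
      (D.tau_continuous.comp (Continuous.subtype_mk ((ha j).prodMk hFc) _)))
  have hkey : ∀ (z : P × I) (hz1 : z ∈ O1),
      T D k j (D.proj z.1) = T D k (j+1) (D.proj z.1) → step1 ⟨z, hz1⟩ = F z := by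
    intro z hz1 hT
    simp only [hstep1]
    exact smul_tau_eq D _ _ _ (by rw [hT]) _
  set Sb : Bool → Set (P × I) := fun b => cond b O1 O2 with hSb
  set φb : ∀ b : Bool, C(↥(Sb b), P) := fun b =>
    Bool.rec (F.comp ⟨Subtype.val, continuous_subtype_val⟩) ⟨step1, hstep1_cont⟩ b with hφb
  have hem_of_O2 : ∀ z : P × I, z ∈ O2 → em D k j (D.proj z.1) = 0 := by
    intro z hz
    by_contra hne
    exact hz (subset_closure hne)
  have hφ : ∀ (b b' : Bool) (z : P × I) (hzb : z ∈ Sb b) (hzb' : z ∈ Sb b'),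
      φb b ⟨z, hzb⟩ = φb b' ⟨z, hzb'⟩ := by
    intro b b' z hzb hzb'
    cases b <;> cases b'
    · rfl
    · exact (hkey z hzb' ((T_succ_eq_of D k j _ (hem_of_O2 z hzb)).symm)).symm
    · exact hkey z hzb ((T_succ_eq_of D k j _ (hem_of_O2 z hzb')).symm)
    · rfl
  have hS : ∀ z : P × I, ∃ b, Sb b ∈ nhds z := by
    intro z
    by_cases h : D.proj z.1 ∈ Vm D k j
    · exact ⟨true, hO1open.mem_nhds h⟩
    · exact ⟨false, hO2open.mem_nhds (fun hc => h (em_subord D k j hc))⟩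
  set F' : C(P × I, P) := ContinuousMap.liftCover Sb φb hφ hS with hF'
  have hev1 : ∀ (z : P × I) (hz : z ∈ O1), F' z = step1 ⟨z, hz⟩ := by
    intro z hz
    exact ContinuousMap.liftCover_coe (S := Sb) (φ := φb) (hφ := hφ) (hS := hS)
      (⟨z, hz⟩ : ↥(Sb true))
  have hev2 : ∀ (z : P × I) (hz : z ∈ O2), F' z = F z := by
    intro z hz
    exact ContinuousMap.liftCover_coe (S := Sb) (φ := φb) (hφ := hφ) (hS := hS)
      (⟨z, hz⟩ : ↥(Sb false))
  have hO2_of_not : ∀ z : P × I, D.proj z.1 ∉ Vm D k j → z ∈ O2 :=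
    fun z hz hc => hz (em_subord D k j hc)
  refine ⟨F', ⟨?_, ?_, ?_, ?_⟩, ?_⟩
  · -- projection
    intro p t
    by_cases hz : D.proj p ∈ Vm D k j
    · rw [hev1 (p, t) hz]
      simp only [hstep1]
      rw [D.proj_smul, hR1]
    · rw [hev2 (p, t) (hO2_of_not (p, t) hz), hF1]
      have hem : em D k j (D.proj p) = 0 := hem_of_O2 (p, t) (hO2_of_not (p, t) hz)
      rw [T_succ_eq_of D k j _ hem]
  · -- time zero
    intro p
    by_cases hz : D.proj p ∈ Vm D k j
    · rw [hev1 (p, 0) hz]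
      simp only [hstep1]
      rw [smul_tau_eq D _ _ _ (by rw [mtimeC_zero, mtimeC_zero]) _]
      exact hF2 p
    · rw [hev2 (p, 0) (hO2_of_not (p, 0) hz)]
      exact hF2 p
  · -- equivariance
    intro p g t
    have hpg : D.proj (D.smul p g) = D.proj p := D.proj_smul p g
    by_cases hz : D.proj p ∈ Vm D k j
    · have hz' : D.proj (D.smul p g) ∈ Vm D k j := by rw [hpg]; exact hz
      rw [hev1 (D.smul p g, t) hz', hev1 (p, t) hz]
      simp only [hstep1]
      have hxhat : (⟨D.proj (D.smul p g), hz'⟩ : ↥(Vm D k j)) = ⟨D.proj p, hz⟩ :=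
        Subtype.ext hpg
      have hm : ∀ i : ℕ, mtimeC t (T D k i (D.proj (D.smul p g))) =
          mtimeC t (T D k i (D.proj p)) := fun i => by rw [hpg]
      have ha : ∀ i : ℕ,
          R (⟨D.proj (D.smul p g), hz'⟩, mtimeC t (T D k i (D.proj (D.smul p g)))) =
          R (⟨D.proj p, hz⟩, mtimeC t (T D k i (D.proj p))) :=
        fun i => by rw [hxhat, hm i]
      have hFz : F (D.smul p g, t) = D.smul (F (p, t)) g := hF3 p g t
      have pf0 : D.proj (R (⟨D.proj p, hz⟩, mtimeC t (T D k j (D.proj p)))) =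
          D.proj (F (p, t)) := pf1 ⟨(p, t), hz⟩
      have pfX : D.proj (R (⟨D.proj p, hz⟩, mtimeC t (T D k j (D.proj p)))) =
          D.proj (D.smul (F (p, t)) g) := by rw [D.proj_smul]; exact pf0
      have h5 : (⟨(R (⟨D.proj (D.smul p g), hz'⟩,
            mtimeC t (T D k j (D.proj (D.smul p g)))), F (D.smul p g, t)),
            pf1 ⟨(D.smul p g, t), hz'⟩⟩ :
          {y : P × P // D.proj y.1 = D.proj y.2}) =
          ⟨(R (⟨D.proj p, hz⟩, mtimeC t (T D k j (D.proj p))),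
            D.smul (F (p, t)) g), pfX⟩ :=
        Subtype.ext (Prod.ext (ha j) hFz)
      rw [ha (j+1), h5, D.tau_mul _ _ pf0 g, ← D.smul_mul]
    · have hz' : D.proj (D.smul p g) ∉ Vm D k j := by rw [hpg]; exact hz
      rw [hev2 (D.smul p g, t) (hO2_of_not _ hz'), hev2 (p, t) (hO2_of_not _ hz)]
      exact hF3 p g t
  · -- A-stationarity
    intro p t hpA
    by_cases hz : D.proj p ∈ Vm D k j
    · rw [hev1 (p, t) hz]
      simp only [hstep1]
      have hcon : ∀ i : ℕ, R (⟨D.proj p, hz⟩, mtimeC t (T D k i (D.proj p))) =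
          R (⟨D.proj p, hz⟩, 0) := fun i => hR2 ⟨D.proj p, hz⟩ hpA _
      rw [smul_tau_eq D _ _ _ ((hcon j).trans (hcon (j+1)).symm) _]
      exact hF4 p t hpA
    · rw [hev2 (p, t) (hO2_of_not _ hz)]
      exact hF4 p t hpA
  · -- step equation
    intro p t hT
    by_cases hz : D.proj p ∈ Vm D k j
    · rw [hev1 (p, t) hz]
      exact hkey (p, t) hz hT
    · exact hev2 (p, t) (hO2_of_not _ hz)

/-! ### The key lifting theorem -/

theorem key_lift (A : Set M)
    (hk0 : ∀ x, k (x, 0) = x) (hkA : ∀ a ∈ A, ∀ t : I, k (a, t) = a) :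
    ∃ K : C(P × I, P),
      (∀ p t, D.proj (K (p, t)) = k (D.proj p, t)) ∧
      (∀ p g t, K (D.smul p g, t) = D.smul (K (p, t)) g) ∧
      (∀ p, K (p, 0) = p) ∧
      (∀ p t, D.proj p ∈ A → K (p, t) = p) := by
  classical
  -- base map
  have hmt0 : ∀ t : I, mtimeC t (0:ℝ) = 0 := by
    intro t
    apply Subtype.ext
    show max 0 (min (↑t) 0) = ((0:I) : ℝ)
    rw [min_eq_right t.2.1]
    simp
  set F0 : C(P × I, P) := ⟨fun z => z.1, continuous_fst⟩ with hF0
  have hbase : DSpec D k A 0 F0 := by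
    refine ⟨?_, ?_, ?_, ?_⟩
    · intro p t
      show D.proj p = k (D.proj p, mtimeC t (T D k 0 (D.proj p)))
      rw [T_zero, hmt0, hk0]
    · intro p; rfl
    · intro p g t; rfl
    · intro p t _; rfl
  choose! step hstep using exists_step D k A hkA
  set Fs : ℕ → C(P × I, P) := fun j => Nat.rec F0 (fun j Fj => step j Fj) j with hFs
  have hFsS : ∀ j, Fs (j+1) = step j (Fs j) := fun j => rfl
  have hspec : ∀ j, DSpec D k A j (Fs j) := by
    intro j
    induction j with
    | zero => exact hbase
    | succ j ih => exact (hstep j (Fs j) ih).1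
  have hseq : ∀ j p t, T D k j (D.proj p) = T D k (j+1) (D.proj p) →
      Fs (j+1) (p, t) = Fs j (p, t) := by
    intro j p t h
    rw [hFsS j]
    exact (hstep j (Fs j) (hspec j)).2 p t h
  have hstab : ∀ (j : ℕ) (x : M), T D k j x = 1 → ∀ j', j ≤ j' →
      ∀ p t, D.proj p = x → Fs j' (p, t) = Fs j (p, t) := by
    intro j x hT j' hj'
    induction j' with
    | zero =>
      intro p t hp
      have : j = 0 := Nat.le_zero.1 hj'
      rw [this]
    | succ j' ih =>
      intro p t hp
      rcases Nat.lt_or_ge j (j'+1) with hlt | hge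
      · have hle : j ≤ j' := by omega
        have hT' : T D k j' x = 1 :=
          le_antisymm (T_le_one D k j' x) (hT ▸ T_mono D k j j' hle x)
        have hT'' : T D k (j'+1) x = 1 :=
          le_antisymm (T_le_one D k (j'+1) x) (hT' ▸ T_mono D k j' (j'+1) (by omega) x)
        have heq : T D k j' (D.proj p) = T D k (j'+1) (D.proj p) := by
          rw [hp, hT', hT'']
        rw [hseq j' p t heq]
        exact ih hle p t hp
      · have : j = j' + 1 := by omega
        rw [this]
  have hNx : ∀ x : M, ∃ j, T D k j x = 1 := by
    intro x
    obtain ⟨N, hN, J, hJ⟩ := T_stab D k x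
    exact ⟨J, hJ x (mem_of_mem_nhds hN) J le_rfl⟩
  choose Nx hNx2 using hNx
  set K0 : P × I → P := fun z => Fs (Nx (D.proj z.1)) z with hK0
  have hK0loc : ∀ x₀ : M, ∃ N ∈ nhds x₀, ∃ J : ℕ, ∀ z : P × I,
      D.proj z.1 ∈ N → K0 z = Fs J z := by
    intro x₀
    obtain ⟨N, hN, J, hJ⟩ := T_stab D k x₀
    refine ⟨N, hN, J, ?_⟩
    rintro ⟨p, t⟩ hp
    have h1 : T D k J (D.proj p) = 1 := hJ (D.proj p) hp J le_rfl
    have h2 : T D k (Nx (D.proj p)) (D.proj p) = 1 := hNx2 (D.proj p)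
    have e1 : Fs (max J (Nx (D.proj p))) (p, t) = Fs J (p, t) :=
      hstab J (D.proj p) h1 _ (le_max_left _ _) p t rfl
    have e2 : Fs (max J (Nx (D.proj p))) (p, t) = Fs (Nx (D.proj p)) (p, t) :=
      hstab (Nx (D.proj p)) (D.proj p) h2 _ (le_max_right _ _) p t rfl
    show Fs (Nx (D.proj p)) (p, t) = Fs J (p, t)
    rw [← e2, e1]
  have hK0cont : Continuous K0 := by
    rw [continuous_iff_continuousAt]
    intro z₀
    obtain ⟨N, hN, J, hJ⟩ := hK0loc (D.proj z₀.1)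
    have hWnh : (fun z : P × I => D.proj z.1) ⁻¹' N ∈ nhds z₀ :=
      (D.proj_continuous.comp continuous_fst).continuousAt.preimage_mem_nhds hN
    apply ContinuousAt.congr ((Fs J).continuous.continuousAt)
    filter_upwards [hWnh] with z hz
    exact (hJ z hz).symm
  refine ⟨⟨K0, hK0cont⟩, ?_, ?_, ?_, ?_⟩
  · intro p t
    show D.proj (Fs (Nx (D.proj p)) (p, t)) = k (D.proj p, t)
    rw [(hspec (Nx (D.proj p))).1 p t, hNx2 (D.proj p), mtimeC_one]
  · intro p g t
    show Fs (Nx (D.proj (D.smul p g))) (D.smul p g, t) =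
      D.smul (Fs (Nx (D.proj p)) (p, t)) g
    rw [D.proj_smul]
    exact (hspec (Nx (D.proj p))).2.2.1 p g t
  · intro p
    exact (hspec (Nx (D.proj p))).2.1 p
  · intro p t hpA
    exact (hspec (Nx (D.proj p))).2.2.2 p t hpA

end Ref

end CB

/-- Build charted-bundle data from a numerable principal bundle. -/
theorem exists_CB {G M P : Type u} [Group G] [TopologicalSpace G] [IsTopologicalGroup G]
    [TopologicalSpace M] [TopologicalSpace P]
    (B : PrincipalBundle G M P) (hnum : B.Numerable G) :
    ∃ D : CB G M P, D.proj = B.proj ∧ D.smul = B.smul := by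
  obtain ⟨ι, V, hVopen, -, ⟨pou, hsub⟩, hsec⟩ := hnum
  choose sec hsec1 hsec2 using hsec
  obtain ⟨e, he⟩ := isHomeomorph_iff_exists_homeomorph.1 B.stronglyFree
  have happ : ∀ q : P × G, e q =
      ⟨(q.1, B.smul q.1 q.2), (B.proj_smul q.1 q.2).symm⟩ :=
    fun q => congrFun he q
  refine ⟨{
    proj := B.proj
    proj_continuous := B.proj_continuous
    smul := B.smul
    smul_continuous := B.smul_continuous
    smul_mul := B.smul_mul
    proj_smul := B.proj_smul
    tau := fun y => (e.symm y).2
    tau_continuous := continuous_snd.comp e.symm.continuous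
    tau_spec := ?_
    smul_injective := ?_
    ι := ι
    V := V
    V_open := hVopen
    ρ := fun i => pou i
    ρ_nonneg := fun i x => pou.nonneg i x
    ρ_lf := pou.locallyFinite
    ρ_pos_mem := ?_
    ρ_cover := ?_
    sec := sec
    sec_continuous := hsec1
    sec_proj := hsec2 }, rfl, rfl⟩
  · intro y
    have h1 : e (e.symm y) = y := e.apply_symm_apply y
    rw [happ (e.symm y)] at h1
    have h2 := congrArg Subtype.val h1
    have h3 : (e.symm y).1 = y.val.1 := congrArg Prod.fst h2
    have h4 : B.smul (e.symm y).1 (e.symm y).2 = y.val.2 := congrArg Prod.snd h2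
    show B.smul y.val.1 (e.symm y).2 = y.val.2
    rw [← h3]
    exact h4
  · intro p g g' hgg
    have h1 : e (p, g) = e (p, g') := by
      rw [happ (p, g), happ (p, g')]
      exact Subtype.ext (Prod.ext rfl hgg)
    have h2 := e.injective h1
    exact (Prod.ext_iff.1 h2).2
  · intro i x hx
    exact hsub i (subset_closure hx)
  · intro x
    exact pou.exists_pos (Set.mem_univ x)

end ENDR

/-- **Equivariant NDR pairs pull back along numerable principal bundles.**
Let `π : P → M` be a numerable principal `G`-bundle and `A ⊆ M` a closed subspace such
that `(M, A)` is an NDR pair.  Then `(P, P|_A)` is a `G`-equivariant NDR pair: there are a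
`G`-invariant map `uP : P → [0,1]` with `P|_A = uP⁻¹(0)` and a `G`-equivariant homotopy
`hP : P × I → P` with `hP₀ = id`, `hPₜ = id` on `P|_A` for all `t`, and `hP₁(p) ∈ P|_A`
whenever `uP(p) < 1`. -/
theorem equivariant_ndr_of_ndr {M P : Type u} [TopologicalSpace M] [TopologicalSpace P]
    (B : PrincipalBundle G M P) (hnum : B.Numerable G)
    (A : Set M) (hA : IsClosed A)
    (u : C(M, ℝ)) (h : C(M × unitInterval, M))
    (hu01 : ∀ x, u x ∈ Set.Icc (0 : ℝ) 1)
    (huA : A = u ⁻¹' {0})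
    (hh0 : ∀ x, h (x, 0) = x)
    (hhA : ∀ a ∈ A, ∀ t, h (a, t) = a)
    (hh1 : ∀ x, u x < 1 → h (x, 1) ∈ A) :
    ∃ (uP : C(P, ℝ)) (hP : C(P × unitInterval, P)),
      (∀ p, uP p ∈ Set.Icc (0 : ℝ) 1) ∧
      (∀ p g, uP (B.smul p g) = uP p) ∧
      ((B.proj ⁻¹' A) = uP ⁻¹' {0}) ∧
      (∀ p g t, hP (B.smul p g, t) = B.smul (hP (p, t)) g) ∧
      (∀ p, hP (p, 0) = p) ∧
      (∀ p, B.proj p ∈ A → ∀ t, hP (p, t) = p) ∧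
      (∀ p, uP p < 1 → B.proj (hP (p, 1)) ∈ A) := by
  classical
  obtain ⟨D, hDproj, hDsmul⟩ := ENDR.exists_CB B hnum
  -- the cut-off function
  set φf : M → ℝ := fun x => max 0 (min 1 (2 - 2 * u x)) with hφf
  have hφf_cont : Continuous φf :=
    continuous_const.max (continuous_const.min
      (continuous_const.sub (continuous_const.mul u.continuous)))
  have hφf_mem : ∀ x, 0 ≤ φf x ∧ φf x ≤ 1 :=
    fun x => ⟨le_max_left _ _, max_le zero_le_one (min_le_left _ _)⟩
  have hmul_mem : ∀ (x : M) (t : unitInterval), φf x * ↑t ∈ Set.Icc (0:ℝ) 1 := by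
    intro x t
    constructor
    · exact mul_nonneg (hφf_mem x).1 t.2.1
    · nlinarith [(hφf_mem x).1, (hφf_mem x).2, t.2.1, t.2.2]
  set k : C(M × unitInterval, M) :=
    ⟨fun z => h (z.1, ⟨φf z.1 * ↑z.2, hmul_mem z.1 z.2⟩), by
      apply (map_continuous h).comp
      refine continuous_fst.prodMk (Continuous.subtype_mk ?_ _)
      exact (hφf_cont.comp continuous_fst).mul
        (continuous_subtype_val.comp continuous_snd)⟩ with hk
  have hk0 : ∀ x, k (x, 0) = x := by
    intro x
    show h (x, ⟨φf x * ↑(0 : unitInterval), _⟩) = x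
    have he0 : (⟨φf x * ↑(0 : unitInterval), hmul_mem x 0⟩ : unitInterval) = 0 := by
      apply Subtype.ext
      show φf x * ((0 : unitInterval) : ℝ) = ((0 : unitInterval) : ℝ)
      norm_num
    rw [he0, hh0]
  have hkA : ∀ a ∈ A, ∀ t : unitInterval, k (a, t) = a := fun a ha t => hhA a ha _
  obtain ⟨K, hK1, hK2, hK3, hK4⟩ := ENDR.CB.key_lift D k A hk0 hkA
  set uP : C(P, ℝ) := ⟨fun p => min (2 * u (B.proj p)) 1,
    ((continuous_const.mul (u.continuous.comp B.proj_continuous)).min continuous_const)⟩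
    with huP
  refine ⟨uP, K, ?_, ?_, ?_, ?_, ?_, ?_, ?_⟩
  · intro p
    constructor
    · refine le_min ?_ zero_le_one
      have := (hu01 (B.proj p)).1
      linarith
    · exact min_le_right _ _
  · intro p g
    show min (2 * u (B.proj (B.smul p g))) 1 = min (2 * u (B.proj p)) 1
    rw [B.proj_smul]
  · ext p
    simp only [Set.mem_preimage, Set.mem_singleton_iff]
    constructor
    · intro hp
      rw [huA] at hp
      have hu0 : u (B.proj p) = 0 := hp
      show min (2 * u (B.proj p)) 1 = 0
      rw [hu0]
      norm_num
    · intro hp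
      have hp' : min (2 * u (B.proj p)) 1 = 0 := hp
      have hu0 : u (B.proj p) = 0 := by
        have hunn := (hu01 (B.proj p)).1
        rcases le_total (2 * u (B.proj p)) 1 with hle | hle
        · have heq : min (2 * u (B.proj p)) 1 = 2 * u (B.proj p) := min_eq_left hle
          rw [heq] at hp'
          linarith
        · have heq : min (2 * u (B.proj p)) 1 = 1 := min_eq_right hle
          rw [heq] at hp'
          norm_num at hp'
      rw [huA]
      exact hu0
  · intro p g t
    rw [← hDsmul]
    exact hK2 p g t
  · intro p
    exact hK3 p
  · intro p hp t
    exact hK4 p t (by rw [hDproj]; exact hp)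
  · intro p hup
    have hproj := hK1 p 1
    rw [hDproj] at hproj
    rw [hproj]
    have hup' : min (2 * u (B.proj p)) 1 < 1 := hup
    have h2u : 2 * u (B.proj p) < 1 := by
      rcases le_total (2 * u (B.proj p)) 1 with hle | hle
      · have heq : min (2 * u (B.proj p)) 1 = 2 * u (B.proj p) := min_eq_left hle
        rw [heq] at hup'
        exact hup'
      · have heq : min (2 * u (B.proj p)) 1 = 1 := min_eq_right hle
        rw [heq] at hup'
        exact absurd hup' (lt_irrefl 1)
    have hφ1 : φf (B.proj p) = 1 := by
      have hmin : min 1 (2 - 2 * u (B.proj p)) = 1 := min_eq_left (by linarith)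
      show max 0 (min 1 (2 - 2 * u (B.proj p))) = 1
      rw [hmin]
      norm_num
    show h (B.proj p, ⟨φf (B.proj p) * ↑(1 : unitInterval), _⟩) ∈ A
    have he1 : (⟨φf (B.proj p) * ↑(1 : unitInterval),
        hmul_mem (B.proj p) 1⟩ : unitInterval) = 1 := by
      apply Subtype.ext
      show φf (B.proj p) * ((1 : unitInterval) : ℝ) = ((1 : unitInterval) : ℝ)
      rw [hφ1]
      norm_num
    rw [he1]
    apply hh1
    have := (hu01 (B.proj p)).1
    linarith
end
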